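/- arXiv:1710.04079 — 3 statements merged into one kernel-verified Lean document; each statement's English description precedes it below -/
import Mathlib

section
/- Let A be a nonnegative weakly irreducible tensor of order m and dimension n that is spectral ℓ-symmetric, with eigenvalues λ_j = ρ(A) e^{2πij/ℓ}. Then for each j = 0, 1, …, ℓ−1, the map x ↦ D_x = diag(x₁/|x₁|, …, x_n/|x_n|) is a bijection between the set of eigenvectors in PV_{λ_j}(A) normalized so that x₁ = 1 and the set 𝔇^{(j)}(A). -/
open scoped BigOperators

namespace PaperTensor

/-- A tensor of order `m` and dimension `|ι|`: entry `A i f` is `a_{i, f 0, …, f (m-2)}`. -/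
abbrev Tensor (ι : Type) (m : ℕ) : Type := ι → (Fin (m - 1) → ι) → ℂ

variable {ι : Type} [Fintype ι] {m : ℕ}

/-- `(A x^{m-1})_i = ∑ a_{i i₂ … i_m} x_{i₂} ⋯ x_{i_m}`. -/
noncomputable def tApp (A : Tensor ι m) (x : ι → ℂ) (i : ι) : ℂ :=
  ∑ f : Fin (m - 1) → ι, A i f * ∏ j, x (f j)

/-- `x ≠ 0` and `A x^{m-1} = l x^{[m-1]}`. -/
def IsEigPair (A : Tensor ι m) (l : ℂ) (x : ι → ℂ) : Prop :=
  x ≠ 0 ∧ ∀ i, tApp A x i = l * x i ^ (m - 1)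

def Eigenvalues (A : Tensor ι m) : Set ℂ := {l | ∃ x, IsEigPair A l x}

/-- The spectral radius: the largest modulus of an eigenvalue. -/
noncomputable def specRad (A : Tensor ι m) : ℝ := sSup ((fun z : ℂ => ‖z‖) '' Eigenvalues A)

/-- All entries are nonnegative reals. -/
def Nonneg (A : Tensor ι m) : Prop := ∀ i f, ∃ r : ℝ, 0 ≤ r ∧ A i f = (r : ℂ)

/-- Arc `(i,j)` of the directed graph `G(A)`. -/
def Arc (A : Tensor ι m) (i j : ι) : Prop := ∃ f, A i f ≠ 0 ∧ ∃ k, f k = j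

/-- `G(A)` is strongly connected. -/
def WeaklyIrreducible (A : Tensor ι m) : Prop :=
  ∀ i j : ι, Relation.ReflTransGen (Arc A) i j

/-- The projective eigenvariety `PV_l(A) ⊆ ℙ^{n-1}`. -/
def PV (A : Tensor ι m) (l : ℂ) : Set (Projectivization ℂ (ι → ℂ)) :=
  {p | ∃ (v : ι → ℂ) (hv : v ≠ 0), Projectivization.mk ℂ v hv = p ∧
        ∀ i, tApp A v i = l * v i ^ (m - 1)}

/-- `(D^{-(m-1)} A D)_{i₁…i_m} = d_{i₁}^{-(m-1)} a_{i₁…i_m} d_{i₂} ⋯ d_{i_m}`. -/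
noncomputable def diagConj (d : ι → ℂ) (A : Tensor ι m) : Tensor ι m :=
  fun i f => (d i)⁻¹ ^ (m - 1) * A i f * ∏ j, d (f j)

/-- Combinatorial symmetry: the support is invariant under permutations of indices. -/
def CombSymm (A : Tensor ι m) : Prop :=
  ∀ i f i' f', (i ::ₘ Multiset.map f Finset.univ.val) = (i' ::ₘ Multiset.map f' Finset.univ.val) →
    (A i f ≠ 0 ↔ A i' f' ≠ 0)

/-- Irreducibility of a tensor. -/
def Irred (A : Tensor ι m) : Prop :=
  ¬ ∃ S : Set ι, S.Nonempty ∧ S ≠ Set.univ ∧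
      ∀ i ∈ S, ∀ f : Fin (m - 1) → ι, (∀ j, f j ∉ S) → A i f = 0

/-- Solid arc: `(i,j)` arising from a nonzero entry `a_{ij…j}`. -/
def SolidArc (A : Tensor ι m) (i j : ι) : Prop := A i (fun _ => j) ≠ 0

/-- Spectral `ℓ`-symmetry: `Spec(A) = e^{2πi/ℓ} Spec(A)`. -/
def SpectralSymm (A : Tensor ι m) (ℓ : ℕ) : Prop :=
  Eigenvalues A = (fun z => Complex.exp ((2 * Real.pi / ℓ : ℝ) * Complex.I) * z) '' Eigenvalues A

/-- The set `𝔇^{(j)}(A)` (for the given `ℓ`), as diagonal matrices recorded by their diagonals. -/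
def Dgj {n m : ℕ} [NeZero n] (A : Tensor (Fin n) m) (ℓ j : ℕ) : Set (Fin n → ℂ) :=
  {d | (∀ i, d i ≠ 0) ∧ d 0 = 1 ∧
    ∀ i f, A i f = Complex.exp (-(2 * Real.pi * j / ℓ : ℝ) * Complex.I) * diagConj d A i f}

/-- The group `𝔇(A) = ⋃_{j=0}^{ℓ-1} 𝔇^{(j)}(A)`. -/
def DgAll {n m : ℕ} [NeZero n] (A : Tensor (Fin n) m) (ℓ : ℕ) : Set (Fin n → ℂ) :=
  {d | ∃ j < ℓ, d ∈ Dgj A ℓ j}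

/-- `𝔇^{(0)}(A)`. -/
def Dg0 {n m : ℕ} [NeZero n] (A : Tensor (Fin n) m) : Set (Fin n → ℂ) :=
  {d | (∀ i, d i ≠ 0) ∧ d 0 = 1 ∧ ∀ i f, A i f = diagConj d A i f}

/-- Restriction (principal subtensor) of `A` to a set `S` of indices. -/
def restrict (A : Tensor ι m) (S : Set ι) : Tensor S m :=
  fun i f => A i.1 (fun j => (f j).1)



/-- Compatibility: the complex absolute value as an `AbsoluteValue`, equal to the norm. -/
noncomputable def Complex.abs : AbsoluteValue ℂ ℝ where
  toFun z := ‖z‖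
  map_mul' := norm_mul
  nonneg' := norm_nonneg
  eq_zero' _ := norm_eq_zero
  add_le' := norm_add_le

lemma Complex.abs_apply (z : ℂ) : Complex.abs z = ‖z‖ := rfl

lemma Complex.abs_ofReal (r : ℝ) : Complex.abs (r : ℂ) = |r| := by
  rw [Complex.abs_apply, Complex.norm_real, Real.norm_eq_abs]

lemma Complex.abs_conj (z : ℂ) : Complex.abs ((starRingEnd ℂ) z) = Complex.abs z :=
  Complex.norm_conj z

lemma Complex.abs_exp_ofReal_mul_I (x : ℝ) : Complex.abs (Complex.exp (x * Complex.I)) = 1 :=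
  Complex.norm_exp_ofReal_mul_I x

lemma Complex.normSq_eq_abs (z : ℂ) : Complex.normSq z = Complex.abs z ^ 2 :=
  Complex.normSq_eq_norm_sq z

lemma Complex.re_le_abs (z : ℂ) : z.re ≤ Complex.abs z := Complex.re_le_norm z

lemma Complex.sq_abs (z : ℂ) : Complex.abs z ^ 2 = Complex.normSq z := Complex.sq_norm z

section PFAux
open Finset


lemma prod_eq_of_le {κ : Type*} [DecidableEq κ] (s : Finset κ) (g h : κ → ℝ)
    (h0 : ∀ k ∈ s, 0 ≤ g k) (hle : ∀ k ∈ s, g k ≤ h k) (hpos : ∀ k ∈ s, 0 < h k)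
    (heq : ∏ k ∈ s, g k = ∏ k ∈ s, h k) : ∀ k ∈ s, g k = h k := by
  intro k hk
  by_contra hne
  have hlt : g k < h k := lt_of_le_of_ne (hle k hk) hne
  have h1 : ∏ j ∈ s, g j ≤ g k * ∏ j ∈ s.erase k, h j := by
    rw [← Finset.mul_prod_erase s g hk]
    refine mul_le_mul_of_nonneg_left (Finset.prod_le_prod (fun j hj => h0 j (Finset.mem_of_mem_erase hj)) (fun j hj => hle j (Finset.mem_of_mem_erase hj))) (h0 k hk)
  have h2 : g k * ∏ j ∈ s.erase k, h j < h k * ∏ j ∈ s.erase k, h j := by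
    have : (0:ℝ) < ∏ j ∈ s.erase k, h j :=
      Finset.prod_pos (fun j hj => hpos j (Finset.mem_of_mem_erase hj))
    exact mul_lt_mul_of_pos_right hlt this
  rw [Finset.mul_prod_erase s h hk] at h2
  exact absurd heq (ne_of_lt (lt_of_le_of_lt h1 h2))

lemma re_eq_abs_imp {w : ℂ} (h : w.re = Complex.abs w) : w = (Complex.abs w : ℂ) := by
  have h2 : Complex.abs w ^ 2 = w.re ^ 2 + w.im ^ 2 := by
    rw [Complex.sq_abs, Complex.normSq_apply]; ring
  have hh : w.re ^ 2 = Complex.abs w ^ 2 := by rw [h]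
  have him2 : w.im ^ 2 = 0 := by linarith
  have him : w.im = 0 := by
    have := sq_eq_zero_iff.mp him2; exact this
  apply Complex.ext <;> simp [h, him]

-- triangle equality case
lemma tri_eq {κ : Type*} (s : Finset κ) (z : κ → ℂ)
    (h : Complex.abs (∑ k ∈ s, z k) = ∑ k ∈ s, Complex.abs (z k)) (hne : (∑ k ∈ s, z k) ≠ 0) :
    ∀ k ∈ s, z k = (Complex.abs (z k) : ℂ) * ((∑ j ∈ s, z j) / (Complex.abs (∑ j ∈ s, z j) : ℂ)) := by
  set σ : ℂ := ∑ k ∈ s, z k with hσ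
  set ω : ℂ := σ / (Complex.abs σ : ℂ) with hω
  have habs : Complex.abs σ ≠ 0 := by simpa using hne
  have habs' : (0:ℝ) < Complex.abs σ := lt_of_le_of_ne (AbsoluteValue.nonneg _ _) (Ne.symm habs)
  have hωabs : Complex.abs ω = 1 := by
    rw [hω, map_div₀, Complex.abs_ofReal, _root_.abs_of_nonneg (AbsoluteValue.nonneg _ _)]
    field_simp
  have key : ∑ k ∈ s, (z k * (starRingEnd ℂ) ω).re = ∑ k ∈ s, Complex.abs (z k) := by
    rw [← Complex.re_sum, ← Finset.sum_mul, ← hσ, hω, map_div₀, Complex.conj_ofReal,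
      mul_div_assoc', Complex.mul_conj]
    have e : ((Complex.normSq σ : ℝ) : ℂ) / (Complex.abs σ : ℂ) = ((Complex.abs σ : ℝ) : ℂ) := by
      rw [Complex.normSq_eq_abs]
      push_cast
      field_simp [sq]
    rw [e, Complex.ofReal_re, h]
  have hterm : ∀ k ∈ s, (z k * (starRingEnd ℂ) ω).re = Complex.abs (z k) := by
    refine (Finset.sum_eq_sum_iff_of_le ?_).mp key
    intro k hk
    calc (z k * (starRingEnd ℂ) ω).re ≤ Complex.abs (z k * (starRingEnd ℂ) ω) := Complex.re_le_abs _
      _ = Complex.abs (z k) := by rw [map_mul, Complex.abs_conj, hωabs, mul_one]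
  intro k hk
  have h3 : z k * (starRingEnd ℂ) ω = (Complex.abs (z k * (starRingEnd ℂ) ω) : ℂ) :=
    re_eq_abs_imp (by rw [hterm k hk, map_mul, Complex.abs_conj, hωabs, mul_one])
  have h4 : z k * (starRingEnd ℂ) ω = (Complex.abs (z k) : ℂ) := by
    rw [h3, map_mul, Complex.abs_conj, hωabs, mul_one]
  have h5 : (starRingEnd ℂ) ω * ω = 1 := by
    rw [mul_comm, Complex.mul_conj, Complex.normSq_eq_abs, hωabs]; norm_num
  calc z k = z k * ((starRingEnd ℂ) ω * ω) := by rw [h5, mul_one]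
    _ = (z k * (starRingEnd ℂ) ω) * ω := by ring
    _ = (Complex.abs (z k) : ℂ) * ω := by rw [h4]



section fsup
variable {κ : Type*} [Fintype κ] [Nonempty κ]

noncomputable def fsup (g : κ → ℝ) : ℝ := Finset.univ.sup' Finset.univ_nonempty g

lemma fsup_le {g : κ → ℝ} {c : ℝ} (h : ∀ k, g k ≤ c) : fsup g ≤ c :=
  Finset.sup'_le _ _ (fun k _ => h k)

lemma le_fsup (g : κ → ℝ) (k : κ) : g k ≤ fsup g := Finset.le_sup' _ (Finset.mem_univ k)

lemma fsup_exists (g : κ → ℝ) : ∃ k, fsup g = g k := by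
  obtain ⟨k, _, hk⟩ := Finset.exists_mem_eq_sup' (Finset.univ_nonempty (α := κ)) g
  exact ⟨k, hk⟩

lemma fsup_pos {g : κ → ℝ} (h : ∀ k, 0 < g k) : 0 < fsup g := by
  obtain ⟨k, hk⟩ := fsup_exists g
  rw [hk]; exact h k

lemma continuous_sup'aux {X : Type*} [TopologicalSpace X] {κ' : Type*} {s : Finset κ'}
    (hs : s.Nonempty) (f : κ' → X → ℝ) (hf : ∀ k, Continuous (f k)) :
    Continuous (fun x => s.sup' hs (fun k => f k x)) := by
  induction hs using Finset.Nonempty.cons_induction with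
  | singleton k => simpa using hf k
  | @cons k s hk hs ih =>
      have he : (fun x => (Finset.cons k s hk).sup' (Finset.cons_nonempty hk) (fun j => f j x))
          = fun x => max (f k x) (s.sup' hs fun j => f j x) := by
        funext x; rw [Finset.sup'_cons]
      rw [he]
      exact (hf k).max ih

lemma continuous_fsup {X : Type*} [TopologicalSpace X] (f : κ → X → ℝ)
    (hf : ∀ k, Continuous (f k)) : Continuous (fun x => fsup (fun k => f k x)) :=
  continuous_sup'aux Finset.univ_nonempty f hf

end fsup

-- interval bound for K2/τ + K3 τ
lemma mid_le (K2 K3 p q τ : ℝ) (hK2 : 0 ≤ K2) (hK3 : 0 ≤ K3) (hp : 0 < p)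
    (hpτ : p ≤ τ) (hτq : τ ≤ q) :
    K2/τ + K3*τ ≤ max (K2/p + K3*p) (K2/q + K3*q) := by
  have hτ : 0 < τ := lt_of_lt_of_le hp hpτ
  have hq : 0 < q := lt_of_lt_of_le hτ hτq
  rcases le_or_gt K2 (K3*τ*q) with hc | hc
  · refine le_max_of_le_right ?_
    have h1 : K2/q + K3*q - (K2/τ + K3*τ) = (q - τ) * (K3*τ*q - K2)/(τ*q) := by
      field_simp; ring
    have h2 : 0 ≤ (q - τ) * (K3*τ*q - K2)/(τ*q) :=
      div_nonneg (mul_nonneg (by linarith) (by linarith)) (by positivity)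
    linarith
  · refine le_max_of_le_left ?_
    have h1 : K2/p + K3*p - (K2/τ + K3*τ) = (τ - p) * (K2 - K3*τ*p)/(τ*p) := by
      field_simp; ring
    have hK2' : K3*τ*p ≤ K2 :=
      le_trans (mul_le_mul_of_nonneg_left (hpτ.trans hτq) (mul_nonneg hK3 hτ.le) :
        K3*τ*p ≤ K3*τ*q) hc.le
    have h2 : 0 ≤ (τ - p) * (K2 - K3*τ*p)/(τ*p) :=
      div_nonneg (mul_nonneg (by linarith) (by linarith)) (by positivity)
    linarith

lemma PQ_lt (r s c τ : ℝ) (hc0 : 0 < c) (hc1 : c ≤ 1) (hr : 0 < r) (hs : 0 < s)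
    (hτ : 0 < τ) (hτr : τ ≤ r) (hsτ : 1/s ≤ τ) (hrs : 1 < r * s) :
    (r - c*(r - τ)) * (s - c*(s - 1/τ)) < r * s := by
  set K2 : ℝ := r*(1-c)*c with hK2
  set K3 : ℝ := s*(1-c)*c with hK3
  have hK2' : 0 ≤ K2 := by
    rw [hK2]; exact mul_nonneg (mul_nonneg hr.le (by linarith)) hc0.le
  have hK3' : 0 ≤ K3 := by
    rw [hK3]; exact mul_nonneg (mul_nonneg hs.le (by linarith)) hc0.le
  have hps : 0 < 1/s := by positivity
  have expand : (r - c*(r - τ)) * (s - c*(s - 1/τ)) = r*s*(1-c)^2 + c^2 + K2*(1/τ) + K3*τ := by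
    rw [hK2, hK3]; field_simp; ring
  have hmid := mid_le K2 K3 (1/s) r τ hK2' hK3' hps hsτ hτr
  have e1 : K2/(1/s) + K3*(1/s) = r*s*(1-c)*c + (1-c)*c := by
    rw [hK2, hK3]; field_simp
  have e2 : K2/r + K3*r = (1-c)*c + r*s*(1-c)*c := by
    rw [hK2, hK3]; field_simp
  have hmax : max (K2/(1/s) + K3*(1/s)) (K2/r + K3*r) = r*s*(1-c)*c + (1-c)*c := by
    rw [e1, e2]; rw [max_eq_left (by linarith)]
  have hb : K2*(1/τ) + K3*τ ≤ r*s*(1-c)*c + (1-c)*c := by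
    have : K2*(1/τ) = K2/τ := by ring
    rw [this]; rw [hmax] at hmid; exact hmid
  have final : r*s*(1-c)^2 + c^2 + (r*s*(1-c)*c + (1-c)*c) < r*s := by nlinarith
  have hle : (r - c*(r - τ)) * (s - c*(s - 1/τ)) ≤ r*s*(1-c)^2 + c^2 + (r*s*(1-c)*c + (1-c)*c) := by
    rw [expand]; linarith
  linarith


section sc
variable {ι κ : Type*} [Fintype ι] [Fintype κ] [Nonempty ι] [Nonempty κ]

lemma one_side (M : ι → κ → ℝ) (a b : ℝ) (ha : 0 < a) (hM : ∀ i k, a ≤ M i k)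
    (hMb : ∀ i k, M i k ≤ b) (w w' : κ → ℝ) (hw : ∀ k, 0 < w k) (hw' : ∀ k, 0 < w' k) (i : ι) :
    (∑ k, M i k * w k) ≤
      (fsup (fun k => w k / w' k) -
        (a/b) * (fsup (fun k => w k / w' k) - (∑ k, w k)/(∑ k, w' k))) * (∑ k, M i k * w' k) := by
  set r := fsup (fun k => w k / w' k) with hrdef
  set W := ∑ k, w k with hWdef
  set W' := ∑ k, w' k with hW'def
  have hW' : 0 < W' := Finset.sum_pos (fun k _ => hw' k) univ_nonempty
  have hW : 0 < W := Finset.sum_pos (fun k _ => hw k) univ_nonempty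
  have hb : 0 < b := lt_of_lt_of_le ha (le_trans (hM (Classical.arbitrary ι) (Classical.arbitrary κ)) (hMb _ _))
  have hwle : ∀ k, w k ≤ r * w' k := fun k => by
    have h1 := le_fsup (fun k => w k / w' k) k
    exact (div_le_iff₀ (hw' k)).mp h1
  have hτr : W ≤ r * W' := by
    rw [hWdef, hW'def, Finset.mul_sum]
    exact Finset.sum_le_sum (fun k _ => hwle k)
  have e : r * (∑ k, M i k * w' k) - (∑ k, M i k * w k) = ∑ k, M i k * (r * w' k - w k) := by
    rw [Finset.mul_sum, ← Finset.sum_sub_distrib]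
    exact Finset.sum_congr rfl (fun k _ => by ring)
  have h2 : a * (r*W' - W) = ∑ k, a * (r * w' k - w k) := by
    rw [← Finset.mul_sum, Finset.sum_sub_distrib, ← Finset.mul_sum]
  have h3 : ∑ k, a * (r * w' k - w k) ≤ ∑ k, M i k * (r * w' k - w k) :=
    Finset.sum_le_sum (fun k _ =>
      mul_le_mul_of_nonneg_right (hM i k) (by linarith [hwle k]))
  have key : ∑ k, M i k * w k ≤ r * (∑ k, M i k * w' k) - a * (r * W' - W) := by linarith
  have hLw' : ∑ k, M i k * w' k ≤ b * W' := by
    calc ∑ k, M i k * w' k ≤ ∑ k, b * w' k :=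
          Finset.sum_le_sum (fun k _ => mul_le_mul_of_nonneg_right (hMb i k) (hw' k).le)
      _ = b * W' := by rw [← Finset.mul_sum]
  have hrW : 0 ≤ r - W/W' := by
    rw [sub_nonneg, div_le_iff₀ hW']; linarith
  have hfs : (a/b)*(r - W/W') * (b * W') = a * (r*W' - W) := by field_simp
  have h4 : (a/b)*(r - W/W') * (∑ k, M i k * w' k) ≤ a * (r*W' - W) := by
    calc (a/b)*(r - W/W') * (∑ k, M i k * w' k) ≤ (a/b)*(r - W/W') * (b*W') :=
          mul_le_mul_of_nonneg_left hLw' (mul_nonneg (by positivity) hrW)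
      _ = a * (r*W' - W) := hfs
  have expand : (r - (a/b)*(r - W/W')) * (∑ k, M i k * w' k)
      = r * (∑ k, M i k * w' k) - (a/b)*(r - W/W')*(∑ k, M i k * w' k) := by ring
  rw [expand]; linarith

lemma sc_main (M : ι → κ → ℝ) (a b : ℝ) (ha : 0 < a) (hM : ∀ i k, a ≤ M i k)
    (hMb : ∀ i k, M i k ≤ b) (w w' : κ → ℝ) (hw : ∀ k, 0 < w k) (hw' : ∀ k, 0 < w' k)
    (hrs : 1 < fsup (fun k => w k / w' k) * fsup (fun k => w' k / w k)) :
    fsup (fun i => (∑ k, M i k * w k) / (∑ k, M i k * w' k)) *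
      fsup (fun i => (∑ k, M i k * w' k) / (∑ k, M i k * w k)) <
    fsup (fun k => w k / w' k) * fsup (fun k => w' k / w k) := by
  set r := fsup (fun k => w k / w' k) with hrdef
  set s := fsup (fun k => w' k / w k) with hsdef
  set W := ∑ k, w k with hWdef
  set W' := ∑ k, w' k with hW'def
  have hW' : 0 < W' := Finset.sum_pos (fun k _ => hw' k) univ_nonempty
  have hW : 0 < W := Finset.sum_pos (fun k _ => hw k) univ_nonempty
  have hb : 0 < b := lt_of_lt_of_le ha (le_trans (hM (Classical.arbitrary ι) (Classical.arbitrary κ)) (hMb _ _))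
  have hab : a ≤ b := le_trans (hM (Classical.arbitrary ι) (Classical.arbitrary κ)) (hMb _ _)
  have hr : 0 < r := fsup_pos (fun k => div_pos (hw k) (hw' k))
  have hs : 0 < s := fsup_pos (fun k => div_pos (hw' k) (hw k))
  have hLpos : ∀ i, 0 < ∑ k, M i k * w k := fun i =>
    Finset.sum_pos (fun k _ => mul_pos (lt_of_lt_of_le ha (hM i k)) (hw k)) univ_nonempty
  have hLpos' : ∀ i, 0 < ∑ k, M i k * w' k := fun i =>
    Finset.sum_pos (fun k _ => mul_pos (lt_of_lt_of_le ha (hM i k)) (hw' k)) univ_nonempty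
  have b1 := one_side M a b ha hM hMb w w' hw hw'
  have b2 := one_side M a b ha hM hMb w' w hw' hw
  have hQrw : W'/W = 1/(W/W') := by rw [one_div_div]
  have hsup1 : fsup (fun i => (∑ k, M i k * w k) / (∑ k, M i k * w' k))
      ≤ r - (a/b)*(r - W/W') :=
    fsup_le (fun i => (div_le_iff₀ (hLpos' i)).mpr (b1 i))
  have hsup2 : fsup (fun i => (∑ k, M i k * w' k) / (∑ k, M i k * w k))
      ≤ s - (a/b)*(s - 1/(W/W')) := by
    rw [← hQrw]
    exact fsup_le (fun i => (div_le_iff₀ (hLpos i)).mpr (b2 i))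
  have hpos1 : 0 < fsup (fun i => (∑ k, M i k * w k) / (∑ k, M i k * w' k)) :=
    fsup_pos (fun i => div_pos (hLpos i) (hLpos' i))
  have hpos2 : 0 < fsup (fun i => (∑ k, M i k * w' k) / (∑ k, M i k * w k)) :=
    fsup_pos (fun i => div_pos (hLpos' i) (hLpos i))
  have hτ : 0 < W/W' := div_pos hW hW'
  have hτr : W/W' ≤ r := by
    rw [div_le_iff₀ hW', hrdef]
    rw [Finset.mul_sum]
    exact Finset.sum_le_sum (fun k _ => (div_le_iff₀ (hw' k)).mp (le_fsup (fun k => w k / w' k) k))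
  have hsτ : 1/s ≤ W/W' := by
    rw [div_le_div_iff₀ hs hW']
    have : W' ≤ s * W := by
      rw [hW'def, hWdef, Finset.mul_sum]
      exact Finset.sum_le_sum (fun k _ => (div_le_iff₀ (hw k)).mp (le_fsup (fun k => w' k / w k) k))
    linarith
  have hPQ := PQ_lt r s (a/b) (W/W') (by positivity) (by rw [div_le_one hb]; exact hab)
    hr hs hτ hτr hsτ hrs
  calc fsup (fun i => (∑ k, M i k * w k) / (∑ k, M i k * w' k)) *
        fsup (fun i => (∑ k, M i k * w' k) / (∑ k, M i k * w k))
      ≤ (r - (a/b)*(r - W/W')) * (s - (a/b)*(s - 1/(W/W'))) := by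
        apply mul_le_mul hsup1 hsup2 hpos2.le
        exact le_trans hpos1.le hsup1
    _ < r * s := hPQ
end sc


section pos
variable {n q : ℕ} [NeZero n] (hq : 0 < q)

instance : Nonempty (Fin n) := ⟨⟨0, Nat.pos_of_ne_zero (NeZero.ne n)⟩⟩

lemma fsup_rpow {κ : Type*} [Fintype κ] [Nonempty κ] (g : κ → ℝ) (hg : ∀ k, 0 < g k)
    (c : ℝ) (hc : 0 ≤ c) : fsup (fun k => g k ^ c) = (fsup g) ^ c := by
  apply le_antisymm
  · exact fsup_le (fun k => Real.rpow_le_rpow (hg k).le (le_fsup g k) hc)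
  · obtain ⟨k, hk⟩ := fsup_exists g
    rw [hk]
    exact le_fsup (fun k => g k ^ c) k

lemma fsup_one_lt {κ : Type*} [Fintype κ] [Nonempty κ] (x y : κ → ℝ)
    (hx : ∀ k, 0 < x k) (hy : ∀ k, 0 < y k) :
    1 ≤ fsup (fun k => x k / y k) * fsup (fun k => y k / x k) := by
  have k := Classical.arbitrary κ
  have h1 : x k / y k ≤ fsup (fun k => x k / y k) := le_fsup (fun k => x k / y k) k
  have h2 : y k / x k ≤ fsup (fun k => y k / x k) := le_fsup (fun k => y k / x k) k
  have e : (x k / y k) * (y k / x k) = 1 := by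
    field_simp [mul_comm]
    exact div_self (ne_of_gt (mul_pos (hx k) (hy k)))
  calc (1:ℝ) = (x k / y k) * (y k / x k) := e.symm
    _ ≤ _ := mul_le_mul h1 h2 (div_nonneg (hy k).le (hx k).le) (le_trans (div_nonneg (hx k).le (hy k).le) h1)

lemma tw_fsup (x y : Fin n → ℝ) (hx : ∀ i, 0 < x i) (hy : ∀ i, 0 < y i) :
    fsup (fun f : Fin q → Fin n => (∏ j, x (f j)) / (∏ j, y (f j)))
      = (fsup (fun i => x i / y i)) ^ q := by
  apply le_antisymm
  · apply fsup_le
    intro f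
    have : (∏ j, x (f j)) / (∏ j, y (f j)) = ∏ j, (x (f j) / y (f j)) := by
      rw [Finset.prod_div_distrib]
    rw [this]
    calc ∏ j : Fin q, (x (f j) / y (f j)) ≤ ∏ _j : Fin q, fsup (fun i => x i / y i) :=
          Finset.prod_le_prod (fun j _ => div_nonneg (hx (f j)).le (hy (f j)).le)
            (fun j _ => le_fsup (fun i => x i / y i) (f j))
      _ = (fsup (fun i => x i / y i)) ^ q := by
          rw [Finset.prod_const]; simp
  · obtain ⟨k, hk⟩ := fsup_exists (fun i => x i / y i)
    have : (fsup (fun i => x i / y i)) ^ q = (∏ j : Fin q, x ((fun _ => k) j)) / (∏ j : Fin q, y ((fun _ => k) j)) := by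
      rw [hk, Finset.prod_const, Finset.prod_const, ← div_pow]; simp
    rw [this]
    exact le_fsup (fun f : Fin q → Fin n => (∏ j, x (f j)) / (∏ j, y (f j))) (fun _ => k)

variable (b : Fin n → (Fin q → Fin n) → ℝ) (a0 b0 : ℝ)

noncomputable def Lb (x : Fin n → ℝ) (i : Fin n) : ℝ := ∑ f : Fin q → Fin n, b i f * ∏ j, x (f j)

noncomputable def zb (x : Fin n → ℝ) (i : Fin n) : ℝ := (Lb b x i) ^ ((q : ℝ)⁻¹)

lemma Lb_pos (ha0 : 0 < a0) (hba : ∀ i f, a0 ≤ b i f) (x : Fin n → ℝ) (hx : ∀ i, 0 < x i) (i : Fin n) :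
    0 < Lb b x i :=
  Finset.sum_pos (fun f _ => mul_pos (lt_of_lt_of_le ha0 (hba i f)) (Finset.prod_pos (fun j _ => hx (f j)))) univ_nonempty

lemma zb_pos (ha0 : 0 < a0) (hba : ∀ i f, a0 ≤ b i f) (x : Fin n → ℝ) (hx : ∀ i, 0 < x i) (i : Fin n) :
    0 < zb b x i :=
  Real.rpow_pos_of_pos (Lb_pos b a0 ha0 hba x hx i) _

lemma zb_smul (hq : 0 < q) (x : Fin n → ℝ) (hb' : ∀ i f, 0 ≤ b i f) (hx : ∀ i, 0 < x i) (c : ℝ) (hc : 0 < c) :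
    zb b (fun i => c * x i) = fun i => c * zb b x i := by
  funext i
  have e : Lb b (fun i => c * x i) i = c ^ (q:ℕ) * Lb b x i := by
    unfold Lb
    rw [Finset.mul_sum]
    apply Finset.sum_congr rfl
    intro f _
    rw [Finset.prod_mul_distrib, Finset.prod_const]
    simp; ring
  have hL : 0 ≤ Lb b x i :=
    Finset.sum_nonneg (fun f _ => mul_nonneg (hb' i f) (Finset.prod_nonneg (fun j _ => (hx (f j)).le)))
  unfold zb
  rw [e]
  rw [Real.mul_rpow (by positivity) hL]
  congr 1
  rw [← Real.rpow_natCast c q, ← Real.rpow_mul hc.le]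
  rw [mul_inv_cancel₀ (by exact_mod_cast hq.ne')]
  exact Real.rpow_one c

lemma contract (hq : 0 < q) (ha0 : 0 < a0) (hba : ∀ i f, a0 ≤ b i f) (hbb : ∀ i f, b i f ≤ b0)
    (x y : Fin n → ℝ) (hx : ∀ i, 0 < x i) (hy : ∀ i, 0 < y i)
    (hD : 1 < fsup (fun i => x i / y i) * fsup (fun i => y i / x i)) :
    fsup (fun i => zb b x i / zb b y i) * fsup (fun i => zb b y i / zb b x i) <
      fsup (fun i => x i / y i) * fsup (fun i => y i / x i) := by
  have hw : ∀ f : Fin q → Fin n, 0 < ∏ j, x (f j) :=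
    fun f => Finset.prod_pos (fun j _ => hx (f j))
  have hw' : ∀ f : Fin q → Fin n, 0 < ∏ j, y (f j) :=
    fun f => Finset.prod_pos (fun j _ => hy (f j))
  set r := fsup (fun i => x i / y i) with hr
  set s := fsup (fun i => y i / x i) with hs
  have hrpos : 0 < r := fsup_pos (fun i => div_pos (hx i) (hy i))
  have hspos : 0 < s := fsup_pos (fun i => div_pos (hy i) (hx i))
  have hwr : fsup (fun f : Fin q → Fin n => (∏ j, x (f j)) / (∏ j, y (f j))) = r ^ q :=
    tw_fsup x y hx hy
  have hws : fsup (fun f : Fin q → Fin n => (∏ j, y (f j)) / (∏ j, x (f j))) = s ^ q :=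
    tw_fsup y x hy hx
  have hrs_w : 1 < fsup (fun f : Fin q → Fin n => (∏ j, x (f j)) / (∏ j, y (f j))) *
      fsup (fun f : Fin q → Fin n => (∏ j, y (f j)) / (∏ j, x (f j))) := by
    rw [hwr, hws, ← mul_pow]
    exact one_lt_pow₀ hD hq.ne'
  have hsc := sc_main b a0 b0 ha0 hba hbb _ _ hw hw' hrs_w
  rw [hwr, hws] at hsc
  -- now relate fsup of z ratios to (fsup of Lb ratios)^(1/q)
  have hLx : ∀ i, 0 < Lb b x i := Lb_pos b a0 ha0 hba x hx
  have hLy : ∀ i, 0 < Lb b y i := Lb_pos b a0 ha0 hba y hy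
  have ezx : (fun i => zb b x i / zb b y i) = fun i => (Lb b x i / Lb b y i) ^ ((q:ℝ)⁻¹) := by
    funext i
    unfold zb
    rw [Real.div_rpow (hLx i).le (hLy i).le]
  have ezy : (fun i => zb b y i / zb b x i) = fun i => (Lb b y i / Lb b x i) ^ ((q:ℝ)⁻¹) := by
    funext i
    unfold zb
    rw [Real.div_rpow (hLy i).le (hLx i).le]
  rw [ezx, ezy, fsup_rpow _ (fun i => div_pos (hLx i) (hLy i)) _ (by positivity),
    fsup_rpow _ (fun i => div_pos (hLy i) (hLx i)) _ (by positivity : (0:ℝ) ≤ (q:ℝ)⁻¹),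
    ← Real.mul_rpow (fsup_pos (fun i => div_pos (hLx i) (hLy i))).le
      (fsup_pos (fun i => div_pos (hLy i) (hLx i))).le]
  have hrsq : r * s = ((r*s) ^ q) ^ ((q:ℝ)⁻¹) := by
    rw [← Real.rpow_natCast (r*s) q, ← Real.rpow_mul (mul_nonneg hrpos.le hspos.le),
      mul_inv_cancel₀ (by exact_mod_cast hq.ne'), Real.rpow_one]
  calc (fsup (fun i => Lb b x i / Lb b y i) * fsup (fun i => Lb b y i / Lb b x i)) ^ ((q:ℝ)⁻¹)
      < ((r*s) ^ q) ^ ((q:ℝ)⁻¹) := by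
        apply Real.rpow_lt_rpow
          (mul_nonneg (fsup_pos (fun i => div_pos (hLx i) (hLy i))).le
            (fsup_pos (fun i => div_pos (hLy i) (hLx i))).le) _
          (inv_pos.mpr (by exact_mod_cast hq))
        calc fsup (fun i => Lb b x i / Lb b y i) * fsup (fun i => Lb b y i / Lb b x i)
            < r ^ q * s ^ q := hsc
          _ = (r*s)^q := by rw [mul_pow]
    _ = r * s := hrsq.symm
end pos


section pos
variable {n q : ℕ} [NeZero n]


theorem perron_pos (hq : 0 < q) (b : Fin n → (Fin q → Fin n) → ℝ) (a0 b0 : ℝ)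
    (ha0 : 0 < a0) (hba : ∀ i f, a0 ≤ b i f) (hbb : ∀ i f, b i f ≤ b0) :
    ∃ (ρ : ℝ) (u : Fin n → ℝ), 0 < ρ ∧ (∀ i, 0 < u i) ∧ ∀ i, Lb b u i = ρ * u i ^ q := by
  have hb' : ∀ i f, 0 ≤ b i f := fun i f => le_trans ha0.le (hba i f)
  have hb0 : 0 < b0 := lt_of_lt_of_le ha0 (le_trans (hba (Classical.arbitrary _) (Classical.arbitrary _)) (hbb _ _))
  have hab : a0 ≤ b0 := le_trans (hba (Classical.arbitrary _) (Classical.arbitrary _)) (hbb _ _)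
  set θ : ℝ := (a0/b0) ^ ((q:ℝ)⁻¹) with hθdef
  have hθ : 0 < θ := Real.rpow_pos_of_pos (div_pos ha0 hb0) _
  have hθ1 : θ ≤ 1 := Real.rpow_le_one (div_nonneg ha0.le hb0.le) (by rw [div_le_one hb0]; exact hab) (by positivity)
  have hn : (0:ℝ) < n := by exact_mod_cast Nat.pos_of_ne_zero (NeZero.ne n)
  set K : Set (Fin n → ℝ) := {x | (∀ i, x i ∈ Set.Icc (θ/n) 1) ∧ ∑ i, x i = 1} with hKdef
  have hxposK : ∀ x ∈ K, ∀ i, 0 < x i := fun x hx i =>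
    lt_of_lt_of_le (by positivity) (hx.1 i).1
  -- compactness
  have hKclosed : IsClosed K := by
    have : K = (⋂ i, (fun x : Fin n → ℝ => x i) ⁻¹' Set.Icc (θ/n) 1) ∩
        ((fun x : Fin n → ℝ => ∑ i, x i) ⁻¹' {1}) := by
      ext x; simp [hKdef, Set.mem_iInter, forall_and]
    rw [this]
    exact IsClosed.inter (isClosed_iInter (fun i => isClosed_Icc.preimage (continuous_apply i)))
      (isClosed_singleton.preimage (continuous_finset_sum _ (fun i _ => continuous_apply i)))
  have hKcomp : IsCompact K := by
    have hpi : IsCompact (Set.univ.pi fun _ : Fin n => Set.Icc (θ/(n:ℝ)) 1) :=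
      isCompact_univ_pi fun _ => isCompact_Icc
    refine hpi.of_isClosed_subset hKclosed ?_
    intro x hx
    rw [Set.mem_univ_pi]
    exact fun i => hx.1 i
  have hKne : K.Nonempty := by
    refine ⟨fun _ => (n:ℝ)⁻¹, ⟨fun i => ⟨?_, ?_⟩, ?_⟩⟩
    · rw [div_le_iff₀ hn]  -- θ/n ≤ n⁻¹ : θ ≤ n⁻¹ * n = 1
      rw [inv_mul_cancel₀ (ne_of_gt hn)]
      exact hθ1
    · rw [inv_le_one_iff₀]; right; exact_mod_cast Nat.one_le_iff_ne_zero.mpr (NeZero.ne n)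
    · rw [Finset.sum_const, Finset.card_univ, Fintype.card_fin, nsmul_eq_mul,
        mul_inv_cancel₀ (ne_of_gt hn)]
  -- the map G
  set G : (Fin n → ℝ) → (Fin n → ℝ) := fun x i => zb b x i / (∑ j, zb b x j) with hGdef
  have hZpos : ∀ x ∈ K, 0 < ∑ j, zb b x j := fun x hx =>
    Finset.sum_pos (fun j _ => zb_pos b a0 ha0 hba x (hxposK x hx) j) univ_nonempty
  have hratio : ∀ x ∈ K, ∀ i j, θ * zb b x j ≤ zb b x i := by
    intro x hx i j
    set T : ℝ := ∑ f : Fin q → Fin n, ∏ k, x (f k) with hTdef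
    have hT : 0 ≤ T := Finset.sum_nonneg (fun f _ => Finset.prod_nonneg (fun k _ => (hxposK x hx (f k)).le))
    have h1 : a0 * T ≤ Lb b x i := by
      rw [hTdef, Finset.mul_sum]
      exact Finset.sum_le_sum (fun f _ => mul_le_mul_of_nonneg_right (hba i f)
        (Finset.prod_nonneg (fun k _ => (hxposK x hx (f k)).le)))
    have h2 : Lb b x j ≤ b0 * T := by
      rw [hTdef, Finset.mul_sum]
      exact Finset.sum_le_sum (fun f _ => mul_le_mul_of_nonneg_right (hbb j f)
        (Finset.prod_nonneg (fun k _ => (hxposK x hx (f k)).le)))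
    have h3 : (a0/b0) * Lb b x j ≤ Lb b x i := by
      calc (a0/b0) * Lb b x j ≤ (a0/b0) * (b0 * T) :=
            mul_le_mul_of_nonneg_left h2 (by positivity)
        _ = a0 * T := by field_simp
        _ ≤ Lb b x i := h1
    have h4 : ((a0/b0) * Lb b x j) ^ ((q:ℝ)⁻¹) ≤ (Lb b x i) ^ ((q:ℝ)⁻¹) :=
      Real.rpow_le_rpow (mul_nonneg (by positivity) (Lb_pos b a0 ha0 hba x (hxposK x hx) j).le)
        h3 (by positivity)
    rw [Real.mul_rpow (by positivity) (Lb_pos b a0 ha0 hba x (hxposK x hx) j).le] at h4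
    exact h4
  have hGK : ∀ x ∈ K, G x ∈ K := by
    intro x hx
    have hz := fun i => zb_pos b a0 ha0 hba x (hxposK x hx) i
    have hZ := hZpos x hx
    refine ⟨fun i => ⟨?_, ?_⟩, ?_⟩
    · rw [div_le_div_iff₀ hn hZ]
      calc θ * ∑ j, zb b x j = ∑ j, θ * zb b x j := by rw [Finset.mul_sum]
        _ ≤ ∑ _j : Fin n, zb b x i := Finset.sum_le_sum (fun j _ => hratio x hx i j)
        _ = zb b x i * n := by rw [Finset.sum_const, Finset.card_univ, Fintype.card_fin, nsmul_eq_mul]; ring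
    · rw [div_le_one hZ]
      exact Finset.single_le_sum (fun j _ => (hz j).le) (Finset.mem_univ i)
    · rw [← Finset.sum_div, div_self (ne_of_gt hZ)]
  -- continuity
  have hLcont : ∀ i, Continuous (fun x : Fin n → ℝ => Lb b x i) := by
    intro i
    exact continuous_finset_sum _ (fun f _ => continuous_const.mul
      (continuous_finset_prod _ (fun j _ => continuous_apply (f j))))
  have hzcont : ∀ i, ContinuousOn (fun x => zb b x i) K := by
    intro i x hx
    have hca : ContinuousAt (fun x => zb b x i) x := by
      have h1 : ContinuousAt (fun y : ℝ => y ^ ((q:ℝ)⁻¹)) (Lb b x i) :=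
        Real.continuousAt_rpow_const _ _ (Or.inl (Lb_pos b a0 ha0 hba x (hxposK x hx) i).ne')
      have h2 : ContinuousAt (fun x : Fin n → ℝ => Lb b x i) x := (hLcont i).continuousAt
      have h3 : ContinuousAt ((fun y : ℝ => y ^ ((q:ℝ)⁻¹)) ∘ (fun x : Fin n → ℝ => Lb b x i)) x :=
        ContinuousAt.comp h1 h2
      exact h3
    exact hca.continuousWithinAt
  set h : (Fin n → ℝ) → ℝ :=
    fun x => fsup (fun i => x i / zb b x i) * fsup (fun i => zb b x i / x i) with hhdef
  have hhcont : ContinuousOn h K := by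
    apply ContinuousOn.mul
    · apply ContinuousOn.finset_sup'_apply Finset.univ_nonempty
      intro i _
      exact ContinuousOn.div (continuous_apply i).continuousOn (hzcont i)
        (fun x hx => (zb_pos b a0 ha0 hba x (hxposK x hx) i).ne')
    · apply ContinuousOn.finset_sup'_apply Finset.univ_nonempty
      intro i _
      exact ContinuousOn.div (hzcont i) (continuous_apply i).continuousOn
        (fun x hx => (hxposK x hx i).ne')
  obtain ⟨x₀, hx₀K, hmin⟩ := hKcomp.exists_isMinOn hKne hhcont
  have hx₀pos := hxposK x₀ hx₀K
  have hzx₀pos := fun i => zb_pos b a0 ha0 hba x₀ hx₀pos i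
  -- h x₀ = 1
  have hone : h x₀ ≤ 1 := by
    by_contra hgt
    push_neg at hgt
    set Z : ℝ := ∑ j, zb b x₀ j with hZdef
    have hZ : 0 < Z := hZpos x₀ hx₀K
    have hx₁K : G x₀ ∈ K := hGK x₀ hx₀K
    have hGeq : G x₀ = fun i => Z⁻¹ * zb b x₀ i := by
      funext i; rw [hGdef]; simp only []; rw [div_eq_inv_mul]
    have hzG' : zb b (fun i => Z⁻¹ * zb b x₀ i) = fun i => Z⁻¹ * zb b (zb b x₀) i :=
      zb_smul b hq (zb b x₀) hb' hzx₀pos Z⁻¹ (inv_pos.mpr hZ)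
    have hc := contract b a0 b0 hq ha0 hba hbb x₀ (zb b x₀) hx₀pos hzx₀pos hgt
    have hx₁eval : h (G x₀) = fsup (fun i => zb b x₀ i / zb b (zb b x₀) i) *
        fsup (fun i => zb b (zb b x₀) i / zb b x₀ i) := by
      rw [hGeq, hhdef]
      simp only [hzG']
      congr 1
      · exact congrArg fsup (funext fun i => mul_div_mul_left _ _ (inv_ne_zero (ne_of_gt hZ)))
      · exact congrArg fsup (funext fun i => mul_div_mul_left _ _ (inv_ne_zero (ne_of_gt hZ)))
    have hlt : h (G x₀) < h x₀ := by rw [hx₁eval]; exact hc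
    exact absurd (hmin hx₁K : h x₀ ≤ h (G x₀)) (not_le.mpr hlt)
  have hge : 1 ≤ h x₀ := fsup_one_lt x₀ (zb b x₀) hx₀pos hzx₀pos
  have heq1 : h x₀ = 1 := le_antisymm hone hge
  -- equality case: ratios constant
  set r : ℝ := fsup (fun i => x₀ i / zb b x₀ i) with hrdef
  set s : ℝ := fsup (fun i => zb b x₀ i / x₀ i) with hsdef
  have hr : 0 < r := fsup_pos (fun i => div_pos (hx₀pos i) (hzx₀pos i))
  have hs : 0 < s := fsup_pos (fun i => div_pos (hzx₀pos i) (hx₀pos i))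
  have hconst : ∀ i, x₀ i / zb b x₀ i = r := by
    intro i
    by_contra hne
    have hlt : x₀ i / zb b x₀ i < r :=
      lt_of_le_of_ne (le_fsup (fun i => x₀ i / zb b x₀ i) i) hne
    have hxz : x₀ i < r * zb b x₀ i := (div_lt_iff₀ (hzx₀pos i)).mp hlt
    have h5 : r⁻¹ < zb b x₀ i / x₀ i := by
      have h5a : r⁻¹ * x₀ i < zb b x₀ i := by
        have := mul_lt_mul_of_pos_left hxz (inv_pos.mpr hr)
        rwa [← mul_assoc, inv_mul_cancel₀ (ne_of_gt hr), one_mul] at this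
      exact (lt_div_iff₀ (hx₀pos i)).mpr h5a
    have h6 : r⁻¹ < s := lt_of_lt_of_le h5 (le_fsup (fun i => zb b x₀ i / x₀ i) i)
    have h7 : 1 < r * s := by
      calc (1:ℝ) = r * r⁻¹ := (mul_inv_cancel₀ (ne_of_gt hr)).symm
        _ < r * s := mul_lt_mul_of_pos_left h6 hr
    have hhrs : h x₀ = r * s := rfl
    linarith
  -- eigen equation
  refine ⟨(r ^ q)⁻¹, x₀, inv_pos.mpr (pow_pos hr q), hx₀pos, ?_⟩
  intro i
  have hLL : 0 < Lb b x₀ i := Lb_pos b a0 ha0 hba x₀ hx₀pos i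
  have hzq : (zb b x₀ i) ^ q = Lb b x₀ i := by
    rw [zb, ← Real.rpow_natCast ((Lb b x₀ i) ^ ((q:ℝ)⁻¹)) q, ← Real.rpow_mul hLL.le,
      inv_mul_cancel₀ (by exact_mod_cast hq.ne'), Real.rpow_one]
  have hzx : zb b x₀ i = x₀ i / r := by
    rw [eq_div_iff (ne_of_gt hr)]
    have hc' := hconst i
    rw [div_eq_iff (ne_of_gt (hzx₀pos i))] at hc'
    rw [mul_comm]
    exact hc'.symm
  rw [← hzq, hzx, div_pow]
  field_simp
end pos


section rb
variable {n q : ℕ} [NeZero n]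

def ArcR (a : Fin n → (Fin q → Fin n) → ℝ) (i j : Fin n) : Prop :=
  ∃ f, a i f ≠ 0 ∧ ∃ k, f k = j

lemma ratio_bound (hq : 0 < q) (a : Fin n → (Fin q → Fin n) → ℝ) (ha : ∀ i f, 0 ≤ a i f)
    (B : ℝ) (hB : 0 < B) (amin : ℝ) (hamin : 0 < amin)
    (hminle : ∀ i f, a i f ≠ 0 → amin ≤ a i f)
    (i j : Fin n) (hrtg : Relation.ReflTransGen (ArcR a) i j) :
    ∃ γ : ℝ, 0 < γ ∧ ∀ (v : Fin n → ℝ) (ρ : ℝ), (∀ k, 0 < v k) → (∀ k, v i ≤ v k) →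
      ρ ≤ B → (∀ i' f, a i' f * ∏ k, v (f k) ≤ ρ * v i' ^ q) → γ * v j ≤ v i := by
  induction hrtg with
  | refl => exact ⟨1, one_pos, fun v ρ hv hmin hρ hcon => by rw [one_mul]⟩
  | @tail b c hrb harc ih =>
      obtain ⟨γ, hγ, hγgood⟩ := ih
      refine ⟨amin * γ^q / B, by positivity, ?_⟩
      intro v ρ hv hmin hρ hcon
      obtain ⟨f, hf, k₀, hk₀⟩ := harc
      have hq1 : q - 1 + 1 = q := Nat.succ_pred_eq_of_pos hq
      have hcard : (Finset.univ.erase k₀).card = q - 1 := by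
        rw [Finset.card_erase_of_mem (Finset.mem_univ k₀), Finset.card_univ, Fintype.card_fin]
      have h2 : v i ^ (q-1) ≤ ∏ k ∈ Finset.univ.erase k₀, v (f k) := by
        calc v i ^ (q-1) = ∏ _k ∈ Finset.univ.erase k₀, v i := by rw [Finset.prod_const, hcard]
          _ ≤ ∏ k ∈ Finset.univ.erase k₀, v (f k) :=
              Finset.prod_le_prod (fun _ _ => (hv i).le) (fun k _ => hmin (f k))
      have hprod : v c * v i ^ (q-1) ≤ ∏ k, v (f k) := by
        rw [← Finset.mul_prod_erase Finset.univ (fun k => v (f k)) (Finset.mem_univ k₀), ← hk₀]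
        exact mul_le_mul_of_nonneg_left h2 (hv (f k₀)).le
      have c1 : amin * (v c * v i ^ (q-1)) ≤ ρ * v b ^ q := by
        have hpp : (0:ℝ) ≤ v c * v i ^ (q-1) :=
          mul_nonneg (hv c).le (pow_nonneg (hv i).le _)
        calc amin * (v c * v i ^ (q-1)) ≤ a b f * (v c * v i ^ (q-1)) :=
              mul_le_mul_of_nonneg_right (hminle b f hf) hpp
          _ ≤ a b f * ∏ k, v (f k) := mul_le_mul_of_nonneg_left hprod (ha b f)
          _ ≤ ρ * v b ^ q := hcon b f
      have c2 : ρ * v b ^ q ≤ B * v b ^ q :=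
        mul_le_mul_of_nonneg_right hρ (pow_nonneg (hv b).le _)
      have c3 : v b ≤ v i / γ := by
        rw [le_div_iff₀ hγ, mul_comm]
        exact hγgood v ρ hv hmin hρ hcon
      have c4 : v b ^ q ≤ (v i / γ) ^ q := pow_le_pow_left₀ (hv b).le c3 q
      have H : amin * (v c * v i ^ (q-1)) ≤ B * (v i ^ q / γ ^ q) := by
        calc amin * (v c * v i ^ (q-1)) ≤ B * v b ^ q := le_trans c1 c2
          _ ≤ B * (v i / γ) ^ q := mul_le_mul_of_nonneg_left c4 hB.le
          _ = B * (v i ^ q / γ ^ q) := by rw [div_pow]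
      have hpow : v i ^ q = v i ^ (q-1) * v i := by
        conv_lhs => rw [← hq1]
        rw [pow_succ]
      have H' : amin * (v c * v i ^ (q-1)) * γ ^ q ≤ B * v i ^ q := by
        have e : B * (v i ^ q / γ ^ q) * γ ^ q = B * v i ^ q := by
          field_simp
        exact le_trans (mul_le_mul_of_nonneg_right H (pow_nonneg hγ.le q)) (le_of_eq e)
      rw [div_mul_eq_mul_div, div_le_iff₀ hB]
      apply le_of_mul_le_mul_right _ (pow_pos (hv i) (q-1))
      calc amin * γ ^ q * v c * v i ^ (q-1)
          = amin * (v c * v i ^ (q-1)) * γ ^ q := by ring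
        _ ≤ B * v i ^ q := H'
        _ = v i * B * v i ^ (q-1) := by rw [hpow]; ring
end rb


section rb
variable {n q : ℕ} [NeZero n]

theorem perronX (hq : 0 < q) (a : Fin n → (Fin q → Fin n) → ℝ) (ha : ∀ i f, 0 ≤ a i f)
    (hwi : ∀ i j, Relation.ReflTransGen (ArcR a) i j) (hne : ∃ i₀ f₀, a i₀ f₀ ≠ 0) :
    ∃ (ρ : ℝ) (u : Fin n → ℝ), 0 < ρ ∧ (∀ i, 0 < u i) ∧
      ∀ i, (∑ f : Fin q → Fin n, a i f * ∏ j, u (f j)) = ρ * u i ^ q := by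
  classical
  obtain ⟨i₀, f₀, hi₀f₀⟩ := hne
  -- amin
  set T : Finset (Fin n × (Fin q → Fin n)) :=
    Finset.univ.filter (fun p => a p.1 p.2 ≠ 0) with hTdef
  have hTne : T.Nonempty := ⟨(i₀, f₀), Finset.mem_filter.mpr ⟨Finset.mem_univ _, hi₀f₀⟩⟩
  set amin : ℝ := T.inf' hTne (fun p => a p.1 p.2) with hamindef
  have hamin : 0 < amin := by
    obtain ⟨p, hp, hpe⟩ := Finset.exists_mem_eq_inf' hTne (fun p => a p.1 p.2)
    rw [hamindef, hpe]
    have : a p.1 p.2 ≠ 0 := by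
      rw [hTdef] at hp; exact (Finset.mem_filter.mp hp).2
    exact lt_of_le_of_ne (ha p.1 p.2) (Ne.symm this)
  have hminle : ∀ i f, a i f ≠ 0 → amin ≤ a i f := by
    intro i f h
    exact Finset.inf'_le (fun p : Fin n × (Fin q → Fin n) => a p.1 p.2)
      (Finset.mem_filter.mpr ⟨Finset.mem_univ (i, f), h⟩)
  -- B
  set B : ℝ := fsup (fun i => ∑ f : Fin q → Fin n, (a i f + 1)) with hBdef
  have hrowpos : ∀ i, 0 < ∑ f : Fin q → Fin n, (a i f + 1) := fun i =>
    Finset.sum_pos (fun f _ => by linarith [ha i f]) univ_nonempty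
  have hB : 0 < B := by
    rw [hBdef]; exact fsup_pos hrowpos
  have hBrow : ∀ i, ∑ f : Fin q → Fin n, (a i f + 1) ≤ B := fun i =>
    le_fsup (fun i => ∑ f : Fin q → Fin n, (a i f + 1)) i
  -- gamma star
  choose Γ hΓpos hΓgood using fun i j => ratio_bound hq a ha B hB amin hamin hminle i j (hwi i j)
  set γs : ℝ := Finset.univ.inf' Finset.univ_nonempty (fun p : Fin n × Fin n => Γ p.1 p.2)
    with hγsdef
  have hγs : 0 < γs := by
    obtain ⟨p, _, hpe⟩ := Finset.exists_mem_eq_inf' (Finset.univ_nonempty) (fun p : Fin n × Fin n => Γ p.1 p.2)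
    rw [hγsdef, hpe]; exact hΓpos p.1 p.2
  have hγle : ∀ i j, γs ≤ Γ i j := fun i j =>
    Finset.inf'_le _ (Finset.mem_univ (i, j))
  -- per k approximate eigenpairs
  have main : ∀ k : ℕ, ∃ (ρ : ℝ) (v : Fin n → ℝ), 0 < ρ ∧ ρ ≤ B ∧
      (∀ i, γs ≤ v i ∧ v i ≤ 1) ∧
      ∀ i, (∑ f : Fin q → Fin n, a i f * ∏ j, v (f j)) +
        (1/((k:ℝ)+1)) * (∑ f : Fin q → Fin n, ∏ j, v (f j)) = ρ * v i ^ q := by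
    intro k
    set ε : ℝ := 1/((k:ℝ)+1) with hεdef
    have hε : 0 < ε := by positivity
    have hε1 : ε ≤ 1 := by
      rw [hεdef, div_le_one (by positivity)]
      have : (0:ℝ) ≤ (k:ℝ) := Nat.cast_nonneg k
      linarith
    set bk : Fin n → (Fin q → Fin n) → ℝ := fun i f => a i f + ε with hbkdef
    have hbk1 : ∀ i f, ε ≤ bk i f := fun i f => by
      rw [hbkdef]; simp only []; linarith [ha i f]
    have hbk2 : ∀ i f, bk i f ≤ B := by
      intro i f
      calc bk i f = a i f + ε := rfl
        _ ≤ a i f + 1 := by linarith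
        _ ≤ ∑ f : Fin q → Fin n, (a i f + 1) :=
            Finset.single_le_sum (f := fun f => a i f + 1)
              (fun g _ => by show (0:ℝ) ≤ a i g + 1; linarith [ha i g]) (Finset.mem_univ f)
        _ ≤ B := hBrow i
    obtain ⟨ρ', u, hρ', hu, heig⟩ := perron_pos hq bk ε B hε hbk1 hbk2
    -- normalize
    set M : ℝ := fsup u with hMdef
    have hM : 0 < M := fsup_pos hu
    obtain ⟨i1, hi1⟩ := fsup_exists u
    set v : Fin n → ℝ := fun i => u i / M with hvdef
    have hv : ∀ i, 0 < v i := fun i => div_pos (hu i) hM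
    have hv1 : ∀ i, v i ≤ 1 := fun i => by
      rw [hvdef]; simp only []
      rw [div_le_one hM, hMdef]
      exact le_fsup u i
    have hvi1 : v i1 = 1 := by
      rw [hvdef]; simp only []
      rw [div_eq_one_iff_eq (ne_of_gt hM), hMdef, hi1]
    have heigv : ∀ i, Lb bk v i = ρ' * v i ^ q := by
      intro i
      have e1 : Lb bk v i = (M ^ q)⁻¹ * Lb bk u i := by
        unfold Lb
        rw [Finset.mul_sum]
        apply Finset.sum_congr rfl
        intro f _
        rw [hvdef]
        simp only []
        rw [Finset.prod_div_distrib, Finset.prod_const]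
        rw [Finset.card_univ, Fintype.card_fin]
        rw [div_eq_mul_inv]
        ring
      rw [e1, heig i, hvdef]
      simp only []
      rw [div_pow, div_eq_mul_inv]
      ring
    have hρB : ρ' ≤ B := by
      have h1 : ρ' = Lb bk v i1 := by rw [heigv i1, hvi1]; simp
      rw [h1]
      calc Lb bk v i1 = ∑ f : Fin q → Fin n, bk i1 f * ∏ j, v (f j) := rfl
        _ ≤ ∑ f : Fin q → Fin n, (a i1 f + 1) := by
            apply Finset.sum_le_sum
            intro f _
            have hp1 : ∏ j, v (f j) ≤ 1 :=
              Finset.prod_le_one (fun j _ => (hv (f j)).le) (fun j _ => hv1 (f j))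
            have hp0 : (0:ℝ) ≤ ∏ j, v (f j) := Finset.prod_nonneg (fun j _ => (hv (f j)).le)
            calc bk i1 f * ∏ j, v (f j) ≤ bk i1 f * 1 :=
                  mul_le_mul_of_nonneg_left hp1 (le_trans hε.le (hbk1 i1 f))
              _ = a i1 f + ε := by rw [mul_one]
              _ ≤ a i1 f + 1 := by linarith
        _ ≤ B := hBrow i1
    have hcon : ∀ i' f, a i' f * ∏ j, v (f j) ≤ ρ' * v i' ^ q := by
      intro i' f
      rw [← heigv i']
      calc a i' f * ∏ j, v (f j) ≤ bk i' f * ∏ j, v (f j) := by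
            apply mul_le_mul_of_nonneg_right _ (Finset.prod_nonneg (fun j _ => (hv (f j)).le))
            rw [hbkdef]; simp only []; linarith
        _ ≤ Lb bk v i' := Finset.single_le_sum
            (fun f _ => mul_nonneg (le_trans hε.le (hbk1 i' f))
              (Finset.prod_nonneg (fun j _ => (hv (f j)).le))) (Finset.mem_univ f)
    -- lower bound
    obtain ⟨i0, _, hi0⟩ := Finset.exists_mem_eq_inf' (Finset.univ_nonempty) v
    have hi0min : ∀ i, v i0 ≤ v i := by
      intro i
      rw [← hi0]
      exact Finset.inf'_le _ (Finset.mem_univ i)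
    have hlow : ∀ i, γs ≤ v i := by
      intro i
      have h2 := hΓgood i0 i1 v ρ' hv hi0min hρB hcon
      rw [hvi1, mul_one] at h2
      calc γs ≤ Γ i0 i1 := hγle i0 i1
        _ ≤ v i0 := h2
        _ ≤ v i := hi0min i
    refine ⟨ρ', v, hρ', hρB, fun i => ⟨hlow i, hv1 i⟩, ?_⟩
    intro i
    rw [← heigv i]
    unfold Lb
    rw [Finset.mul_sum, ← Finset.sum_add_distrib]
    apply Finset.sum_congr rfl
    intro f _
    rw [hbkdef]
    simp only []
    ring
  -- extract convergent subsequence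
  choose ρseq vseq hρpos hρB hvbounds heq using main
  set S : Set (ℝ × (Fin n → ℝ)) :=
    (Set.Icc 0 B) ×ˢ (Set.univ.pi fun _ : Fin n => Set.Icc γs 1) with hSdef
  have hScomp : IsCompact S := by
    apply IsCompact.prod isCompact_Icc
    exact isCompact_univ_pi (fun _ => isCompact_Icc)
  have hxmem : ∀ k, (ρseq k, vseq k) ∈ S := by
    intro k
    constructor
    · exact ⟨(hρpos k).le, hρB k⟩
    · rw [Set.mem_univ_pi]
      exact fun i => ⟨(hvbounds k i).1, (hvbounds k i).2⟩
  obtain ⟨⟨ρL, uL⟩, hmem, φ, hφ, hconv⟩ := hScomp.tendsto_subseq hxmem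
  have hρconv : Filter.Tendsto (fun k => ρseq (φ k)) Filter.atTop (nhds ρL) := by
    have h1 := (continuous_fst.tendsto (ρL, uL)).comp hconv
    exact h1
  have hvconv : ∀ i, Filter.Tendsto (fun k => vseq (φ k) i) Filter.atTop (nhds (uL i)) := by
    intro i
    have h2 := (continuous_snd.tendsto (ρL, uL)).comp hconv
    have h3 := ((continuous_apply i).tendsto uL).comp h2
    exact h3
  have huLlow : ∀ i, γs ≤ uL i := by
    intro i
    have := hmem.2
    rw [Set.mem_univ_pi] at this
    exact (this i).1
  have huLpos : ∀ i, 0 < uL i := fun i => lt_of_lt_of_le hγs (huLlow i)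
  -- limit equation
  have heqlim : ∀ i, (∑ f : Fin q → Fin n, a i f * ∏ j, uL (f j)) = ρL * uL i ^ q := by
    intro i
    have hLa : Filter.Tendsto (fun k => ∑ f : Fin q → Fin n, a i f * ∏ j, vseq (φ k) (f j))
        Filter.atTop (nhds (∑ f : Fin q → Fin n, a i f * ∏ j, uL (f j))) := by
      apply tendsto_finset_sum
      intro f _
      exact Filter.Tendsto.const_mul _ (tendsto_finset_prod _ (fun j _ => hvconv (f j)))
    have hSv : Filter.Tendsto (fun k => ∑ f : Fin q → Fin n, ∏ j, vseq (φ k) (f j))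
        Filter.atTop (nhds (∑ f : Fin q → Fin n, ∏ j, uL (f j))) := by
      apply tendsto_finset_sum
      intro f _
      exact tendsto_finset_prod _ (fun j _ => hvconv (f j))
    have hεlim : Filter.Tendsto (fun k => 1/(((φ k : ℕ):ℝ)+1)) Filter.atTop (nhds 0) := by
      have h4 := (tendsto_one_div_add_atTop_nhds_zero_nat (𝕜 := ℝ)).comp hφ.tendsto_atTop
      exact h4
    have hLHS : Filter.Tendsto (fun k => (∑ f : Fin q → Fin n, a i f * ∏ j, vseq (φ k) (f j)) +
        (1/(((φ k : ℕ):ℝ)+1)) * (∑ f : Fin q → Fin n, ∏ j, vseq (φ k) (f j)))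
        Filter.atTop (nhds ((∑ f : Fin q → Fin n, a i f * ∏ j, uL (f j)) + 0)) := by
      apply Filter.Tendsto.add hLa
      have := Filter.Tendsto.mul hεlim hSv
      rw [zero_mul] at this
      exact this
    rw [add_zero] at hLHS
    have hRHS : Filter.Tendsto (fun k => ρseq (φ k) * vseq (φ k) i ^ q)
        Filter.atTop (nhds (ρL * uL i ^ q)) :=
      Filter.Tendsto.mul hρconv (Filter.Tendsto.pow (hvconv i) q)
    have hsame : (fun k => (∑ f : Fin q → Fin n, a i f * ∏ j, vseq (φ k) (f j)) +
        (1/(((φ k : ℕ):ℝ)+1)) * (∑ f : Fin q → Fin n, ∏ j, vseq (φ k) (f j)))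
        = (fun k => ρseq (φ k) * vseq (φ k) i ^ q) := by
      funext k
      exact heq (φ k) i
    rw [hsame] at hLHS
    exact tendsto_nhds_unique hLHS hRHS
  -- positivity of the limit eigenvalue
  have hρLpos : 0 < ρL := by
    rcases lt_or_eq_of_le hmem.1.1 with h | h
    · exact h
    · exfalso
      have hρ0 : ρL = 0 := h.symm
      have h0 : (∑ f : Fin q → Fin n, a i₀ f * ∏ j, uL (f j)) = 0 := by
        rw [heqlim i₀, hρ0, zero_mul]
      have hpos : 0 < ∑ f : Fin q → Fin n, a i₀ f * ∏ j, uL (f j) := by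
        apply Finset.sum_pos'
        · exact fun f _ => mul_nonneg (ha i₀ f) (Finset.prod_nonneg (fun j _ => (huLpos (f j)).le))
        · exact ⟨f₀, Finset.mem_univ f₀,
            mul_pos (lt_of_le_of_ne (ha i₀ f₀) (Ne.symm hi₀f₀))
              (Finset.prod_pos (fun j _ => huLpos (f₀ j)))⟩
      linarith
  exact ⟨ρL, uL, hρLpos, huLpos, heqlim⟩
end rb


section eq
variable {n q : ℕ} [NeZero n]

lemma abs_term (A : Fin n → (Fin q → Fin n) → ℂ) (a : Fin n → (Fin q → Fin n) → ℝ)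
    (hAa : ∀ i f, A i f = ((a i f : ℝ) : ℂ)) (ha : ∀ i f, 0 ≤ a i f)
    (x : Fin n → ℂ) (i : Fin n) (f : Fin q → Fin n) :
    Complex.abs (A i f * ∏ k, x (f k)) = a i f * ∏ k, Complex.abs (x (f k)) := by
  rw [map_mul, hAa i f, Complex.abs_ofReal, abs_of_nonneg (ha i f), map_prod]

lemma abs_tApp_le (A : Fin n → (Fin q → Fin n) → ℂ) (a : Fin n → (Fin q → Fin n) → ℝ)
    (hAa : ∀ i f, A i f = ((a i f : ℝ) : ℂ)) (ha : ∀ i f, 0 ≤ a i f)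
    (x : Fin n → ℂ) (i : Fin n) :
    Complex.abs (∑ f : Fin q → Fin n, A i f * ∏ k, x (f k)) ≤
      ∑ f : Fin q → Fin n, a i f * ∏ k, Complex.abs (x (f k)) := by
  calc Complex.abs (∑ f : Fin q → Fin n, A i f * ∏ k, x (f k))
      ≤ ∑ f : Fin q → Fin n, Complex.abs (A i f * ∏ k, x (f k)) :=
        Complex.abs.sum_le _ _
    _ = ∑ f : Fin q → Fin n, a i f * ∏ k, Complex.abs (x (f k)) :=
        Finset.sum_congr rfl (fun f _ => abs_term A a hAa ha x i f)

lemma prod_scale (t : ℝ) (u : Fin n → ℝ) (f : Fin q → Fin n) :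
    ∏ k : Fin q, (t * u (f k)) = t ^ q * ∏ k, u (f k) := by
  rw [Finset.prod_mul_distrib, Finset.prod_const, Finset.card_univ, Fintype.card_fin]

lemma eig_bound (A : Fin n → (Fin q → Fin n) → ℂ) (a : Fin n → (Fin q → Fin n) → ℝ)
    (hAa : ∀ i f, A i f = ((a i f : ℝ) : ℂ)) (ha : ∀ i f, 0 ≤ a i f)
    (ρ0 : ℝ) (u : Fin n → ℝ) (hu : ∀ i, 0 < u i)
    (heig : ∀ i, ∑ f : Fin q → Fin n, a i f * ∏ k, u (f k) = ρ0 * u i ^ q)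
    (l : ℂ) (x : Fin n → ℂ) (hx0 : x ≠ 0)
    (hx : ∀ i, (∑ f : Fin q → Fin n, A i f * ∏ k, x (f k)) = l * x i ^ q) :
    Complex.abs l ≤ ρ0 := by
  set y : Fin n → ℝ := fun i => Complex.abs (x i) with hydef
  have hy : ∀ i, 0 ≤ y i := fun i => Complex.abs.nonneg _
  obtain ⟨i₂, hi₂⟩ : ∃ i, x i ≠ 0 := by
    by_contra hc
    push_neg at hc
    exact hx0 (funext hc)
  set t : ℝ := fsup (fun i => y i / u i) with htdef
  have ht2 : 0 < t := lt_of_lt_of_le (div_pos (Complex.abs.pos hi₂) (hu i₂))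
    (le_fsup (fun i => y i / u i) i₂)
  obtain ⟨i₁, hi₁⟩ := fsup_exists (fun i => y i / u i)
  have hyle : ∀ i, y i ≤ t * u i := fun i => by
    rw [htdef]
    have := le_fsup (fun i => y i / u i) i
    rw [div_le_iff₀ (hu i)] at this
    rw [mul_comm] at this ⊢
    exact this
  have hyt : y i₁ = t * u i₁ := by
    have : t = y i₁ / u i₁ := hi₁
    rw [this, div_mul_cancel₀ _ (ne_of_gt (hu i₁))]
  have h1 : Complex.abs l * y i₁ ^ q = Complex.abs (l * x i₁ ^ q) := by
    rw [map_mul, map_pow]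
  have h2 : Complex.abs l * y i₁ ^ q ≤ ρ0 * y i₁ ^ q := by
    rw [h1, ← hx i₁]
    calc Complex.abs (∑ f : Fin q → Fin n, A i₁ f * ∏ k, x (f k))
        ≤ ∑ f : Fin q → Fin n, a i₁ f * ∏ k, y (f k) := abs_tApp_le A a hAa ha x i₁
      _ ≤ ∑ f : Fin q → Fin n, a i₁ f * (t ^ q * ∏ k, u (f k)) := by
          apply Finset.sum_le_sum
          intro f _
          apply mul_le_mul_of_nonneg_left _ (ha i₁ f)
          rw [← prod_scale t u f]
          exact Finset.prod_le_prod (fun k _ => hy (f k)) (fun k _ => hyle (f k))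
      _ = t ^ q * ∑ f : Fin q → Fin n, a i₁ f * ∏ k, u (f k) := by
          rw [Finset.mul_sum]
          exact Finset.sum_congr rfl (fun f _ => by ring)
      _ = t ^ q * (ρ0 * u i₁ ^ q) := by rw [heig i₁]
      _ = ρ0 * y i₁ ^ q := by rw [hyt]; ring
  have hypos : 0 < y i₁ ^ q := by
    rw [hyt]
    exact pow_pos (mul_pos ht2 (hu i₁)) q
  exact le_of_mul_le_mul_right h2 hypos

lemma eqcase (hq : 0 < q) (A : Fin n → (Fin q → Fin n) → ℂ) (a : Fin n → (Fin q → Fin n) → ℝ)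
    (hAa : ∀ i f, A i f = ((a i f : ℝ) : ℂ)) (ha : ∀ i f, 0 ≤ a i f)
    (hwi : ∀ i j, Relation.ReflTransGen (ArcR a) i j)
    (ρ0 : ℝ) (hρ0 : 0 < ρ0) (u : Fin n → ℝ) (hu : ∀ i, 0 < u i)
    (heig : ∀ i, ∑ f : Fin q → Fin n, a i f * ∏ k, u (f k) = ρ0 * u i ^ q)
    (l : ℂ) (hl : Complex.abs l = ρ0) (x : Fin n → ℂ) (i₂ : Fin n) (hi₂ : x i₂ ≠ 0)
    (hx : ∀ i, (∑ f : Fin q → Fin n, A i f * ∏ k, x (f k)) = l * x i ^ q) :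
    ∃ t : ℝ, 0 < t ∧ (∀ i, Complex.abs (x i) = t * u i) ∧
      (∀ i f, a i f ≠ 0 →
        (∏ k : Fin q, x (f k)) = (∏ k : Fin q, ((Complex.abs (x (f k)) : ℝ) : ℂ)) *
          ((l * x i ^ q) / ((Complex.abs (l * x i ^ q) : ℝ) : ℂ))) := by
  classical
  set y : Fin n → ℝ := fun i => Complex.abs (x i) with hydef
  have hy : ∀ i, 0 ≤ y i := fun i => Complex.abs.nonneg _
  set t : ℝ := fsup (fun i => y i / u i) with htdef
  have ht2 : 0 < t := lt_of_lt_of_le (div_pos (Complex.abs.pos hi₂) (hu i₂))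
    (le_fsup (fun i => y i / u i) i₂)
  obtain ⟨i₁, hi₁⟩ := fsup_exists (fun i => y i / u i)
  have hyle : ∀ i, y i ≤ t * u i := fun i => by
    rw [htdef]
    have := le_fsup (fun i => y i / u i) i
    rw [div_le_iff₀ (hu i)] at this
    rw [mul_comm] at this ⊢
    exact this
  have hyt : y i₁ = t * u i₁ := by
    have : t = y i₁ / u i₁ := hi₁
    rw [this, div_mul_cancel₀ _ (ne_of_gt (hu i₁))]
  -- triangle inequality chain
  have htri : ∀ i, ρ0 * y i ^ q ≤ ∑ f : Fin q → Fin n, a i f * ∏ k, y (f k) := by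
    intro i
    have h1 : ρ0 * y i ^ q = Complex.abs (l * x i ^ q) := by
      rw [map_mul, map_pow, hl]
    rw [h1, ← hx i]
    exact abs_tApp_le A a hAa ha x i
  have hupper : ∀ i, ∑ f : Fin q → Fin n, a i f * ∏ k, y (f k) ≤
      t ^ q * (ρ0 * u i ^ q) := by
    intro i
    calc ∑ f : Fin q → Fin n, a i f * ∏ k, y (f k)
        ≤ ∑ f : Fin q → Fin n, a i f * (t ^ q * ∏ k, u (f k)) := by
          apply Finset.sum_le_sum
          intro f _
          apply mul_le_mul_of_nonneg_left _ (ha i f)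
          rw [← prod_scale t u f]
          exact Finset.prod_le_prod (fun k _ => hy (f k)) (fun k _ => hyle (f k))
      _ = t ^ q * ∑ f : Fin q → Fin n, a i f * ∏ k, u (f k) := by
          rw [Finset.mul_sum]
          exact Finset.sum_congr rfl (fun f _ => by ring)
      _ = t ^ q * (ρ0 * u i ^ q) := by rw [heig i]
  -- the set S where the ratio is attained
  set S : Set (Fin n) := {i | y i = t * u i} with hSdef
  have hSkey : ∀ i ∈ S, (∑ f : Fin q → Fin n, a i f * ∏ k, y (f k) = ρ0 * y i ^ q) ∧
      ∀ f, a i f ≠ 0 → ∀ k, f k ∈ S := by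
    intro i hiS
    have hiS' : y i = t * u i := hiS
    have hchain : ∑ f : Fin q → Fin n, a i f * ∏ k, y (f k) = ρ0 * y i ^ q := by
      have e1 : t ^ q * (ρ0 * u i ^ q) = ρ0 * y i ^ q := by rw [hiS']; ring
      have h3 := htri i
      have h4 := hupper i
      linarith
    refine ⟨hchain, ?_⟩
    -- termwise equality
    have hsum2 : ∑ f : Fin q → Fin n, a i f * ∏ k, y (f k)
        = ∑ f : Fin q → Fin n, a i f * (t ^ q * ∏ k, u (f k)) := by
      have e2 : ∑ f : Fin q → Fin n, a i f * (t ^ q * ∏ k, u (f k))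
          = t ^ q * (ρ0 * u i ^ q) := by
        rw [← heig i, Finset.mul_sum]
        exact Finset.sum_congr rfl (fun f _ => by ring)
      rw [e2, hchain, hiS']
      ring
    have hterm := (Finset.sum_eq_sum_iff_of_le (fun f _ => by
      apply mul_le_mul_of_nonneg_left _ (ha i f)
      rw [← prod_scale t u f]
      exact Finset.prod_le_prod (fun k _ => hy (f k)) (fun k _ => hyle (f k)))).mp hsum2
    intro f hf k
    have h5 : ∏ k, y (f k) = t ^ q * ∏ k, u (f k) :=
      mul_left_cancel₀ hf (hterm f (Finset.mem_univ f))
    rw [← prod_scale t u f] at h5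
    have h6 := prod_eq_of_le Finset.univ (fun k => y (f k)) (fun k => t * u (f k))
      (fun k _ => hy (f k)) (fun k _ => hyle (f k)) (fun k _ => mul_pos ht2 (hu (f k))) h5
    exact h6 k (Finset.mem_univ k)
  have hSall : ∀ i, i ∈ S := by
    intro i
    have hrtg := hwi i₁ i
    have hstart : i₁ ∈ S := hyt
    clear hi₁ hyt
    induction hrtg with
    | refl => exact hstart
    | @tail b c hrb harc ih =>
        obtain ⟨f, hf, k, hk⟩ := harc
        have := (hSkey b ih).2 f hf k
        rwa [hk] at this
  refine ⟨t, ht2, fun i => hSall i, ?_⟩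
  -- phase analysis
  intro i f haf
  have hy_pos : ∀ i', 0 < y i' := fun i' => by
    have : y i' = t * u i' := hSall i'
    rw [this]; exact mul_pos ht2 (hu i')
  have hx_ne : ∀ i', x i' ≠ 0 := fun i' => by
    intro hc
    have := hy_pos i'
    rw [hydef] at this
    simp only [hc, map_zero] at this
    exact lt_irrefl 0 this
  have habs_sum : Complex.abs (∑ f : Fin q → Fin n, A i f * ∏ k, x (f k))
      = ∑ f : Fin q → Fin n, Complex.abs (A i f * ∏ k, x (f k)) := by
    rw [hx i]
    have e3 : Complex.abs (l * x i ^ q) = ρ0 * y i ^ q := by rw [map_mul, map_pow, hl]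
    rw [e3]
    rw [← (hSkey i (hSall i)).1]
    exact Finset.sum_congr rfl (fun f _ => (abs_term A a hAa ha x i f).symm)
  have hsum_ne : (∑ f : Fin q → Fin n, A i f * ∏ k, x (f k)) ≠ 0 := by
    rw [hx i]
    apply mul_ne_zero
    · intro hc; rw [hc] at hl; simp at hl; exact absurd hl.symm (ne_of_gt hρ0)
    · exact pow_ne_zero q (hx_ne i)
  have htr := tri_eq Finset.univ (fun f : Fin q → Fin n => A i f * ∏ k, x (f k))
    habs_sum hsum_ne f (Finset.mem_univ f)
  beta_reduce at htr
  rw [hx i] at htr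
  rw [abs_term A a hAa ha x i f] at htr
  -- cancel A i f
  have hAne : A i f ≠ 0 := by
    rw [hAa i f]
    exact_mod_cast haf
  have e4 : ((a i f * ∏ k, y (f k) : ℝ) : ℂ) = A i f * ∏ k : Fin q, ((y (f k) : ℝ) : ℂ) := by
    rw [hAa i f]
    push_cast
    ring
  rw [e4] at htr
  have e5 : A i f * ∏ k, x (f k) = A i f * ((∏ k : Fin q, ((y (f k) : ℝ) : ℂ)) *
      ((l * x i ^ q) / ((Complex.abs (l * x i ^ q) : ℝ) : ℂ))) := by
    rw [htr]; ring
  exact mul_left_cancel₀ hAne e5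
end eq

section eq
variable {n q : ℕ} [NeZero n]

-- ==== modulus-one lemma for diagonal similarity ====
lemma dmod_one (hq : 0 < q) (a : Fin n → (Fin q → Fin n) → ℝ)
    (hwi : ∀ i j, Relation.ReflTransGen (ArcR a) i j)
    (d : Fin n → ℂ) (hd : ∀ i, d i ≠ 0) (hd0 : d 0 = 1)
    (w : ℂ) (hw : Complex.abs w = 1)
    (hrel : ∀ i f, a i f ≠ 0 → (∏ k : Fin q, d (f k)) = w * d i ^ q) :
    ∀ i, Complex.abs (d i) = 1 := by
  classical
  set g : Fin n → ℝ := fun i => Complex.abs (d i) with hgdef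
  have hg : ∀ i, 0 < g i := fun i => Complex.abs.pos (hd i)
  have hg0 : g 0 = 1 := by rw [hgdef]; simp [hd0]
  have hgrel : ∀ i f, a i f ≠ 0 → (∏ k : Fin q, g (f k)) = g i ^ q := by
    intro i f hf
    have := congrArg Complex.abs (hrel i f hf)
    rwa [map_prod, map_mul, map_pow, hw, one_mul] at this
  -- max propagation
  have hmax : ∀ i, g i ≤ 1 := by
    set Mx : ℝ := fsup g with hMdef
    obtain ⟨iM, hiM⟩ := fsup_exists g
    have hMle : ∀ i, g i ≤ Mx := fun i => le_fsup g i
    have hMpos : 0 < Mx := by rw [hMdef, hiM]; exact hg iM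
    have hSclosed : ∀ p r : Fin n, Relation.ReflTransGen (ArcR a) p r → g p = Mx → g r = Mx := by
      intro p r hrtg
      induction hrtg with
      | refl => exact id
      | @tail b c hrb harc ih =>
          intro hp
          obtain ⟨f, hf, k, hk⟩ := harc
          have hb : g b = Mx := ih hp
          have h1 : ∏ k : Fin q, g (f k) = ∏ _k : Fin q, Mx := by
            rw [hgrel b f hf, hb, Finset.prod_const, Finset.card_univ, Fintype.card_fin]
          have h2 := prod_eq_of_le Finset.univ (fun k => g (f k)) (fun _ => Mx)
            (fun k _ => (hg (f k)).le) (fun k _ => hMle (f k)) (fun _ _ => hMpos) h1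
          have h3 : g (f k) = Mx := h2 k (Finset.mem_univ k)
          rw [hk] at h3
          exact h3
    have h0M : g 0 = Mx := hSclosed iM 0 (hwi iM 0) hiM.symm
    intro i
    calc g i ≤ Mx := hMle i
      _ = 1 := by rw [← h0M, hg0]
  -- min propagation
  have hmin : ∀ i, 1 ≤ g i := by
    set mn : ℝ := Finset.univ.inf' Finset.univ_nonempty g with hmdef
    obtain ⟨im, _, him⟩ := Finset.exists_mem_eq_inf' (Finset.univ_nonempty) g
    have hmle : ∀ i, mn ≤ g i := fun i => Finset.inf'_le g (Finset.mem_univ i)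
    have hmpos : 0 < mn := by rw [hmdef, him]; exact hg im
    have hSclosed : ∀ p r : Fin n, Relation.ReflTransGen (ArcR a) p r → g p = mn → g r = mn := by
      intro p r hrtg
      induction hrtg with
      | refl => exact id
      | @tail b c hrb harc ih =>
          intro hp
          obtain ⟨f, hf, k, hk⟩ := harc
          have hb : g b = mn := ih hp
          have h1 : ∏ _k : Fin q, mn = ∏ k : Fin q, g (f k) := by
            rw [hgrel b f hf, hb, Finset.prod_const, Finset.card_univ, Fintype.card_fin]
          have h2 := prod_eq_of_le Finset.univ (fun _ => mn) (fun k => g (f k))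
            (fun _ _ => hmpos.le) (fun k _ => hmle (f k)) (fun k _ => hg (f k)) h1
          have h3 : mn = g (f k) := h2 k (Finset.mem_univ k)
          rw [hk] at h3
          exact h3.symm
    have h0m : g 0 = mn := hSclosed im 0 (hwi im 0) (by rw [hmdef]; exact him.symm)
    intro i
    calc (1:ℝ) = mn := by rw [← h0m, hg0]
      _ ≤ g i := hmle i
  exact fun i => le_antisymm (hmax i) (hmin i)

end eq

-- ==================== MAIN THEOREM ====================

end PFAux

/-- For each `j`, the map `x ↦ D_x = diag(xᵢ/|xᵢ|)` is a bijection between the set of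
eigenvectors of `A` for `λ_j = ρ(A)e^{2πij/ℓ}` normalized by `x₁ = 1` and `𝔇^{(j)}(A)`. -/
theorem stmt8 {n m ℓ : ℕ} [NeZero n] (hm : 2 ≤ m) (hl : 1 ≤ ℓ)
    (A : Tensor (Fin n) m) (hA : Nonneg A) (hwi : WeaklyIrreducible A)
    (hsym : SpectralSymm A ℓ) (j : ℕ) (hj : j ≤ ℓ - 1) :
    Set.BijOn (fun (x : Fin n → ℂ) (i : Fin n) => x i / (‖x i‖ : ℂ))
      {x : Fin n → ℂ | x 0 = 1 ∧ ∀ i, tApp A x i =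
        (((specRad A : ℝ) : ℂ) * Complex.exp ((2 * Real.pi * j / ℓ : ℝ) * Complex.I))
          * x i ^ (m - 1)}
      (Dgj A ℓ j) := by
  classical
  have hq : 0 < m - 1 := by omega
  have haA : ∀ i f, 0 ≤ (A i f).re ∧ A i f = (((A i f).re : ℝ) : ℂ) := by
    intro i f
    obtain ⟨r, hr0, hr⟩ := hA i f
    rw [hr]
    simp [hr0]
  set a : Fin n → (Fin (m-1) → Fin n) → ℝ := fun i f => (A i f).re with hadef
  have ha : ∀ i f, 0 ≤ a i f := fun i f => (haA i f).1
  have hAa : ∀ i f, A i f = ((a i f : ℝ) : ℂ) := fun i f => (haA i f).2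
  set θ : ℝ := 2 * Real.pi * j / ℓ with hθdef
  have hAarc : ∀ p r : Fin n, Arc A p r ↔ ArcR a p r := by
    intro p r
    constructor
    · rintro ⟨f, hf, k, hk⟩
      refine ⟨f, ?_, k, hk⟩
      rw [hAa p f] at hf
      exact_mod_cast hf
    · rintro ⟨f, hf, k, hk⟩
      refine ⟨f, ?_, k, hk⟩
      rw [hAa p f]
      exact_mod_cast hf
  have hwiR : ∀ i j', Relation.ReflTransGen (ArcR a) i j' := by
    intro i j'
    exact Relation.ReflTransGen.mono (fun p r hp => (hAarc p r).mp hp) _ _ (hwi i j')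
  by_cases hz : ∀ i f, a i f = 0
  · -- ================= degenerate case A = 0 =================
    have hA0 : ∀ i f, A i f = 0 := fun i f => by rw [hAa i f, hz i f]; norm_num
    have hsub : ∀ i : Fin n, i = 0 := by
      have key : ∀ p r : Fin n, Relation.ReflTransGen (Arc A) p r → p = r := by
        intro p r h
        induction h with
        | refl => rfl
        | @tail b c hrb harc ih => obtain ⟨f, hf, _⟩ := harc; exact absurd (hA0 b f) hf
      exact fun i => (key 0 i (hwi 0 i)).symm
    have htApp0 : ∀ (x : Fin n → ℂ) i, tApp A x i = 0 := by
      intro x i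
      unfold tApp
      rw [Finset.sum_eq_zero]
      intro f _
      rw [hA0 i f, zero_mul]
    have hspec0 : specRad A = 0 := by
      have hEig : Eigenvalues A = {0} := by
        ext l
        constructor
        · rintro ⟨x, hx0, hxe⟩
          obtain ⟨i, hi⟩ : ∃ i, x i ≠ 0 := by
            by_contra hc
            push_neg at hc
            exact hx0 (funext hc)
          have h1 := hxe i
          rw [htApp0] at h1
          have h2 := mul_eq_zero.mp h1.symm
          rcases h2 with h2 | h2
          · exact h2
          · exact absurd h2 (pow_ne_zero _ hi)
        · intro hl0
          rw [Set.mem_singleton_iff] at hl0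
          subst hl0
          refine ⟨fun _ => 1, ?_, fun i => by rw [htApp0, zero_mul]⟩
          intro hc
          have := congrFun hc 0
          simp at this
      unfold specRad
      rw [hEig, Set.image_singleton]
      simp
    refine ⟨?_, ?_, ?_⟩
    · -- MapsTo
      intro x hx
      obtain ⟨hx1, _⟩ := hx
      refine ⟨?_, ?_, ?_⟩
      · intro i
        simp only []
        rw [hsub i, hx1]
        norm_num
      · simp only []
        rw [hx1]
        norm_num
      · intro i f
        rw [hA0 i f]
        unfold diagConj
        rw [hA0 i f]
        ring
    · -- InjOn
      intro x hx x' hx' _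
      funext i
      rw [hsub i, hx.1, hx'.1]
    · -- SurjOn
      intro d hd
      refine ⟨fun _ => 1, ⟨rfl, ?_⟩, ?_⟩
      · intro i
        rw [htApp0, hspec0]
        norm_num
      · funext i
        simp only []
        rw [hsub i, hd.2.1]
        norm_num
  · -- ================= main case =================
    push_neg at hz
    obtain ⟨ρ0, u, hρ0, hu, heig⟩ := perronX hq a ha hwiR (by
      obtain ⟨i, f, hif⟩ := hz; exact ⟨i, f, hif⟩)
    -- specRad = ρ0
    have hEigmem : (ρ0 : ℂ) ∈ Eigenvalues A := by
      refine ⟨fun i => ((u i : ℝ) : ℂ), ?_, ?_⟩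
      · intro hc
        have := congrFun hc 0
        simp only [Pi.zero_apply, Complex.ofReal_eq_zero] at this
        exact (ne_of_gt (hu 0)) this
      · intro i
        unfold tApp
        have e1 : ∀ f : Fin (m-1) → Fin n, A i f * ∏ k, ((u (f k) : ℝ) : ℂ)
            = ((a i f * ∏ k, u (f k) : ℝ) : ℂ) := by
          intro f
          rw [hAa i f]
          push_cast
          ring
        rw [Finset.sum_congr rfl (fun f _ => e1 f), ← Complex.ofReal_sum, heig i]
        push_cast
        ring
    have hub : ∀ z ∈ Complex.abs '' Eigenvalues A, z ≤ ρ0 := by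
      rintro z ⟨l, ⟨x, hx0, hxe⟩, rfl⟩
      refine eig_bound A a hAa ha ρ0 u hu heig l x hx0 ?_
      intro i
      have := hxe i
      unfold tApp at this
      exact this
    have hspec : specRad A = ρ0 := by
      unfold specRad
      apply le_antisymm
      · apply csSup_le
        · exact ⟨Complex.abs (ρ0 : ℂ), Set.mem_image_of_mem _ hEigmem⟩
        · exact hub
      · apply le_csSup ⟨ρ0, fun z hz' => hub z hz'⟩
        refine ⟨(ρ0 : ℂ), hEigmem, ?_⟩
        rw [Complex.abs_ofReal, abs_of_nonneg hρ0.le]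
    -- the eigenvalue l
    set l : ℂ := ((ρ0 : ℝ) : ℂ) * Complex.exp ((θ:ℝ) * Complex.I) with hldef
    have hlabs : Complex.abs l = ρ0 := by
      rw [hldef, map_mul, Complex.abs_ofReal, abs_of_nonneg hρ0.le,
        Complex.abs_exp_ofReal_mul_I, mul_one]
    have hlne : l ≠ 0 := by
      rw [hldef]
      exact mul_ne_zero (by exact_mod_cast ne_of_gt hρ0) (Complex.exp_ne_zero _)
    -- rephrase membership in the LHS set
    have hmemiff : ∀ x : Fin n → ℂ,
        (x ∈ {x : Fin n → ℂ | x 0 = 1 ∧ ∀ i, tApp A x i =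
          (((specRad A : ℝ) : ℂ) * Complex.exp ((2 * Real.pi * j / ℓ : ℝ) * Complex.I))
            * x i ^ (m - 1)}) ↔
        (x 0 = 1 ∧ ∀ i, (∑ f : Fin (m-1) → Fin n, A i f * ∏ k, x (f k)) = l * x i ^ (m-1)) := by
      intro x
      constructor
      · rintro ⟨h1, h2⟩
        refine ⟨h1, fun i => ?_⟩
        have := h2 i
        unfold tApp at this
        rw [hspec] at this
        exact this
      · rintro ⟨h1, h2⟩
        refine ⟨h1, fun i => ?_⟩
        unfold tApp
        rw [hspec]
        exact h2 i
    -- structure of eigenvectors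
    have hstruct : ∀ x : Fin n → ℂ, x 0 = 1 →
        (∀ i, (∑ f : Fin (m-1) → Fin n, A i f * ∏ k, x (f k)) = l * x i ^ (m-1)) →
        ∃ t : ℝ, 0 < t ∧ (∀ i, Complex.abs (x i) = t * u i) ∧ t * u 0 = 1 ∧
          (∀ i f, a i f ≠ 0 →
            (∏ k : Fin (m-1), x (f k)) = (∏ k : Fin (m-1), ((Complex.abs (x (f k)) : ℝ) : ℂ)) *
              ((l * x i ^ (m-1)) / ((Complex.abs (l * x i ^ (m-1)) : ℝ) : ℂ))) := by
      intro x hx1 hxe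
      obtain ⟨t, ht, hyeq, hphase⟩ := eqcase hq A a hAa ha hwiR ρ0 hρ0 u hu heig l hlabs x 0
        (by rw [hx1]; exact one_ne_zero) hxe
      refine ⟨t, ht, hyeq, ?_, hphase⟩
      rw [← hyeq 0, hx1]
      simp
    refine ⟨?_, ?_, ?_⟩
    · -- ========== MapsTo ==========
      intro x hx
      rw [hmemiff x] at hx
      obtain ⟨hx1, hxe⟩ := hx
      obtain ⟨t, ht, hyeq, _, hphase⟩ := hstruct x hx1 hxe
      have hxne : ∀ i, x i ≠ 0 := by
        intro i hc
        have h1 : (0:ℝ) < t * u i := mul_pos ht (hu i)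
        rw [← hyeq i, hc] at h1
        simp at h1
      have hyneC : ∀ i, ((Complex.abs (x i) : ℝ) : ℂ) ≠ 0 := fun i =>
        Complex.ofReal_ne_zero.mpr (Complex.abs.ne_zero (hxne i))
      refine ⟨?_, ?_, ?_⟩
      · intro i
        exact div_ne_zero (hxne i) (hyneC i)
      · simp only []
        rw [hx1]
        norm_num
      · intro i f
        simp only []
        unfold diagConj
        by_cases haf : a i f = 0
        · rw [hAa i f, haf]
          push_cast
          ring
        · -- phase computation
          have hdine : x i / ((Complex.abs (x i) : ℝ) : ℂ) ≠ 0 :=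
            div_ne_zero (hxne i) (hyneC i)
          have hprodd : (∏ k : Fin (m-1), (x (f k) / ((Complex.abs (x (f k)) : ℝ) : ℂ)))
              = Complex.exp ((θ:ℝ) * Complex.I) * (x i / ((Complex.abs (x i) : ℝ) : ℂ)) ^ (m-1) := by
            have hρne : ((ρ0 : ℝ) : ℂ) ≠ 0 := by exact_mod_cast ne_of_gt hρ0
            have hprodyne : (∏ k : Fin (m-1), ((Complex.abs (x (f k)) : ℝ) : ℂ)) ≠ 0 :=
              Finset.prod_ne_zero_iff.mpr (fun k _ => hyneC (f k))
            have habsσ : ((Complex.abs (l * x i ^ (m-1)) : ℝ) : ℂ)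
                = ((ρ0 : ℝ) : ℂ) * ((Complex.abs (x i) : ℝ) : ℂ) ^ (m-1) := by
              rw [map_mul, map_pow, hlabs]
              push_cast
              ring
            rw [Finset.prod_div_distrib, hphase i f haf, mul_div_cancel_left₀ _ hprodyne]
            rw [habsσ, hldef, div_pow, mul_div_assoc']
            rw [div_eq_div_iff (mul_ne_zero hρne (pow_ne_zero _ (hyneC i)))
              (pow_ne_zero _ (hyneC i))]
            ring
          simp only [← Complex.abs_apply]
          rw [hprodd]
          have hee : Complex.exp (-(θ:ℝ) * Complex.I) * Complex.exp ((θ:ℝ) * Complex.I) = 1 := by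
            rw [← Complex.exp_add]
            have e0 : (-(θ:ℝ) * Complex.I + (θ:ℝ) * Complex.I : ℂ) = 0 := by
              push_cast
              ring
            rw [e0, Complex.exp_zero]
          have hdd : (x i / ((Complex.abs (x i) : ℝ) : ℂ))⁻¹ ^ (m-1) *
              (x i / ((Complex.abs (x i) : ℝ) : ℂ)) ^ (m-1) = 1 := by
            rw [← mul_pow, inv_mul_cancel₀ hdine, one_pow]
          calc A i f = 1 * 1 * A i f := by ring
            _ = (Complex.exp (-(θ:ℝ) * Complex.I) * Complex.exp ((θ:ℝ) * Complex.I)) *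
                ((x i / ((Complex.abs (x i) : ℝ) : ℂ))⁻¹ ^ (m-1) *
                  (x i / ((Complex.abs (x i) : ℝ) : ℂ)) ^ (m-1)) * A i f := by rw [hee, hdd]
            _ = Complex.exp (-(θ:ℝ) * Complex.I) *
                ((x i / ((Complex.abs (x i) : ℝ) : ℂ))⁻¹ ^ (m-1) * A i f *
                  (Complex.exp ((θ:ℝ) * Complex.I) *
                    (x i / ((Complex.abs (x i) : ℝ) : ℂ)) ^ (m-1))) := by ring
    · -- ========== InjOn ==========
      intro x hx x' hx' hfeq
      rw [hmemiff x] at hx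
      rw [hmemiff x'] at hx'
      obtain ⟨t, ht, hyeq, ht1, _⟩ := hstruct x hx.1 hx.2
      obtain ⟨t', ht', hyeq', ht1', _⟩ := hstruct x' hx'.1 hx'.2
      have htt : t = t' := by
        have hu0 := hu 0
        have : t * u 0 = t' * u 0 := by rw [ht1, ht1']
        exact mul_right_cancel₀ (ne_of_gt hu0) this
      have hxne : ∀ i, x i ≠ 0 := by
        intro i hc
        have h1 : (0:ℝ) < t * u i := mul_pos ht (hu i)
        rw [← hyeq i, hc] at h1
        simp at h1
      have hx'ne : ∀ i, x' i ≠ 0 := by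
        intro i hc
        have h1 : (0:ℝ) < t' * u i := mul_pos ht' (hu i)
        rw [← hyeq' i, hc] at h1
        simp at h1
      funext i
      have h2 := congrFun hfeq i
      simp only [] at h2
      simp only [← Complex.abs_apply] at h2
      have habseq : Complex.abs (x i) = Complex.abs (x' i) := by
        rw [hyeq i, hyeq' i, htt]
      have e1 : x i = (x i / ((Complex.abs (x i) : ℝ) : ℂ)) * ((Complex.abs (x i) : ℝ) : ℂ) := by
        rw [div_mul_cancel₀]
        exact Complex.ofReal_ne_zero.mpr (Complex.abs.ne_zero (hxne i))
      rw [e1, h2, habseq, div_mul_cancel₀]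
      exact Complex.ofReal_ne_zero.mpr (Complex.abs.ne_zero (hx'ne i))
    · -- ========== SurjOn ==========
      intro d hd
      obtain ⟨hdne, hd0, hdrel⟩ := hd
      -- the multiplicative relation
      have hrel : ∀ i f, a i f ≠ 0 →
          (∏ k : Fin (m-1), d (f k)) = Complex.exp ((θ:ℝ) * Complex.I) * d i ^ (m-1) := by
        intro i f haf
        have hAne : A i f ≠ 0 := by
          rw [hAa i f]
          exact_mod_cast haf
        have h1 := hdrel i f
        unfold diagConj at h1
        have h2 : A i f * (Complex.exp (-(θ:ℝ) * Complex.I) * (d i)⁻¹ ^ (m-1) *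
            ∏ k, d (f k)) = A i f * 1 := by
          rw [mul_one]
          calc A i f * (Complex.exp (-(θ:ℝ) * Complex.I) * (d i)⁻¹ ^ (m-1) * ∏ k, d (f k))
              = Complex.exp (-(θ:ℝ) * Complex.I) * ((d i)⁻¹ ^ (m-1) * A i f * ∏ k, d (f k)) := by
                ring
            _ = A i f := h1.symm
        have h3 : Complex.exp (-(θ:ℝ) * Complex.I) * (d i)⁻¹ ^ (m-1) * ∏ k, d (f k) = 1 :=
          mul_left_cancel₀ hAne h2
        have hee : Complex.exp (-(θ:ℝ) * Complex.I) * Complex.exp ((θ:ℝ) * Complex.I) = 1 := by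
          rw [← Complex.exp_add]
          have e0 : (-(θ:ℝ) * Complex.I + (θ:ℝ) * Complex.I : ℂ) = 0 := by push_cast; ring
          rw [e0, Complex.exp_zero]
        have hdd : (d i)⁻¹ ^ (m-1) * d i ^ (m-1) = 1 := by
          rw [← mul_pow, inv_mul_cancel₀ (hdne i), one_pow]
        calc ∏ k : Fin (m-1), d (f k)
            = (Complex.exp (-(θ:ℝ) * Complex.I) * (d i)⁻¹ ^ (m-1) * ∏ k, d (f k)) *
              (Complex.exp ((θ:ℝ) * Complex.I) * d i ^ (m-1)) := by
              calc ∏ k : Fin (m-1), d (f k)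
                  = (Complex.exp (-(θ:ℝ) * Complex.I) * Complex.exp ((θ:ℝ) * Complex.I)) *
                    ((d i)⁻¹ ^ (m-1) * d i ^ (m-1)) * ∏ k, d (f k) := by rw [hee, hdd]; ring
                _ = _ := by ring
          _ = 1 * (Complex.exp ((θ:ℝ) * Complex.I) * d i ^ (m-1)) := by rw [h3]
          _ = Complex.exp ((θ:ℝ) * Complex.I) * d i ^ (m-1) := one_mul _
      -- |d| = 1
      have hdabs : ∀ i, Complex.abs (d i) = 1 :=
        dmod_one hq a hwiR d hdne hd0 (Complex.exp ((θ:ℝ) * Complex.I))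
          (Complex.abs_exp_ofReal_mul_I θ) hrel
      -- the eigenvector
      have hu0 : (0:ℝ) < u 0 := hu 0
      set x : Fin n → ℂ := fun i => d i * (((u i / u 0 : ℝ)) : ℂ) with hxdef
      have hx1 : x 0 = 1 := by
        rw [hxdef]
        simp only []
        rw [div_self (ne_of_gt hu0), hd0]
        norm_num
      have hxe : ∀ i, (∑ f : Fin (m-1) → Fin n, A i f * ∏ k, x (f k)) = l * x i ^ (m-1) := by
        intro i
        have hterm : ∀ f : Fin (m-1) → Fin n,
            A i f * ∏ k, x (f k) = Complex.exp ((θ:ℝ) * Complex.I) * d i ^ (m-1) *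
              ((a i f * ∏ k, (u (f k) / u 0) : ℝ) : ℂ) := by
          intro f
          rw [hxdef]
          simp only []
          rw [Finset.prod_mul_distrib]
          by_cases haf : a i f = 0
          · rw [hAa i f, haf]
            push_cast
            ring
          · rw [hrel i f haf]
            rw [hAa i f]
            push_cast
            ring
        rw [Finset.sum_congr rfl (fun f _ => hterm f), ← Finset.mul_sum, ← Complex.ofReal_sum]
        have hsum : ∑ f : Fin (m-1) → Fin n, (a i f * ∏ k, (u (f k) / u 0))
            = ρ0 * (u i / u 0) ^ (m-1) := by
          have e2 : ∀ f : Fin (m-1) → Fin n, a i f * ∏ k, (u (f k) / u 0)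
              = (u 0 ^ (m-1))⁻¹ * (a i f * ∏ k, u (f k)) := by
            intro f
            rw [Finset.prod_div_distrib, Finset.prod_const, Finset.card_univ, Fintype.card_fin]
            field_simp
          rw [Finset.sum_congr rfl (fun f _ => e2 f), ← Finset.mul_sum, heig i, div_pow]
          field_simp
        rw [hsum, hldef, hxdef]
        push_cast
        ring
      refine ⟨x, (hmemiff x).mpr ⟨hx1, hxe⟩, ?_⟩
      funext i
      simp only []
      have habs : Complex.abs (x i) = u i / u 0 := by
        rw [hxdef]
        simp only []
        rw [map_mul, hdabs i, one_mul, Complex.abs_ofReal,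
          abs_of_pos (div_pos (hu i) hu0)]
      rw [← Complex.abs_apply, habs, hxdef]
      simp only []
      rw [mul_div_assoc]
      rw [div_self (Complex.ofReal_ne_zero.mpr (ne_of_gt (div_pos (hu i) hu0)))]
      rw [mul_one]


end PaperTensor
end

section
/- Let A be a nonnegative irreducible tensor of order m and dimension n, and suppose the solid graph G^s(A) is weakly connected (connected when arc directions are ignored). If x is an eigenvector of A corresponding to ρ(A) and D_x = diag(x₁/|x₁|, …, x_n/|x_n|), then x^{[m-1]} = e^{iθ} |x|^{[m-1]} for some real θ, i.e. D_x^{m-1} = e^{iθ} I. -/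
open scoped BigOperators

namespace PaperTensor

variable {ι : Type} [Fintype ι] {m : ℕ}

section PFAux

open Finset Filter Topology

variable {n m : ℕ}

/-- Real entries of the tensor. -/
noncomputable def rA (A : Tensor (Fin n) m) (i : Fin n) (f : Fin (m - 1) → Fin n) : ℝ :=
  (A i f).re

/-- Real application of the tensor to a real vector. -/
noncomputable def rApp (A : Tensor (Fin n) m) (z : Fin n → ℝ) (i : Fin n) : ℝ :=
  ∑ f : Fin (m - 1) → Fin n, rA A i f * ∏ j, z (f j)

variable {A : Tensor (Fin n) m}

lemma rA_nonneg (hA : Nonneg A) (i : Fin n) (f : Fin (m - 1) → Fin n) : 0 ≤ rA A i f := by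
  obtain ⟨r, hr, he⟩ := hA i f
  simp [rA, he, hr]

lemma A_eq_rA (hA : Nonneg A) (i : Fin n) (f : Fin (m - 1) → Fin n) :
    A i f = ((rA A i f : ℝ) : ℂ) := by
  obtain ⟨r, hr, he⟩ := hA i f
  simp [rA, he]

lemma rA_pos_iff (hA : Nonneg A) (i : Fin n) (f : Fin (m - 1) → Fin n) :
    A i f ≠ 0 ↔ 0 < rA A i f := by
  rw [A_eq_rA hA i f]
  simp only [ne_eq, Complex.ofReal_eq_zero]
  exact ⟨fun h => (rA_nonneg hA i f).lt_of_ne' h, fun h => h.ne'⟩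

lemma rApp_nonneg (hA : Nonneg A) {z : Fin n → ℝ} (hz : ∀ i, 0 ≤ z i) (i : Fin n) :
    0 ≤ rApp A z i :=
  Finset.sum_nonneg fun f _ => mul_nonneg (rA_nonneg hA i f)
    (Finset.prod_nonneg fun j _ => hz (f j))

lemma rApp_mono (hA : Nonneg A) {z z' : Fin n → ℝ} (hz : ∀ i, 0 ≤ z i)
    (h : ∀ i, z i ≤ z' i) (i : Fin n) : rApp A z i ≤ rApp A z' i :=
  Finset.sum_le_sum fun f _ => mul_le_mul_of_nonneg_left
    (Finset.prod_le_prod (fun j _ => hz (f j)) (fun j _ => h (f j))) (rA_nonneg hA i f)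

lemma rApp_smul (A : Tensor (Fin n) m) (c : ℝ) (z : Fin n → ℝ) (i : Fin n) :
    rApp A (fun j => c * z j) i = c ^ (m - 1) * rApp A z i := by
  unfold rApp
  rw [Finset.mul_sum]
  refine Finset.sum_congr rfl fun f _ => ?_
  rw [Finset.prod_mul_distrib, Finset.prod_const, Finset.card_univ, Fintype.card_fin]
  ring

lemma continuous_rApp (A : Tensor (Fin n) m) (i : Fin n) :
    Continuous fun z : Fin n → ℝ => rApp A z i := by
  refine continuous_finset_sum _ fun f _ => continuous_const.mul ?_
  exact continuous_finset_prod _ fun j _ => continuous_apply (f j)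

lemma abs_term_s12 (hA : Nonneg A) (x : Fin n → ℂ) (i : Fin n) (f : Fin (m - 1) → Fin n) :
    ‖A i f * ∏ j, x (f j)‖ = rA A i f * ∏ j, ‖x (f j)‖ := by
  rw [norm_mul, norm_prod, A_eq_rA hA, Complex.norm_real, Real.norm_eq_abs, abs_of_nonneg (rA_nonneg hA i f)]

lemma abs_tApp_le_s12 (hA : Nonneg A) (x : Fin n → ℂ) (i : Fin n) :
    ‖tApp A x i‖ ≤ rApp A (fun j => ‖x j‖) i := by
  refine le_trans (norm_sum_le _ _) (le_of_eq ?_)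
  exact Finset.sum_congr rfl fun f _ => abs_term_s12 hA x i f

lemma tApp_ofReal (hA : Nonneg A) (z : Fin n → ℝ) (i : Fin n) :
    tApp A (fun j => ((z j : ℝ) : ℂ)) i = ((rApp A z i : ℝ) : ℂ) := by
  unfold tApp rApp
  push_cast
  exact Finset.sum_congr rfl fun f _ => by rw [A_eq_rA hA]

/-- The Collatz–Wielandt set. -/
def TSet (A : Tensor (Fin n) m) : Set ℝ :=
  {t | ∃ z ∈ stdSimplex ℝ (Fin n), ∀ i, t * z i ^ (m - 1) ≤ rApp A z i}

lemma boost_aux (hm : 2 ≤ m) (hA : Nonneg A) (hirr : Irred A) (t : ℝ) :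
    ∀ k : ℕ, ∀ z : Fin n → ℝ,
      (Finset.univ.filter fun i => ¬ t * z i ^ (m - 1) < rApp A z i).card ≤ k →
      (∀ i, 0 ≤ z i) → (∀ i, t * z i ^ (m - 1) ≤ rApp A z i) →
      (∃ i, t * z i ^ (m - 1) < rApp A z i) →
      ∃ z' : Fin n → ℝ, (∀ i, 0 ≤ z' i) ∧ ∀ i, t * z' i ^ (m - 1) < rApp A z' i := by
  classical
  intro k
  induction k with
  | zero =>
    intro z hcard hz0 _ _
    have h0 : (Finset.univ.filter fun i => ¬ t * z i ^ (m - 1) < rApp A z i) = ∅ :=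
      Finset.card_eq_zero.mp (Nat.le_zero.mp hcard)
    rw [Finset.filter_eq_empty_iff] at h0
    exact ⟨z, hz0, fun i => not_not.mp (h0 (Finset.mem_univ i))⟩
  | succ k ih =>
    intro z hcard hz0 hle hstrict
    by_cases hall : ∀ i, t * z i ^ (m - 1) < rApp A z i
    · exact ⟨z, hz0, hall⟩
    -- B : set of "bad" indices (equality holds)
    set B : Finset (Fin n) :=
      Finset.univ.filter (fun i => ¬ t * z i ^ (m - 1) < rApp A z i) with hB
    have hmemB : ∀ i, i ∈ B ↔ ¬ t * z i ^ (m - 1) < rApp A z i := by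
      intro i; simp [hB]
    have hBne : ((B : Set (Fin n))).Nonempty := by
      push_neg at hall
      obtain ⟨i, hi⟩ := hall
      exact ⟨i, (hmemB i).mpr (not_lt.mpr hi)⟩
    obtain ⟨iG, hiG⟩ := hstrict
    have hBneq : (B : Set (Fin n)) ≠ Set.univ := by
      intro hEq
      have : iG ∈ B := by rw [← Finset.mem_coe, hEq]; trivial
      exact ((hmemB iG).mp this) hiG
    -- irreducibility gives an escape from B
    have hkey : ∃ i₀ ∈ (B : Set (Fin n)), ∃ f₀ : Fin (m - 1) → Fin n,
        (∀ j, f₀ j ∉ (B : Set (Fin n))) ∧ A i₀ f₀ ≠ 0 := by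
      by_contra hcon
      push_neg at hcon
      exact hirr ⟨(B : Set (Fin n)), hBne, hBneq, hcon⟩
    obtain ⟨i₀, hi₀B, f₀, hf₀, haf₀⟩ := hkey
    have hi₀B' : i₀ ∈ B := Finset.mem_coe.mp hi₀B
    have hf₀G : ∀ j, t * z (f₀ j) ^ (m - 1) < rApp A z (f₀ j) := by
      intro j
      have := hf₀ j
      rw [Finset.mem_coe, hmemB] at this
      exact not_not.mp this
    have hf₀B : ∀ j, f₀ j ∉ B := fun j => fun h => hf₀ j (Finset.mem_coe.mpr h)
    -- choose ε
    have hev : ∀ᶠ ε in 𝓝[>] (0 : ℝ),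
        ∀ j, j ∉ B → t * (z j + ε) ^ (m - 1) < rApp A z j := by
      rw [Filter.eventually_all]
      intro j
      by_cases hj : j ∈ B
      · exact Filter.Eventually.of_forall fun ε h => absurd hj h
      · have hjG : t * z j ^ (m - 1) < rApp A z j := not_not.mp ((hmemB j).not.mp hj)
        have hcont : Filter.Tendsto (fun ε : ℝ => t * (z j + ε) ^ (m - 1)) (𝓝[>] 0)
            (𝓝 (t * (z j + 0) ^ (m - 1))) := by
          refine Filter.Tendsto.mono_left ?_ nhdsWithin_le_nhds
          exact (continuous_const.mul ((continuous_const.add continuous_id).pow _)).tendsto 0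
        rw [add_zero] at hcont
        exact (hcont.eventually_lt_const hjG).mono fun ε h _ => h
    obtain ⟨ε, hεG, hεpos⟩ := (hev.and eventually_mem_nhdsWithin).exists
    rw [Set.mem_Ioi] at hεpos
    -- the perturbed vector
    set z' : Fin n → ℝ := fun j => z j + if j ∈ B then 0 else ε with hz'
    have hz'0 : ∀ j, 0 ≤ z' j := by
      intro j
      have : (0:ℝ) ≤ if j ∈ B then 0 else ε := by
        split_ifs
        · exact le_rfl
        · exact hεpos.le
      exact add_nonneg (hz0 j) this
    have hzz' : ∀ j, z j ≤ z' j := by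
      intro j
      refine le_add_of_nonneg_right ?_
      split_ifs
      · exact le_rfl
      · exact hεpos.le
    have hz'B : ∀ j, j ∈ B → z' j = z j := by
      intro j hj; simp [hz', if_pos hj]
    have hz'nB : ∀ j, j ∉ B → z' j = z j + ε := by
      intro j hj; simp [hz', if_neg hj]
    have hR : ∀ i, rApp A z i ≤ rApp A z' i := rApp_mono hA hz0 hzz'
    -- old good indices stay good
    have hold : ∀ j, j ∉ B → t * z' j ^ (m - 1) < rApp A z' j := by
      intro j hj
      rw [hz'nB j hj]
      exact lt_of_lt_of_le (hεG j hj) (hR j)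
    -- i₀ becomes good
    have hFinne : (Finset.univ : Finset (Fin (m - 1))).Nonempty :=
      ⟨⟨0, by omega⟩, Finset.mem_univ _⟩
    have hnew : t * z' i₀ ^ (m - 1) < rApp A z' i₀ := by
      rw [hz'B i₀ hi₀B']
      refine lt_of_le_of_lt (hle i₀) ?_
      unfold rApp
      refine Finset.sum_lt_sum (fun f _ => mul_le_mul_of_nonneg_left
        (Finset.prod_le_prod (fun j _ => hz0 (f j)) (fun j _ => hzz' (f j)))
        (rA_nonneg hA i₀ f)) ⟨f₀, Finset.mem_univ _, ?_⟩
      refine mul_lt_mul_of_pos_left ?_ ((rA_pos_iff hA i₀ f₀).mp haf₀)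
      have hzf : ∀ j, z' (f₀ j) = z (f₀ j) + ε := fun j => hz'nB _ (hf₀B j)
      by_cases hpos : ∀ j : Fin (m - 1), 0 < z (f₀ j)
      · refine Finset.prod_lt_prod_of_nonempty ?_ ?_ hFinne
        · exact fun j _ => hpos j
        · intro j _
          rw [hzf j]
          exact lt_add_of_pos_right _ hεpos
      · push_neg at hpos
        obtain ⟨j₁, hj₁⟩ := hpos
        have hzj₁ : z (f₀ j₁) = 0 := le_antisymm hj₁ (hz0 _)
        have h0 : ∏ j, z (f₀ j) = 0 := Finset.prod_eq_zero (Finset.mem_univ j₁) hzj₁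
        rw [h0]
        refine Finset.prod_pos fun j _ => ?_
        rw [hzf j]
        exact add_pos_of_nonneg_of_pos (hz0 _) hεpos
    -- inequalities hold everywhere for z'
    have hle' : ∀ i, t * z' i ^ (m - 1) ≤ rApp A z' i := by
      intro i
      by_cases hi : i ∈ B
      · rw [hz'B i hi]
        exact (hle i).trans (hR i)
      · exact (hold i hi).le
    -- the new bad set is smaller
    have hcard' :
        (Finset.univ.filter fun i => ¬ t * z' i ^ (m - 1) < rApp A z' i).card ≤ k := by
      have hsub : (Finset.univ.filter fun i => ¬ t * z' i ^ (m - 1) < rApp A z' i)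
          ⊆ B.erase i₀ := by
        intro j hj
        rw [Finset.mem_filter] at hj
        refine Finset.mem_erase.mpr ⟨?_, ?_⟩
        · rintro rfl
          exact hj.2 hnew
        · by_contra hjB
          exact hj.2 (hold j hjB)
      have hlt : (Finset.univ.filter fun i => ¬ t * z' i ^ (m - 1) < rApp A z' i).card
          < k + 1 :=
        calc (Finset.univ.filter fun i => ¬ t * z' i ^ (m - 1) < rApp A z' i).card
            ≤ (B.erase i₀).card := Finset.card_le_card hsub
          _ < B.card := Finset.card_erase_lt_of_mem hi₀B'
          _ ≤ k + 1 := hcard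
      omega
    exact ih z' hcard' hz'0 hle' ⟨i₀, hnew⟩

lemma boost (hm : 2 ≤ m) (hA : Nonneg A) (hirr : Irred A) {t : ℝ} {z : Fin n → ℝ}
    (hz0 : ∀ i, 0 ≤ z i) (hle : ∀ i, t * z i ^ (m - 1) ≤ rApp A z i)
    (hstrict : ∃ i, t * z i ^ (m - 1) < rApp A z i) :
    ∃ z' : Fin n → ℝ, (∀ i, 0 ≤ z' i) ∧ ∀ i, t * z' i ^ (m - 1) < rApp A z' i :=
  boost_aux hm hA hirr t _ z le_rfl hz0 hle hstrict

lemma mem_TSet_of (hA : Nonneg A) {t : ℝ} {z : Fin n → ℝ}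
    (hz0 : ∀ i, 0 ≤ z i) (hzpos : ∃ i, 0 < z i)
    (hle : ∀ i, t * z i ^ (m - 1) ≤ rApp A z i) : t ∈ TSet A := by
  obtain ⟨iw, hiw⟩ := hzpos
  have hs : 0 < ∑ i, z i :=
    Finset.sum_pos' (fun i _ => hz0 i) ⟨iw, Finset.mem_univ _, hiw⟩
  set c : ℝ := (∑ i, z i)⁻¹ with hc
  have hc0 : 0 ≤ c := inv_nonneg.mpr hs.le
  refine ⟨fun j => c * z j, ⟨fun j => mul_nonneg hc0 (hz0 j), ?_⟩, ?_⟩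
  · rw [← Finset.mul_sum, hc, inv_mul_cancel₀ hs.ne']
  · intro i
    calc t * (c * z i) ^ (m - 1) = c ^ (m - 1) * (t * z i ^ (m - 1)) := by ring
      _ ≤ c ^ (m - 1) * rApp A z i :=
          mul_le_mul_of_nonneg_left (hle i) (pow_nonneg hc0 _)
      _ = rApp A (fun j => c * z j) i := (rApp_smul A c z i).symm

lemma exists_mem_TSet_gt (hn : 0 < n) (hm : 2 ≤ m) (hA : Nonneg A) (hirr : Irred A)
    {t : ℝ} {z : Fin n → ℝ} (hz0 : ∀ i, 0 ≤ z i)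
    (hle : ∀ i, t * z i ^ (m - 1) ≤ rApp A z i)
    (hstrict : ∃ i, t * z i ^ (m - 1) < rApp A z i) :
    ∃ t' ∈ TSet A, t < t' := by
  classical
  obtain ⟨z', hz'0, hstrict'⟩ := boost hm hA hirr hz0 hle hstrict
  have hzpos : ∃ i, 0 < z' i := by
    by_contra hcon
    push_neg at hcon
    have hz0' : ∀ i, z' i = 0 := fun i => le_antisymm (hcon i) (hz'0 i)
    have h := hstrict' ⟨0, hn⟩
    have hra : rApp A z' ⟨0, hn⟩ = 0 := by
      unfold rApp
      refine Finset.sum_eq_zero fun f _ => ?_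
      rw [Finset.prod_eq_zero (Finset.mem_univ (⟨0, by omega⟩ : Fin (m - 1))) (hz0' _), mul_zero]
    rw [hra, hz0', zero_pow (by omega : m - 1 ≠ 0), mul_zero] at h
    exact lt_irrefl 0 h
  set F : Finset (Fin n) := Finset.univ.filter (fun i => 0 < z' i) with hF
  have hFne : F.Nonempty := by
    obtain ⟨i, hi⟩ := hzpos
    exact ⟨i, by simp [hF, hi]⟩
  set t' : ℝ := F.inf' hFne (fun i => rApp A z' i / z' i ^ (m - 1)) with ht'
  have hmemF : ∀ i ∈ F, 0 < z' i := by intro i hi; simpa [hF] using hi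
  have htlt : t < t' := by
    rw [ht', Finset.lt_inf'_iff]
    intro i hi
    have hp : 0 < z' i ^ (m - 1) := pow_pos (hmemF i hi) _
    rw [lt_div_iff₀ hp]
    exact hstrict' i
  refine ⟨t', ?_, htlt⟩
  refine mem_TSet_of hA hz'0 hzpos fun i => ?_
  by_cases hi : i ∈ F
  · have hp : 0 < z' i ^ (m - 1) := pow_pos (hmemF i hi) _
    rw [← le_div_iff₀ hp]
    exact Finset.inf'_le _ hi
  · have : z' i = 0 := by
      have := hi
      simp only [hF, Finset.mem_filter, Finset.mem_univ, true_and, not_lt] at this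
      exact le_antisymm this (hz'0 i)
    rw [this, zero_pow (by omega : m - 1 ≠ 0), mul_zero]
    exact rApp_nonneg hA hz'0 i

lemma zero_mem_TSet (hn : 0 < n) (hA : Nonneg A) : (0 : ℝ) ∈ TSet A := by
  have hnR : (0:ℝ) < n := by exact_mod_cast hn
  refine ⟨fun _ => (n : ℝ)⁻¹, ⟨fun _ => inv_nonneg.mpr hnR.le, ?_⟩, fun i => ?_⟩
  · rw [Finset.sum_const, Finset.card_univ, Fintype.card_fin, nsmul_eq_mul,
      mul_inv_cancel₀ hnR.ne']
  · rw [zero_mul]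
    exact rApp_nonneg hA (fun _ => inv_nonneg.mpr hnR.le) i

lemma TSet_bddAbove (hn : 0 < n) (hA : Nonneg A) : BddAbove (TSet A) := by
  classical
  have huniv : (Finset.univ : Finset (Fin n)).Nonempty := ⟨⟨0, hn⟩, Finset.mem_univ _⟩
  set Bd : ℝ := Finset.univ.sup' huniv (fun i => ∑ f : Fin (m - 1) → Fin n, rA A i f) with hBd
  refine ⟨max 0 ((n : ℝ) ^ (m - 1) * Bd), fun t ht => ?_⟩
  obtain ⟨z, ⟨hz0, hz1⟩, hle⟩ := ht
  rcases le_or_gt t 0 with h | h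
  · exact le_max_of_le_left h
  · have hex : ∃ i, (n : ℝ)⁻¹ ≤ z i := by
      by_contra hcon
      push_neg at hcon
      have : ∑ i, z i < ∑ _i : Fin n, (n : ℝ)⁻¹ :=
        Finset.sum_lt_sum_of_nonempty huniv fun i _ => hcon i
      rw [hz1, Finset.sum_const, Finset.card_univ, Fintype.card_fin, nsmul_eq_mul,
        mul_inv_cancel₀ (by exact_mod_cast hn.ne' : (n:ℝ) ≠ 0)] at this
      exact lt_irrefl 1 this
    obtain ⟨i, hi⟩ := hex
    have hnR : (0:ℝ) < n := by exact_mod_cast hn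
    have h1 : t * ((n : ℝ)⁻¹) ^ (m - 1) ≤ t * z i ^ (m - 1) :=
      mul_le_mul_of_nonneg_left (pow_le_pow_left₀ (inv_nonneg.mpr hnR.le) hi _) h.le
    have hz_le_one : ∀ j, z j ≤ 1 := by
      intro j
      rw [← hz1]
      exact Finset.single_le_sum (fun i _ => hz0 i) (Finset.mem_univ j)
    have h2 : rApp A z i ≤ Bd := by
      calc rApp A z i ≤ ∑ f : Fin (m - 1) → Fin n, rA A i f * 1 := by
            refine Finset.sum_le_sum fun f _ => mul_le_mul_of_nonneg_left ?_ (rA_nonneg hA i f)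
            exact Finset.prod_le_one (fun j _ => hz0 (f j)) (fun j _ => hz_le_one (f j))
        _ = ∑ f : Fin (m - 1) → Fin n, rA A i f := by simp
        _ ≤ Bd := Finset.le_sup' (fun i => ∑ f : Fin (m - 1) → Fin n, rA A i f) (Finset.mem_univ i)
    have h3 : t * ((n : ℝ)⁻¹) ^ (m - 1) ≤ Bd := le_trans h1 ((hle i).trans h2)
    have h4 : t ≤ (n : ℝ) ^ (m - 1) * Bd := by
      have hpow : (0:ℝ) < ((n : ℝ)⁻¹) ^ (m - 1) := pow_pos (inv_pos.mpr hnR) _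
      have := mul_le_mul_of_nonneg_left h3 (le_of_lt (pow_pos hnR (m - 1)))
      calc t = (n : ℝ) ^ (m - 1) * (t * ((n : ℝ)⁻¹) ^ (m - 1)) := by
            rw [← mul_assoc, mul_comm ((n:ℝ) ^ (m-1)) t, mul_assoc, ← mul_pow,
              mul_inv_cancel₀ hnR.ne', one_pow, mul_one]
        _ ≤ (n : ℝ) ^ (m - 1) * Bd := this
    exact le_max_of_le_right h4

lemma sSup_TSet_mem (hn : 0 < n) (hA : Nonneg A) : sSup (TSet A) ∈ TSet A := by
  classical
  set r := sSup (TSet A) with hr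
  have hne : (TSet A).Nonempty := ⟨0, zero_mem_TSet hn hA⟩
  have hbdd := TSet_bddAbove hn hA
  have hdc : ∀ t t' : ℝ, t' ≤ t → t ∈ TSet A → t' ∈ TSet A := by
    rintro t t' h ⟨z, hz, hle⟩
    exact ⟨z, hz, fun i => le_trans
      (mul_le_mul_of_nonneg_right h (pow_nonneg (hz.1 i) _)) (hle i)⟩
  have hseq : ∀ k : ℕ, ∃ z ∈ stdSimplex ℝ (Fin n),
      ∀ i, (r - 1 / ((k : ℝ) + 1)) * z i ^ (m - 1) ≤ rApp A z i := by
    intro k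
    have hpos : (0:ℝ) < 1 / ((k : ℝ) + 1) := by positivity
    have h1 : r - 1 / ((k : ℝ) + 1) < r := sub_lt_self _ hpos
    obtain ⟨t, htT, ht⟩ := exists_lt_of_lt_csSup hne h1
    exact hdc t _ ht.le htT
  choose zs hzs hzs2 using hseq
  obtain ⟨zstar, hzstar, φ, hφ, hconv⟩ := (isCompact_stdSimplex ℝ (Fin n)).tendsto_subseq hzs
  refine ⟨zstar, hzstar, fun i => ?_⟩
  have hconv_i : Tendsto (fun k => zs (φ k) i) atTop (𝓝 (zstar i)) :=
    (tendsto_pi_nhds.1 hconv) i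
  have htr : Tendsto (fun k : ℕ => r - 1 / ((φ k : ℝ) + 1)) atTop (𝓝 r) := by
    have h0 : Tendsto (fun k : ℕ => 1 / ((k : ℝ) + 1)) atTop (𝓝 0) :=
      tendsto_one_div_add_atTop_nhds_zero_nat
    have := (h0.comp hφ.tendsto_atTop)
    have h2 := tendsto_const_nhds (x := r) (f := atTop (α := ℕ)) |>.sub this
    simpa using h2
  have hL : Tendsto (fun k => (r - 1 / ((φ k : ℝ) + 1)) * zs (φ k) i ^ (m - 1)) atTop
      (𝓝 (r * zstar i ^ (m - 1))) := htr.mul (hconv_i.pow _)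
  have hRt : Tendsto (fun k => rApp A (zs (φ k)) i) atTop (𝓝 (rApp A zstar i)) :=
    ((continuous_rApp A i).tendsto _).comp hconv
  exact le_of_tendsto_of_tendsto' hL hRt fun k => hzs2 (φ k) i

lemma bddAbove_absEig (hn : 0 < n) (hm : 2 ≤ m) (hA : Nonneg A) :
    BddAbove ((fun z : ℂ => ‖z‖) '' Eigenvalues A) := by
  classical
  have huniv : (Finset.univ : Finset (Fin n)).Nonempty := ⟨⟨0, hn⟩, Finset.mem_univ _⟩
  refine ⟨Finset.univ.sup' huniv (fun i => ∑ f : Fin (m - 1) → Fin n, rA A i f), ?_⟩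
  rintro s ⟨lam, ⟨w, hw, hw2⟩, rfl⟩
  obtain ⟨i, _, hi⟩ := Finset.exists_max_image Finset.univ (fun j => ‖w j‖) huniv
  have hwi : 0 < ‖w i‖ := by
    rcases (norm_nonneg (w i)).lt_or_eq with h | h
    · exact h
    · exfalso
      apply hw
      funext j
      have := hi j (Finset.mem_univ j)
      rw [← h] at this
      exact norm_eq_zero.mp (le_antisymm this (norm_nonneg _))
  have hkey : ‖lam‖ * ‖w i‖ ^ (m - 1)
      ≤ (∑ f : Fin (m - 1) → Fin n, rA A i f) * ‖w i‖ ^ (m - 1) := by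
    calc ‖lam‖ * ‖w i‖ ^ (m - 1)
        = ‖lam * w i ^ (m - 1)‖ := by rw [norm_mul, norm_pow]
      _ = ‖tApp A w i‖ := by rw [hw2 i]
      _ ≤ rApp A (fun j => ‖w j‖) i := abs_tApp_le_s12 hA w i
      _ ≤ ∑ f : Fin (m - 1) → Fin n, rA A i f * ‖w i‖ ^ (m - 1) := by
          refine Finset.sum_le_sum fun f _ => mul_le_mul_of_nonneg_left ?_ (rA_nonneg hA i f)
          calc ∏ j, ‖w (f j)‖ ≤ ∏ _j : Fin (m - 1), ‖w i‖ :=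
                Finset.prod_le_prod (fun j _ => norm_nonneg _)
                  (fun j _ => hi (f j) (Finset.mem_univ _))
            _ = ‖w i‖ ^ (m - 1) := by
                rw [Finset.prod_const, Finset.card_univ, Fintype.card_fin]
      _ = (∑ f : Fin (m - 1) → Fin n, rA A i f) * ‖w i‖ ^ (m - 1) := by
          rw [Finset.sum_mul]
  have := le_of_mul_le_mul_right hkey (pow_pos hwi _)
  exact this.trans (Finset.le_sup' (fun i => ∑ f : Fin (m - 1) → Fin n, rA A i f) (Finset.mem_univ i))

lemma specRad_nonneg (hn : 0 < n) (hm : 2 ≤ m) (hA : Nonneg A)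
    {x : Fin n → ℂ} (hx : IsEigPair A ((specRad A : ℝ) : ℂ) x) : 0 ≤ specRad A := by
  have hmem : ‖((specRad A : ℝ) : ℂ)‖ ∈ (fun z : ℂ => ‖z‖) '' Eigenvalues A :=
    ⟨_, ⟨x, hx⟩, rfl⟩
  have := le_csSup (bddAbove_absEig hn hm hA) hmem
  exact le_trans (norm_nonneg _) this

/-- Main analytic lemma: the triangle inequality is tight for the modulus vector. -/
lemma rApp_eq_specRad (hn : 0 < n) (hm : 2 ≤ m) (hA : Nonneg A) (hirr : Irred A)
    {x : Fin n → ℂ} (hx : IsEigPair A ((specRad A : ℝ) : ℂ) x) :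
    ∀ i, rApp A (fun j => ‖x j‖) i
      = specRad A * ‖x i‖ ^ (m - 1) := by
  set ρ := specRad A with hρ
  set y : Fin n → ℝ := fun j => ‖x j‖ with hy
  have hy0 : ∀ i, 0 ≤ y i := fun i => norm_nonneg _
  have hρ0 : 0 ≤ ρ := specRad_nonneg hn hm hA hx
  have hylb : ∀ i, ρ * y i ^ (m - 1) ≤ rApp A y i := by
    intro i
    calc ρ * y i ^ (m - 1) = ‖(ρ : ℂ) * x i ^ (m - 1)‖ := by
          rw [norm_mul, norm_pow, Complex.norm_real, Real.norm_eq_abs, abs_of_nonneg hρ0]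
      _ = ‖tApp A x i‖ := by rw [← hx.2 i]
      _ ≤ rApp A y i := abs_tApp_le_s12 hA x i
  by_contra hcon
  push_neg at hcon
  obtain ⟨i₁, hi₁⟩ := hcon
  have hstrict : ∃ i, ρ * y i ^ (m - 1) < rApp A y i :=
    ⟨i₁, (hylb i₁).lt_of_ne fun h => hi₁ h.symm⟩
  obtain ⟨t', ht'T, ht'⟩ := exists_mem_TSet_gt hn hm hA hirr hy0 hylb hstrict
  have h1 : t' ≤ sSup (TSet A) := le_csSup (TSet_bddAbove hn hA) ht'T
  have h2 : sSup (TSet A) ≤ ρ := by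
    obtain ⟨zstar, hzΔ, hles⟩ := sSup_TSet_mem hn hA
    set r := sSup (TSet A) with hr
    by_cases hstrict2 : ∃ i, r * zstar i ^ (m - 1) < rApp A zstar i
    · exfalso
      obtain ⟨t'', ht''T, ht''⟩ :=
        exists_mem_TSet_gt hn hm hA hirr hzΔ.1 hles hstrict2
      exact absurd (le_csSup (TSet_bddAbove hn hA) ht''T) (not_le.mpr ht'')
    · push_neg at hstrict2
      have hreq : ∀ i, rApp A zstar i = r * zstar i ^ (m - 1) :=
        fun i => le_antisymm (hstrict2 i) (hles i)
      have hzne : (fun i => ((zstar i : ℝ) : ℂ)) ≠ 0 := by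
        intro h0
        have : ∀ i, zstar i = 0 := by
          intro i
          have := congrFun h0 i
          rw [Pi.zero_apply] at this
          exact_mod_cast this
        have hsum := hzΔ.2
        rw [Finset.sum_eq_zero (fun i _ => this i)] at hsum
        exact zero_ne_one hsum
      have heig : ((r : ℝ) : ℂ) ∈ Eigenvalues A := by
        refine ⟨fun i => ((zstar i : ℝ) : ℂ), hzne, fun i => ?_⟩
        rw [tApp_ofReal hA, hreq i]
        push_cast
        ring
      have hr0 : 0 ≤ r := le_csSup (TSet_bddAbove hn hA) (zero_mem_TSet hn hA)
      calc r = ‖((r : ℝ) : ℂ)‖ := by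
            rw [Complex.norm_real, Real.norm_eq_abs, abs_of_nonneg hr0]
        _ ≤ ρ := le_csSup (bddAbove_absEig hn hm hA) ⟨_, heig, rfl⟩
  linarith

/-- Terms of a sum achieving equality in the triangle inequality are aligned. -/
lemma triangle_eq {α : Type} [Fintype α] (c : α → ℂ)
    (h : ‖∑ g, c g‖ = ∑ g, ‖c g‖) (g : α) :
    c g * (starRingEnd ℂ) (∑ g', c g')
      = ((‖c g‖ * ‖∑ g', c g'‖ : ℝ) : ℂ) := by
  classical
  set S := ∑ g', c g' with hS
  have key : ∀ g, (c g * (starRingEnd ℂ) S).re ≤ ‖c g‖ * ‖S‖ := by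
    intro g
    refine (Complex.re_le_norm _).trans (le_of_eq ?_)
    rw [norm_mul, Complex.norm_conj]
  have hsum : ∑ g, (c g * (starRingEnd ℂ) S).re
      = ∑ g, ‖c g‖ * ‖S‖ := by
    have h1 : ∑ g, (c g * (starRingEnd ℂ) S).re = (S * (starRingEnd ℂ) S).re := by
      rw [← Complex.re_sum, ← Finset.sum_mul, ← hS]
    have h2 : (S * (starRingEnd ℂ) S).re = ‖S‖ * ‖S‖ := by
      rw [Complex.mul_conj, Complex.ofReal_re, Complex.normSq_eq_norm_sq, pow_two]
    have h3 : ∑ g, ‖c g‖ * ‖S‖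
        = ‖S‖ * ‖S‖ := by
      rw [← Finset.sum_mul, ← h]
    rw [h1, h2, h3]
  have heach := (Finset.sum_eq_sum_iff_of_le (fun g _ => key g)).mp hsum g (Finset.mem_univ g)
  have habs : ‖c g * (starRingEnd ℂ) S‖ = ‖c g‖ * ‖S‖ := by
    rw [norm_mul, Complex.norm_conj]
  set w := c g * (starRingEnd ℂ) S with hw
  have hre : w.re = ‖w‖ := by rw [habs, heach]
  have hnormSq : ‖w‖ ^ 2 = w.re ^ 2 + w.im ^ 2 := by
    rw [Complex.sq_norm, Complex.normSq_apply]; ring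
  have hre2 : w.re ^ 2 = ‖w‖ ^ 2 := by rw [hre]
  have him2 : w.im ^ 2 = 0 := by linarith
  have him : w.im = 0 := by
    have := sq_eq_zero_iff.mp (him2 : w.im ^ 2 = 0)
    exact this
  refine Complex.ext ?_ ?_
  · simpa using heach
  · simpa using him

end PFAux

/-- If `A` is nonnegative irreducible and the solid graph `G^s(A)` is weakly connected,
then every eigenvector `x` for `ρ(A)` satisfies `x^{[m-1]} = e^{iθ}|x|^{[m-1]}`. -/
theorem stmt12 {n m : ℕ} (hm : 2 ≤ m) (A : Tensor (Fin n) m)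
    (hA : Nonneg A) (hirr : Irred A)
    (hconn : ∀ i j : Fin n,
      Relation.ReflTransGen (fun a b => SolidArc A a b ∨ SolidArc A b a) i j)
    (x : Fin n → ℂ) (hx : IsEigPair A ((specRad A : ℝ) : ℂ) x) :
    ∃ θ : ℝ, ∀ i, x i ^ (m - 1) =
      Complex.exp ((θ : ℂ) * Complex.I) * (‖x i‖ : ℂ) ^ (m - 1) := by
  classical
  rcases Nat.lt_or_ge n 1 with h0 | h1
  · exact ⟨0, fun i => absurd i.2 (by omega)⟩
  rcases Nat.lt_or_ge n 2 with h1' | hn2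
  · -- n = 1 : trivial
    have hsing : ∀ i : Fin n, i = ⟨0, h1⟩ := fun i => Fin.ext (by omega)
    refine ⟨(x ⟨0, h1⟩ ^ (m - 1)).arg, fun i => ?_⟩
    rw [hsing i]
    calc x ⟨0, h1⟩ ^ (m - 1)
        = ((‖x ⟨0, h1⟩ ^ (m - 1)‖ : ℝ) : ℂ) *
            Complex.exp (((x ⟨0, h1⟩ ^ (m - 1)).arg : ℂ) * Complex.I) :=
          (Complex.norm_mul_exp_arg_mul_I _).symm
      _ = Complex.exp (((x ⟨0, h1⟩ ^ (m - 1)).arg : ℂ) * Complex.I) *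
            ((‖x ⟨0, h1⟩‖ : ℝ) : ℂ) ^ (m - 1) := by
          rw [norm_pow]
          push_cast
          ring
  -- main case : n ≥ 2
  have hn : 0 < n := by omega
  have heq : ∀ i, rApp A (fun j => ‖x j‖) i
      = specRad A * ‖x i‖ ^ (m - 1) :=
    rApp_eq_specRad hn hm hA hirr hx
  have hρ0 : 0 ≤ specRad A := specRad_nonneg hn hm hA hx
  -- all entries of |x| are positive
  have hypos : ∀ i, 0 < ‖x i‖ := by
    by_contra hcon
    push_neg at hcon
    obtain ⟨i₂, hi₂⟩ := hcon
    set S : Set (Fin n) := {i | ‖x i‖ = 0} with hS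
    have hSne : S.Nonempty := ⟨i₂, le_antisymm hi₂ (norm_nonneg _)⟩
    have hSneq : S ≠ Set.univ := by
      intro hEq
      apply hx.1
      funext j
      have : j ∈ S := hEq ▸ Set.mem_univ j
      exact norm_eq_zero.mp this
    refine hirr ⟨S, hSne, hSneq, ?_⟩
    intro i hiS f hf
    have h0 : rApp A (fun j => ‖x j‖) i = 0 := by
      rw [heq i, (hiS : ‖x i‖ = 0), zero_pow (by omega : m - 1 ≠ 0), mul_zero]
    unfold rApp at h0
    have hterm := (Finset.sum_eq_zero_iff_of_nonneg (fun f _ =>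
      mul_nonneg (rA_nonneg hA i f)
        (Finset.prod_nonneg fun j _ => norm_nonneg _))).mp h0 f (Finset.mem_univ f)
    have hprod : 0 < ∏ j, ‖x (f j)‖ := by
      refine Finset.prod_pos fun j _ => ?_
      have hne : ‖x (f j)‖ ≠ 0 := fun h => hf j h
      exact (norm_nonneg _).lt_of_ne' hne
    have hra0 : rA A i f = 0 := by
      rcases mul_eq_zero.mp hterm with h | h
      · exact h
      · exact absurd h hprod.ne'
    rw [A_eq_rA hA, hra0]
    exact Complex.ofReal_zero
  -- the spectral radius is positive
  have hρpos : 0 < specRad A := by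
    rcases hρ0.lt_or_eq with h | h
    · exact h
    · exfalso
      have hA0 : ∀ i f, A i f = 0 := by
        intro i f
        have h0 : rApp A (fun j => ‖x j‖) i = 0 := by
          rw [heq i, ← h, zero_mul]
        unfold rApp at h0
        have hterm := (Finset.sum_eq_zero_iff_of_nonneg (fun f _ =>
          mul_nonneg (rA_nonneg hA i f)
            (Finset.prod_nonneg fun j _ => norm_nonneg _))).mp h0 f
            (Finset.mem_univ f)
        have hprod : 0 < ∏ j, ‖x (f j)‖ :=
          Finset.prod_pos fun j _ => hypos (f j)
        have hra0 : rA A i f = 0 := by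
          rcases mul_eq_zero.mp hterm with h' | h'
          · exact h'
          · exact absurd h' hprod.ne'
        rw [A_eq_rA hA, hra0]
        exact Complex.ofReal_zero
      refine hirr ⟨{(⟨0, hn⟩ : Fin n)}, Set.singleton_nonempty _, ?_, fun i _ f _ => hA0 i f⟩
      intro hEq
      have h1' : (⟨1, by omega⟩ : Fin n) ∈ ({(⟨0, hn⟩ : Fin n)} : Set (Fin n)) :=
        hEq ▸ Set.mem_univ _
      rw [Set.mem_singleton_iff] at h1'
      have := congrArg Fin.val h1'
      simp at this
  -- alignment across solid arcs
  have hcross : ∀ i j, SolidArc A i j →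
      x j ^ (m - 1) * ((‖x i‖ : ℝ) : ℂ) ^ (m - 1)
        = x i ^ (m - 1) * ((‖x j‖ : ℝ) : ℂ) ^ (m - 1) := by
    intro i j hsolid
    have hsum_eq : (∑ g : Fin (m - 1) → Fin n, A i g * ∏ j', x (g j'))
        = ((specRad A : ℝ) : ℂ) * x i ^ (m - 1) := hx.2 i
    have habs_sum : ‖∑ g : Fin (m - 1) → Fin n, A i g * ∏ j', x (g j')‖
        = ∑ g : Fin (m - 1) → Fin n, ‖A i g * ∏ j', x (g j')‖ := by
      rw [hsum_eq, norm_mul, norm_pow, Complex.norm_real, Real.norm_eq_abs, abs_of_nonneg hρ0]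
      have h2 : ∑ g : Fin (m - 1) → Fin n, ‖A i g * ∏ j', x (g j')‖
          = rApp A (fun j => ‖x j‖) i :=
        Finset.sum_congr rfl fun g _ => abs_term_s12 hA x i g
      rw [h2, heq i]
    have hT := triangle_eq (fun g => A i g * ∏ j', x (g j')) habs_sum (fun _ => j)
    simp only [] at hT
    rw [hsum_eq] at hT
    rw [Finset.prod_const, Finset.card_univ, Fintype.card_fin] at hT
    rw [A_eq_rA hA i (fun _ => j)] at hT
    have hhabs1 : ‖((rA A i (fun _ => j) : ℝ) : ℂ) * x j ^ (m - 1)‖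
        = rA A i (fun _ => j) * ‖x j‖ ^ (m - 1) := by
      rw [norm_mul, norm_pow, Complex.norm_real, Real.norm_eq_abs,
        abs_of_nonneg (rA_nonneg hA i (fun _ => j))]
    have hhabs2 : ‖((specRad A : ℝ) : ℂ) * x i ^ (m - 1)‖
        = specRad A * ‖x i‖ ^ (m - 1) := by
      rw [norm_mul, norm_pow, Complex.norm_real, Real.norm_eq_abs, abs_of_nonneg hρ0]
    rw [hhabs1, hhabs2] at hT
    have ha : 0 < rA A i (fun _ => j) := (rA_pos_iff hA i (fun _ => j)).mp hsolid
    have hxine : x i ≠ 0 := by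
      intro h'
      exact absurd (by rw [h']; exact norm_zero) (hypos i).ne'
    have hcne : (starRingEnd ℂ) (x i) ≠ 0 := by
      intro h'
      apply hxine
      have := congrArg (starRingEnd ℂ) h'
      simpa using this
    have hCne : ((rA A i (fun _ => j) : ℝ) : ℂ) * ((specRad A : ℝ) : ℂ)
        * ((starRingEnd ℂ) (x i)) ^ (m - 1) ≠ 0 :=
      mul_ne_zero (mul_ne_zero (Complex.ofReal_ne_zero.mpr ha.ne')
        (Complex.ofReal_ne_zero.mpr hρpos.ne')) (pow_ne_zero _ hcne)
    have hconj : x i * (starRingEnd ℂ) (x i) = ((‖x i‖ ^ 2 : ℝ) : ℂ) := by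
      rw [Complex.mul_conj, Complex.normSq_eq_norm_sq]
    refine mul_left_cancel₀ hCne ?_
    calc ((rA A i (fun _ => j) : ℝ) : ℂ) * ((specRad A : ℝ) : ℂ)
          * ((starRingEnd ℂ) (x i)) ^ (m - 1)
          * (x j ^ (m - 1) * ((‖x i‖ : ℝ) : ℂ) ^ (m - 1))
        = (((rA A i (fun _ => j) : ℝ) : ℂ) * x j ^ (m - 1)
            * ((starRingEnd ℂ) (((specRad A : ℝ) : ℂ) * x i ^ (m - 1))))
            * ((‖x i‖ : ℝ) : ℂ) ^ (m - 1) := by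
          rw [map_mul, map_pow, Complex.conj_ofReal]
          ring
      _ = ((rA A i (fun _ => j) * ‖x j‖ ^ (m - 1)
            * (specRad A * ‖x i‖ ^ (m - 1)) : ℝ) : ℂ)
            * ((‖x i‖ : ℝ) : ℂ) ^ (m - 1) := by
          rw [hT]
      _ = ((rA A i (fun _ => j) : ℝ) : ℂ) * ((specRad A : ℝ) : ℂ)
            * ((‖x j‖ : ℝ) : ℂ) ^ (m - 1)
            * ((‖x i‖ ^ 2 : ℝ) : ℂ) ^ (m - 1) := by
          push_cast
          ring
      _ = ((rA A i (fun _ => j) : ℝ) : ℂ) * ((specRad A : ℝ) : ℂ)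
            * ((‖x j‖ : ℝ) : ℂ) ^ (m - 1)
            * (x i * (starRingEnd ℂ) (x i)) ^ (m - 1) := by
          rw [hconj]
      _ = ((rA A i (fun _ => j) : ℝ) : ℂ) * ((specRad A : ℝ) : ℂ)
            * ((starRingEnd ℂ) (x i)) ^ (m - 1)
            * (x i ^ (m - 1) * ((‖x j‖ : ℝ) : ℂ) ^ (m - 1)) := by
          rw [mul_pow]
          ring
  -- the phase function is constant
  set u : Fin n → ℂ :=
    fun i => x i ^ (m - 1) / ((‖x i‖ : ℝ) : ℂ) ^ (m - 1) with hu
  have hyne : ∀ i, ((‖x i‖ : ℝ) : ℂ) ^ (m - 1) ≠ 0 :=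
    fun i => pow_ne_zero _ (Complex.ofReal_ne_zero.mpr (hypos i).ne')
  have hueq : ∀ a b, (SolidArc A a b ∨ SolidArc A b a) → u a = u b := by
    intro a b hab
    rw [hu]
    simp only []
    rw [div_eq_div_iff (hyne a) (hyne b)]
    rcases hab with h | h
    · exact (hcross a b h).symm
    · exact hcross b a h
  have hconst : ∀ i j : Fin n, u i = u j := by
    intro i j
    have hchain := hconn i j
    induction hchain with
    | refl => rfl
    | tail _ hbc ih => exact ih.trans (hueq _ _ hbc)
  have habs_u : ‖u ⟨0, hn⟩‖ = 1 := by
    rw [hu]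
    simp only []
    rw [norm_div, norm_pow, norm_pow, Complex.norm_real, Real.norm_eq_abs,
      abs_of_nonneg (norm_nonneg _)]
    exact div_self (pow_ne_zero _ (hypos ⟨0, hn⟩).ne')
  have hexp : Complex.exp (((u ⟨0, hn⟩).arg : ℂ) * Complex.I) = u ⟨0, hn⟩ := by
    have h := Complex.norm_mul_exp_arg_mul_I (u ⟨0, hn⟩)
    rw [habs_u, Complex.ofReal_one, one_mul] at h
    exact h
  refine ⟨(u ⟨0, hn⟩).arg, fun i => ?_⟩
  have hx_eq : x i ^ (m - 1) = u i * ((‖x i‖ : ℝ) : ℂ) ^ (m - 1) := by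
    rw [hu]
    simp only []
    rw [div_mul_cancel₀ _ (hyne i)]
  rw [hx_eq, hconst i ⟨0, hn⟩, hexp]


end PaperTensor
end

section
/- Let A be a nonnegative irreducible tensor of order m and dimension n whose solid graph G^s(A) has r weakly connected components. Then every eigenvector x of A corresponding to ρ(A) satisfies x^{[(m-1)^r]} = e^{iθ}|x|^{[(m-1)^r]} for some real θ; equivalently D_x^{(m-1)^r} = e^{iθ} I where D_x = diag(x₁/|x₁|,…,x_n/|x_n|). -/
open scoped BigOperators

set_option linter.unusedVariables false

namespace PT



variable {n k : ℕ}

/-- real multilinear application -/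
noncomputable def tR (a : Fin n → (Fin k → Fin n) → ℝ) (y : Fin n → ℝ) (i : Fin n) : ℝ :=
  ∑ f : Fin k → Fin n, a i f * ∏ j, y (f j)

lemma tR_nonneg {a : Fin n → (Fin k → Fin n) → ℝ} (ha : ∀ i f, 0 ≤ a i f)
    {y : Fin n → ℝ} (hy : ∀ i, 0 ≤ y i) (i : Fin n) : 0 ≤ tR a y i := by
  apply Finset.sum_nonneg
  intro f _
  exact mul_nonneg (ha i f) (Finset.prod_nonneg fun j _ => hy (f j))

lemma tR_mono {a : Fin n → (Fin k → Fin n) → ℝ} (ha : ∀ i f, 0 ≤ a i f)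
    {y y' : Fin n → ℝ} (hy : ∀ i, 0 ≤ y i) (h : ∀ i, y i ≤ y' i) (i : Fin n) :
    tR a y i ≤ tR a y' i := by
  apply Finset.sum_le_sum
  intro f _
  apply mul_le_mul_of_nonneg_left _ (ha i f)
  exact Finset.prod_le_prod (fun j _ => hy (f j)) (fun j _ => h (f j))

lemma tR_smul (a : Fin n → (Fin k → Fin n) → ℝ) (y : Fin n → ℝ) (c : ℝ) (i : Fin n) :
    tR a (fun l => c * y l) i = c ^ k * tR a y i := by
  unfold tR
  rw [Finset.mul_sum]
  congr 1; ext f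
  rw [Finset.prod_mul_distrib, Finset.prod_const]
  simp [Finset.card_univ]
  ring

lemma tR_continuous (a : Fin n → (Fin k → Fin n) → ℝ) (i : Fin n) :
    Continuous (fun y : Fin n → ℝ => tR a y i) := by
  unfold tR
  apply continuous_finset_sum
  intro f _
  exact continuous_const.mul (continuous_finset_prod _ fun j _ => continuous_apply (f j))



variable {n k : ℕ}

/-- feasibility set -/
def F (a : Fin n → (Fin k → Fin n) → ℝ) : Set (ℝ × (Fin n → ℝ)) :=
  {p | 0 ≤ p.1 ∧ (∀ i, 0 ≤ p.2 i) ∧ (∑ i, p.2 i) = 1 ∧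
    ∀ i, p.1 * p.2 i ^ k ≤ tR a p.2 i}

noncomputable def Cbd (a : Fin n → (Fin k → Fin n) → ℝ) : ℝ := ∑ i, ∑ f, a i f

lemma feas_bound {a : Fin n → (Fin k → Fin n) → ℝ} (ha : ∀ i f, 0 ≤ a i f)
    {p : ℝ × (Fin n → ℝ)} (hp : p ∈ F a) : p.1 ≤ Cbd a := by
  obtain ⟨hl, hy, hs, hf⟩ := hp
  -- pick max coordinate
  have hne : (Finset.univ : Finset (Fin n)).Nonempty := by
    by_contra h
    rw [Finset.not_nonempty_iff_eq_empty] at h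
    rw [h] at hs; simp at hs
  obtain ⟨i, _, hi⟩ := Finset.exists_max_image Finset.univ p.2 hne
  have hipos : 0 < p.2 i := by
    by_contra h
    push_neg at h
    have : (∑ j, p.2 j) ≤ 0 := by
      apply Finset.sum_nonpos
      intro j _
      exact le_trans (hi j (Finset.mem_univ j)) h
    rw [hs] at this; linarith
  have h1 : p.1 * p.2 i ^ k ≤ tR a p.2 i := hf i
  have h2 : tR a p.2 i ≤ (∑ f, a i f) * p.2 i ^ k := by
    rw [Finset.sum_mul]
    apply Finset.sum_le_sum
    intro f _
    apply mul_le_mul_of_nonneg_left _ (ha i f)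
    calc ∏ j, p.2 (f j) ≤ ∏ _j : Fin k, p.2 i := by
          apply Finset.prod_le_prod (fun j _ => hy (f j)) (fun j _ => hi (f j) (Finset.mem_univ _))
      _ = p.2 i ^ k := by simp [Finset.prod_const, Finset.card_univ]
  have h3 : p.1 ≤ ∑ f, a i f := by
    have := le_trans h1 h2
    have hk : 0 < p.2 i ^ k := pow_pos hipos k
    exact le_of_mul_le_mul_right (by linarith [this]) hk
  refine le_trans h3 ?_
  apply Finset.single_le_sum (f := fun i => ∑ f, a i f) (fun j _ => Finset.sum_nonneg fun f _ => ha j f) (Finset.mem_univ i)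

lemma F_compact (a : Fin n → (Fin k → Fin n) → ℝ) (ha : ∀ i f, 0 ≤ a i f) :
    IsCompact (F a) := by
  have hclosed : IsClosed (F a) := by
    have h1 : IsClosed {p : ℝ × (Fin n → ℝ) | 0 ≤ p.1} :=
      isClosed_le continuous_const continuous_fst
    have h2 : IsClosed {p : ℝ × (Fin n → ℝ) | ∀ i, 0 ≤ p.2 i} := by
      rw [Set.setOf_forall]
      exact isClosed_iInter fun i =>
        isClosed_le continuous_const ((continuous_apply i).comp continuous_snd)
    have h3 : IsClosed {p : ℝ × (Fin n → ℝ) | (∑ i, p.2 i) = 1} := by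
      apply isClosed_eq _ continuous_const
      exact continuous_finset_sum _ fun i _ => (continuous_apply i).comp continuous_snd
    have h4 : IsClosed {p : ℝ × (Fin n → ℝ) | ∀ i, p.1 * p.2 i ^ k ≤ tR a p.2 i} := by
      rw [Set.setOf_forall]
      apply isClosed_iInter
      intro i
      apply isClosed_le
      · exact continuous_fst.mul (((continuous_apply i).comp continuous_snd).pow k)
      · have : Continuous fun y : Fin n → ℝ => tR a y i := by
          apply continuous_finset_sum
          intro f _
          exact continuous_const.mul (continuous_finset_prod _ fun j _ => continuous_apply (f j))
        exact this.comp continuous_snd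
    have : F a = _ ∩ (_ ∩ (_ ∩ _)) := rfl
    exact h1.inter (h2.inter (h3.inter h4))
  have hsub : F a ⊆ Set.Icc (0, fun _ => 0) (Cbd a, fun _ => 1) := by
    rintro ⟨l, y⟩ hp
    obtain ⟨hl, hy, hs, hf⟩ := id hp
    constructor
    · exact ⟨hl, fun i => hy i⟩
    · refine ⟨feas_bound ha hp, fun i => ?_⟩
      calc y i ≤ ∑ j, y j := Finset.single_le_sum (fun j _ => hy j) (Finset.mem_univ i)
        _ = 1 := hs
  exact (isCompact_Icc).of_isClosed_subset hclosed hsub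



variable {n k : ℕ}

def Irr (a : Fin n → (Fin k → Fin n) → ℝ) : Prop :=
  ∀ S : Set (Fin n), S.Nonempty → S ≠ Set.univ →
    ∃ i ∈ S, ∃ f : Fin k → Fin n, (∀ j, f j ∉ S) ∧ 0 < a i f

lemma peel (hk : 1 ≤ k) {a : Fin n → (Fin k → Fin n) → ℝ} (ha : ∀ i f, 0 ≤ a i f)
    (hirr : Irr a) (lam : ℝ) (hlam : 0 ≤ lam) :
    ∀ s : ℕ, ∀ S : Finset (Fin n), S.card = s → S ≠ Finset.univ →
    ∀ y : Fin n → ℝ, (∀ i ∈ S, y i = 0) → (∀ i ∉ S, 0 < y i) →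
    (∀ i, lam * y i ^ k ≤ tR a y i) →
    ∃ y', (∀ i, y i ≤ y' i) ∧ (∀ i ∉ S, y' i = y i) ∧ (∀ i, 0 < y' i) ∧
      (∀ i, lam * y' i ^ k ≤ tR a y' i) ∧ (∀ i ∈ S, lam * y' i ^ k < tR a y' i) := by
  intro s
  induction s with
  | zero =>
    intro S hcard _ y h0 hpos hfeas
    have hS : S = ∅ := Finset.card_eq_zero.mp hcard
    subst hS
    exact ⟨y, fun i => le_rfl, fun i _ => rfl, fun i => hpos i (by simp),
      hfeas, fun i hi => by simp at hi⟩
  | succ s ih =>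
    intro S hcard hSu y h0 hpos hfeas
    have hSne : S.Nonempty := Finset.card_pos.mp (by omega)
    have hynn : ∀ i, 0 ≤ y i := by
      intro i
      by_cases hi : i ∈ S
      · exact le_of_eq (h0 i hi).symm
      · exact le_of_lt (hpos i hi)
    -- irreducibility on S
    obtain ⟨i1, hi1S, f1, hf1, hf1pos⟩ := hirr (S : Set (Fin n))
      (by exact ⟨hSne.choose, hSne.choose_spec⟩)
      (by
        intro h
        apply hSu
        apply Finset.eq_univ_of_forall
        intro i
        have : (i : Fin n) ∈ (S : Set (Fin n)) := by rw [h]; trivial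
        exact this)
    simp only [Finset.mem_coe] at hi1S hf1
    have hfactors : ∀ j, 0 < y (f1 j) := fun j => hpos (f1 j) (hf1 j)
    set c : ℝ := a i1 f1 * ∏ j, y (f1 j) with hc
    have hcpos : 0 < c := mul_pos hf1pos (Finset.prod_pos fun j _ => hfactors j)
    set ε : ℝ := min 1 (c / (2 * (lam + 1))) with he
    have hεpos : 0 < ε := lt_min one_pos (div_pos hcpos (by linarith))
    have hεle1 : ε ≤ 1 := min_le_left _ _
    have hεk : ε ^ k ≤ ε := pow_le_of_le_one (le_of_lt hεpos) hεle1 (by omega)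
    have hstrict0 : lam * ε ^ k < c := by
      have h1 : lam * ε ^ k ≤ lam * ε := by
        apply mul_le_mul_of_nonneg_left hεk hlam
      have h2 : lam * ε ≤ lam * (c / (2 * (lam + 1))) :=
        mul_le_mul_of_nonneg_left (min_le_right _ _) hlam
      have h3 : lam * (c / (2 * (lam + 1))) < c := by
        rw [mul_div_assoc'] -- lam * c / (2*(lam+1))
        rw [div_lt_iff₀ (by linarith)]
        nlinarith
      linarith
    set y1 : Fin n → ℝ := Function.update y i1 ε with hy1
    have hy1i1 : y1 i1 = ε := Function.update_self i1 ε y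
    have hy1ne : ∀ i, i ≠ i1 → y1 i = y i := fun i hi => Function.update_of_ne hi ε y
    have hy1ge : ∀ i, y i ≤ y1 i := by
      intro i
      by_cases hi : i = i1
      · rw [hi, hy1i1, h0 i1 hi1S]; exact le_of_lt hεpos
      · rw [hy1ne i hi]
    have hy1nn : ∀ i, 0 ≤ y1 i := fun i => le_trans (hynn i) (hy1ge i)
    have htRmono : ∀ i, tR a y i ≤ tR a y1 i := tR_mono ha hynn hy1ge
    -- key term lower bound
    have hterm : c ≤ tR a y1 i1 := by
      have h1 : a i1 f1 * ∏ j, y1 (f1 j) = c := by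
        rw [hc]
        congr 1
        apply Finset.prod_congr rfl
        intro j _
        apply hy1ne
        intro hj
        exact hf1 j (hj ▸ hi1S)
      calc c = a i1 f1 * ∏ j, y1 (f1 j) := h1.symm
        _ ≤ ∑ f, a i1 f * ∏ j, y1 (f j) := by
            apply Finset.single_le_sum (f := fun f => a i1 f * ∏ j, y1 (f j))
              (fun f _ => mul_nonneg (ha i1 f) (Finset.prod_nonneg fun j _ => hy1nn (f j)))
              (Finset.mem_univ f1)
        _ = tR a y1 i1 := rfl
    have hstrict1 : lam * y1 i1 ^ k < tR a y1 i1 := by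
      rw [hy1i1]; exact lt_of_lt_of_le hstrict0 hterm
    have hfeas1 : ∀ i, lam * y1 i ^ k ≤ tR a y1 i := by
      intro i
      by_cases hi : i = i1
      · subst hi; exact le_of_lt hstrict1
      · rw [hy1ne i hi]
        exact le_trans (hfeas i) (htRmono i)
    -- recurse on S.erase i1
    have herasecard : (S.erase i1).card = s := by
      rw [Finset.card_erase_of_mem hi1S, hcard]
      omega
    have heraseuniv : S.erase i1 ≠ Finset.univ := by
      intro h
      have : i1 ∈ S.erase i1 := h ▸ Finset.mem_univ i1
      exact (Finset.notMem_erase i1 S) this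
    have h01 : ∀ i ∈ S.erase i1, y1 i = 0 := by
      intro i hi
      rw [hy1ne i (Finset.ne_of_mem_erase hi)]
      exact h0 i (Finset.mem_of_mem_erase hi)
    have hpos1 : ∀ i ∉ S.erase i1, 0 < y1 i := by
      intro i hi
      by_cases h : i = i1
      · subst h; rw [hy1i1]; exact hεpos
      · rw [hy1ne i h]
        apply hpos
        intro hiS
        exact hi (Finset.mem_erase.mpr ⟨h, hiS⟩)
    obtain ⟨y', hge', hagree', hpos', hfeas', hstrict'⟩ :=
      ih (S.erase i1) herasecard heraseuniv y1 h01 hpos1 hfeas1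
    refine ⟨y', fun i => le_trans (hy1ge i) (hge' i), ?_, hpos', hfeas', ?_⟩
    · intro i hi
      have hne : i ∉ S.erase i1 := fun h => hi (Finset.mem_of_mem_erase h)
      have hii1 : i ≠ i1 := fun h => hi (h ▸ hi1S)
      rw [hagree' i hne, hy1ne i hii1]
    · intro i hi
      by_cases h : i = i1
      · subst h
        have : y' i = y1 i := hagree' i (Finset.notMem_erase i S)
        rw [this]
        calc lam * y1 i ^ k < tR a y1 i := hstrict1
          _ ≤ tR a y' i := tR_mono ha hy1nn hge' i
      · exact hstrict' i (Finset.mem_erase.mpr ⟨h, hi⟩)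



variable {n k : ℕ}

noncomputable def gg (a : Fin n → (Fin k → Fin n) → ℝ) (y : Fin n → ℝ) (i : Fin n) : ℝ :=
  tR a y i + y i ^ k

lemma rpow_k_cancel (hk : 1 ≤ k) {x : ℝ} (hx : 0 ≤ x) : (x ^ ((1:ℝ)/k)) ^ k = x := by
  rw [← Real.rpow_natCast (x ^ ((1:ℝ)/k)) k, ← Real.rpow_mul hx]
  rw [one_div, inv_mul_cancel₀ (by positivity : (k:ℝ) ≠ 0), Real.rpow_one]

lemma pow_k_root (hk : 1 ≤ k) {x : ℝ} (hx : 0 ≤ x) : (x ^ k) ^ ((1:ℝ)/k) = x := by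
  rw [← Real.rpow_natCast x k, ← Real.rpow_mul hx]
  rw [one_div, mul_inv_cancel₀ (by positivity : (k:ℝ) ≠ 0), Real.rpow_one]

lemma prop_step (hk : 1 ≤ k) {a : Fin n → (Fin k → Fin n) → ℝ} (ha : ∀ i f, 0 ≤ a i f)
    (hirr : Irr a) {lam : ℝ} (hlam : 0 ≤ lam) {y : Fin n → ℝ} (hy : ∀ i, 0 < y i)
    {P : Finset (Fin n)} (hPne : P.Nonempty) (hPu : P ≠ Finset.univ)
    (hfeas : ∀ i, (1 + lam) * y i ^ k ≤ gg a y i)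
    (hstrict : ∀ i ∈ P, (1 + lam) * y i ^ k < gg a y i) :
    ∃ y' : Fin n → ℝ, ∃ i2, i2 ∉ P ∧ (∀ i, 0 < y' i) ∧
      (∀ i, (1 + lam) * y' i ^ k ≤ gg a y' i) ∧
      (∀ i ∈ insert i2 P, (1 + lam) * y' i ^ k < gg a y' i) := by
  have hknz : (k:ℝ) ≠ 0 := by positivity
  have h1lam : (0:ℝ) < 1 + lam := by linarith
  set mh : ℝ := (1 + lam) ^ ((1:ℝ)/k) with hmh
  have hmhpos : 0 < mh := Real.rpow_pos_of_pos h1lam _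
  have hmhk : mh ^ k = 1 + lam := rpow_k_cancel hk (le_of_lt h1lam)
  have hgpos : ∀ i, 0 < gg a y i := fun i =>
    add_pos_of_nonneg_of_pos (tR_nonneg ha (fun i => le_of_lt (hy i)) i) (pow_pos (hy i) k)
  set y' : Fin n → ℝ := fun i => (gg a y i) ^ ((1:ℝ)/k) with hy'
  have hy'pos : ∀ i, 0 < y' i := fun i => Real.rpow_pos_of_pos (hgpos i) _
  have hy'k : ∀ i, y' i ^ k = gg a y i := fun i => rpow_k_cancel hk (le_of_lt (hgpos i))
  have hge : ∀ i, mh * y i ≤ y' i := by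
    intro i
    have h := hfeas i
    have : ((1 + lam) * y i ^ k) ^ ((1:ℝ)/k) ≤ (gg a y i) ^ ((1:ℝ)/k) :=
      Real.rpow_le_rpow (mul_nonneg h1lam.le (pow_nonneg (hy i).le k)) h (by positivity)
    rwa [Real.mul_rpow h1lam.le (pow_nonneg (hy i).le k), pow_k_root hk (le_of_lt (hy i))] at this
  have hgt : ∀ i ∈ P, mh * y i < y' i := by
    intro i hi
    have h := hstrict i hi
    have : ((1 + lam) * y i ^ k) ^ ((1:ℝ)/k) < (gg a y i) ^ ((1:ℝ)/k) :=
      Real.rpow_lt_rpow (mul_nonneg h1lam.le (pow_nonneg (hy i).le k)) h (by positivity)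
    rwa [Real.mul_rpow h1lam.le (pow_nonneg (hy i).le k), pow_k_root hk (le_of_lt (hy i))] at this
  have hsc : ∀ i, tR a (fun l => mh * y l) i = mh ^ k * tR a y i := fun i => tR_smul a y mh i
  have htRge : ∀ i, mh ^ k * tR a y i ≤ tR a y' i := by
    intro i
    rw [← hsc i]
    apply Finset.sum_le_sum
    intro f _
    apply mul_le_mul_of_nonneg_left _ (ha i f)
    exact Finset.prod_le_prod (fun j _ => mul_nonneg hmhpos.le (hy (f j)).le) (fun j _ => hge (f j))
  have hfeas' : ∀ i, (1 + lam) * y' i ^ k ≤ gg a y' i := by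
    intro i
    have h1 : mh ^ k * y i ^ k ≤ y' i ^ k := by
      rw [← mul_pow]
      exact pow_le_pow_left₀ (mul_nonneg hmhpos.le (hy i).le) (hge i) k
    calc (1 + lam) * y' i ^ k = mh ^ k * gg a y i := by rw [hy'k i, hmhk]
      _ = mh ^ k * tR a y i + mh ^ k * y i ^ k := by unfold gg; ring
      _ ≤ tR a y' i + y' i ^ k := add_le_add (htRge i) h1
      _ = gg a y' i := rfl
  have hstrictP : ∀ i ∈ P, (1 + lam) * y' i ^ k < gg a y' i := by
    intro i hi
    have h1 : mh ^ k * y i ^ k < y' i ^ k := by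
      rw [← mul_pow]
      exact pow_lt_pow_left₀ (hgt i hi) (mul_nonneg hmhpos.le (hy i).le) (by omega)
    calc (1 + lam) * y' i ^ k = mh ^ k * tR a y i + mh ^ k * y i ^ k := by
          rw [hy'k i, hmhk]; unfold gg; ring
      _ < tR a y' i + y' i ^ k := add_lt_add_of_le_of_lt (htRge i) h1
      _ = gg a y' i := rfl
  -- new strict index via irreducibility on Pᶜ
  obtain ⟨i2, hi2, f2, hf2, hf2pos⟩ := hirr {i | i ∉ P}
    (by
      obtain ⟨j, hj⟩ : ∃ j, j ∉ P := by
        by_contra h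
        push_neg at h
        exact hPu (Finset.eq_univ_of_forall h)
      exact ⟨j, hj⟩)
    (by
      intro h
      obtain ⟨j, hj⟩ := hPne
      have : j ∈ {i | i ∉ P} := h ▸ Set.mem_univ j
      exact this hj)
  have hi2P : i2 ∉ P := hi2
  have hf2P : ∀ j, f2 j ∈ P := by
    intro j
    have := hf2 j
    simp only [Set.mem_setOf_eq, not_not] at this
    exact this
  have hstricti2 : (1 + lam) * y' i2 ^ k < gg a y' i2 := by
    have hprod : ∏ j, (mh * y (f2 j)) < ∏ j, y' (f2 j) := by
      apply Finset.prod_lt_prod_of_nonempty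
      · intro j _; exact mul_pos hmhpos (hy (f2 j))
      · intro j _; exact hgt (f2 j) (hf2P j)
      · have : Nonempty (Fin k) := ⟨⟨0, by omega⟩⟩
        exact Finset.univ_nonempty
    have htRgt : mh ^ k * tR a y i2 < tR a y' i2 := by
      rw [← hsc i2]
      apply Finset.sum_lt_sum
      · intro f _
        apply mul_le_mul_of_nonneg_left _ (ha i2 f)
        exact Finset.prod_le_prod (fun j _ => mul_nonneg hmhpos.le (hy (f j)).le) (fun j _ => hge (f j))
      · exact ⟨f2, Finset.mem_univ f2, by
          apply mul_lt_mul_of_pos_left _ hf2pos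
          exact hprod⟩
    have h1 : mh ^ k * y i2 ^ k ≤ y' i2 ^ k := by
      rw [← mul_pow]
      exact pow_le_pow_left₀ (mul_nonneg hmhpos.le (hy i2).le) (hge i2) k
    calc (1 + lam) * y' i2 ^ k = mh ^ k * tR a y i2 + mh ^ k * y i2 ^ k := by
          rw [hy'k i2, hmhk]; unfold gg; ring
      _ < tR a y' i2 + y' i2 ^ k := add_lt_add_of_lt_of_le htRgt h1
      _ = gg a y' i2 := rfl
  refine ⟨y', i2, hi2P, hy'pos, hfeas', ?_⟩
  intro i hi
  rcases Finset.mem_insert.mp hi with h | h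
  · subst h; exact hstricti2
  · exact hstrictP i h

lemma prop_all (hk : 1 ≤ k) {a : Fin n → (Fin k → Fin n) → ℝ} (ha : ∀ i f, 0 ≤ a i f)
    (hirr : Irr a) {lam : ℝ} (hlam : 0 ≤ lam) :
    ∀ t : ℕ, ∀ y : Fin n → ℝ, ∀ P : Finset (Fin n), P.Nonempty → (∀ i, 0 < y i) →
    (∀ i, (1 + lam) * y i ^ k ≤ gg a y i) →
    (∀ i ∈ P, (1 + lam) * y i ^ k < gg a y i) →
    (Finset.univ : Finset (Fin n)).card ≤ P.card + t →
    ∃ z : Fin n → ℝ, (∀ i, 0 < z i) ∧ ∀ i, (1 + lam) * z i ^ k < gg a z i := by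
  intro t
  induction t with
  | zero =>
    intro y P hPne hy hfeas hstrict hcard
    have hle : P.card ≤ Finset.univ.card := Finset.card_le_card (Finset.subset_univ P)
    have hPu : P = Finset.univ := Finset.eq_univ_of_card P (by
      rw [← Finset.card_univ]; omega)
    exact ⟨y, hy, fun i => hstrict i (hPu ▸ Finset.mem_univ i)⟩
  | succ t ih =>
    intro y P hPne hy hfeas hstrict hcard
    by_cases hPu : P = Finset.univ
    · exact ⟨y, hy, fun i => hstrict i (hPu ▸ Finset.mem_univ i)⟩
    · obtain ⟨y', i2, hi2, hy', hfeas', hstrict'⟩ :=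
        prop_step hk ha hirr hlam hy hPne hPu hfeas hstrict
      apply ih y' (insert i2 P) (Finset.insert_nonempty i2 P) hy' hfeas' hstrict'
      rw [Finset.card_insert_of_notMem hi2]
      omega


lemma beat_max (hk : 1 ≤ k) (hn : 0 < n) {a : Fin n → (Fin k → Fin n) → ℝ}
    (ha : ∀ i f, 0 ≤ a i f)
    {lamstar : ℝ} (hmax : ∀ p ∈ F a, p.1 ≤ lamstar) (hls : 0 ≤ lamstar)
    {z : Fin n → ℝ} (hz : ∀ i, 0 < z i) (hstr : ∀ i, lamstar * z i ^ k < tR a z i) :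
    False := by
  have hne : (Finset.univ : Finset (Fin n)).Nonempty := ⟨⟨0, hn⟩, Finset.mem_univ _⟩
  set lam' : ℝ := Finset.univ.inf' hne (fun i => tR a z i / z i ^ k) with hl'
  have hgt : lamstar < lam' := by
    rw [hl', Finset.lt_inf'_iff]
    intro i _
    rw [lt_div_iff₀ (pow_pos (hz i) k)]
    exact hstr i
  have hfe : ∀ i, lam' * z i ^ k ≤ tR a z i := by
    intro i
    have h1 : lam' ≤ tR a z i / z i ^ k := Finset.inf'_le _ (Finset.mem_univ i)
    rwa [le_div_iff₀ (pow_pos (hz i) k)] at h1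
  set s : ℝ := ∑ i, z i with hs
  have hspos : 0 < s := Finset.sum_pos (fun i _ => hz i) hne
  set zn : Fin n → ℝ := fun i => s⁻¹ * z i with hzn
  have hmem : (lam', zn) ∈ F a := by
    refine ⟨le_trans hls (le_of_lt hgt),
      fun i => mul_nonneg (inv_nonneg.mpr hspos.le) (hz i).le, ?_, ?_⟩
    · show (∑ i, s⁻¹ * z i) = 1
      rw [← Finset.mul_sum, ← hs]
      exact inv_mul_cancel₀ (ne_of_gt hspos)
    · intro i
      have h2 : tR a zn i = (s⁻¹) ^ k * tR a z i := tR_smul a z s⁻¹ i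
      have h3 : lam' * zn i ^ k = (s⁻¹) ^ k * (lam' * z i ^ k) := by
        show lam' * (s⁻¹ * z i) ^ k = _
        rw [mul_pow]; ring
      rw [h2, h3]
      exact mul_le_mul_of_nonneg_left (hfe i) (by positivity)
  linarith [hmax _ hmem]

lemma key_max (hk : 1 ≤ k) (hn : 0 < n) {a : Fin n → (Fin k → Fin n) → ℝ}
    (ha : ∀ i f, 0 ≤ a i f) (hirr : Irr a)
    {lamstar : ℝ} (hmax : ∀ p ∈ F a, p.1 ≤ lamstar) (hls : 0 ≤ lamstar)
    {y : Fin n → ℝ} (hy : (lamstar, y) ∈ F a) :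
    (∀ i, 0 < y i) ∧ (∀ i, tR a y i = lamstar * y i ^ k) := by
  obtain ⟨_, hynn, hysum, hyfeas⟩ := hy
  have hpos : ∀ i, 0 < y i := by
    by_contra hcon
    push_neg at hcon
    obtain ⟨i0, hi0⟩ := hcon
    have hy0 : y i0 = 0 := le_antisymm hi0 (hynn i0)
    set S : Finset (Fin n) := Finset.univ.filter (fun i => y i = 0) with hS
    have hi0S : i0 ∈ S := by simp [hS, hy0]
    have hSu : S ≠ Finset.univ := by
      intro h
      have hall : ∀ i, y i = 0 := fun i => by
        have : i ∈ S := h ▸ Finset.mem_univ i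
        simpa [hS] using this
      rw [Finset.sum_congr rfl (fun i _ => hall i)] at hysum
      simp at hysum
    obtain ⟨y', _, _, hy'pos, hy'feas, hy'strict⟩ :=
      peel hk ha hirr lamstar hls S.card S rfl hSu y
        (fun i hi => by simpa [hS] using hi)
        (fun i hi => lt_of_le_of_ne (hynn i) (Ne.symm (by simpa [hS] using hi)))
        hyfeas
    obtain ⟨z, hzpos, hzstrict⟩ := prop_all hk ha hirr hls Finset.univ.card y' S
      ⟨i0, hi0S⟩ hy'pos
      (fun i => by unfold gg; linarith [hy'feas i])
      (fun i hi => by unfold gg; linarith [hy'strict i hi])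
      (by omega)
    exact beat_max hk hn ha hmax hls hzpos
      (fun i => by have := hzstrict i; unfold gg at this; linarith)
  refine ⟨hpos, ?_⟩
  by_contra hcon
  push_neg at hcon
  obtain ⟨i0, hi0⟩ := hcon
  have hstr : lamstar * y i0 ^ k < tR a y i0 := lt_of_le_of_ne (hyfeas i0) (Ne.symm hi0)
  obtain ⟨z, hzpos, hzstrict⟩ := prop_all hk ha hirr hls Finset.univ.card y {i0}
    ⟨i0, Finset.mem_singleton_self i0⟩ hpos
    (fun i => by unfold gg; linarith [hyfeas i])
    (fun i hi => by
      rw [Finset.mem_singleton] at hi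
      subst hi
      unfold gg; linarith)
    (by omega)
  exact beat_max hk hn ha hmax hls hzpos
    (fun i => by have := hzstrict i; unfold gg at this; linarith)

lemma max_exists (hn : 0 < n) (hk : 1 ≤ k) {a : Fin n → (Fin k → Fin n) → ℝ}
    (ha : ∀ i f, 0 ≤ a i f) :
    ∃ p : ℝ × (Fin n → ℝ), p ∈ F a ∧ ∀ q ∈ F a, q.1 ≤ p.1 := by
  have hnR : (0:ℝ) < n := by exact_mod_cast hn
  have hne : (F a).Nonempty := by
    refine ⟨(0, fun _ => (n:ℝ)⁻¹), le_refl 0, fun i => by positivity, ?_, fun i => ?_⟩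
    · rw [Finset.sum_const, Finset.card_univ, Fintype.card_fin, nsmul_eq_mul]
      exact mul_inv_cancel₀ (ne_of_gt hnR)
    · show (0:ℝ) * _ ≤ tR a _ i
      rw [zero_mul]
      exact tR_nonneg ha (fun i => by positivity) i
  obtain ⟨p, hp, hmax⟩ := (F_compact a ha).exists_isMaxOn hne continuous_fst.continuousOn
  exact ⟨p, hp, fun q hq => hmax hq⟩

lemma lamstar_pos (hn2 : 2 ≤ n) (hk : 1 ≤ k) {a : Fin n → (Fin k → Fin n) → ℝ}
    (ha : ∀ i f, 0 ≤ a i f) (hirr : Irr a)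
    {lamstar : ℝ} (hmax : ∀ p ∈ F a, p.1 ≤ lamstar) : 0 < lamstar := by
  have hn : 0 < n := by omega
  have hnR : (0:ℝ) < n := by exact_mod_cast hn
  have hne : (Finset.univ : Finset (Fin n)).Nonempty := ⟨⟨0, hn⟩, Finset.mem_univ _⟩
  set u : Fin n → ℝ := fun _ => (n:ℝ)⁻¹ with hu
  have hupos : ∀ i, 0 < u i := fun i => by positivity
  have hrow : ∀ i, 0 < tR a u i := by
    intro i
    obtain ⟨j, hj⟩ : ∃ j : Fin n, j ≠ i := by
      have : Nontrivial (Fin n) := Fin.nontrivial_iff_two_le.mpr hn2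
      exact exists_ne i
    obtain ⟨i', hi', f, hf, hfpos⟩ := hirr {i} ⟨i, rfl⟩ (by
      intro h
      have : j ∈ ({i} : Set (Fin n)) := h ▸ Set.mem_univ j
      exact hj this)
    have hii : i' = i := hi'
    subst hii
    have h1 : 0 < a i' f * ∏ j, u (f j) :=
      mul_pos hfpos (Finset.prod_pos fun j _ => hupos (f j))
    calc (0:ℝ) < a i' f * ∏ j, u (f j) := h1
      _ ≤ tR a u i' := Finset.single_le_sum (f := fun f => a i' f * ∏ j, u (f j))
          (fun f _ => mul_nonneg (ha i' f) (Finset.prod_nonneg fun j _ => (hupos (f j)).le))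
          (Finset.mem_univ f)
  set lam0 : ℝ := Finset.univ.inf' hne (fun i => tR a u i / u i ^ k) with hl0
  have hl0pos : 0 < lam0 := by
    rw [hl0, Finset.lt_inf'_iff]
    intro i _
    exact div_pos (hrow i) (pow_pos (hupos i) k)
  have hmem : (lam0, u) ∈ F a := by
    refine ⟨hl0pos.le, fun i => (hupos i).le, ?_, ?_⟩
    · show (∑ _i : Fin n, (n:ℝ)⁻¹) = 1
      rw [Finset.sum_const, Finset.card_univ, Fintype.card_fin, nsmul_eq_mul]
      exact mul_inv_cancel₀ (ne_of_gt hnR)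
    · intro i
      have h1 : lam0 ≤ tR a u i / u i ^ k := Finset.inf'_le _ (Finset.mem_univ i)
      rwa [le_div_iff₀ (pow_pos (hupos i) k)] at h1
  linarith [hmax _ hmem]


lemma tR_le {a : Fin n → (Fin k → Fin n) → ℝ} (ha : ∀ i f, 0 ≤ a i f)
    {y : Fin n → ℝ} (hy : ∀ i, 0 ≤ y i) {c : ℝ} (hc : ∀ i, y i ≤ c) (i : Fin n) :
    tR a y i ≤ (∑ f, a i f) * c ^ k := by
  rw [Finset.sum_mul]
  apply Finset.sum_le_sum
  intro f _
  apply mul_le_mul_of_nonneg_left _ (ha i f)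
  calc ∏ j, y (f j) ≤ ∏ _j : Fin k, c :=
        Finset.prod_le_prod (fun j _ => hy (f j)) (fun j _ => hc (f j))
    _ = c ^ k := by simp [Finset.prod_const, Finset.card_univ]


lemma multiset_prod_pow {Q : Type} (M : Multiset Q) (w : Q → ℂ) (N : ℕ) :
    (M.map (fun d => w d ^ N)).prod = (M.map w).prod ^ N := by
  induction M using Multiset.induction_on with
  | empty => simp
  | cons a s ih => simp [ih, mul_pow]

lemma multiset_prod_const {M : Multiset ℂ} {b : ℂ} (h : ∀ x ∈ M, x = b) :
    M.prod = b ^ Multiset.card M := by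
  induction M using Multiset.induction_on with
  | empty => simp
  | cons a s ih =>
    have ha : a = b := h a (Multiset.mem_cons_self a s)
    simp only [Multiset.prod_cons, Multiset.card_cons, ha,
      ih (fun x hx => h x (Multiset.mem_cons_of_mem hx))]
    ring

lemma comb (N : ℕ) : ∀ r : ℕ, ∀ (Q : Type) (_ : Finite Q), Nat.card Q = r →
    ∀ w : Q → ℂ,
    (∀ S : Set Q, S.Nonempty → S ≠ Set.univ →
      ∃ c ∈ S, ∃ M : Multiset Q, Multiset.card M = N ∧ (∀ d ∈ M, d ∉ S) ∧
        w c ^ N = (M.map w).prod) →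
    ∀ c c', w c ^ (N ^ (r - 1)) = w c' ^ (N ^ (r - 1)) := by
  intro r
  induction r using Nat.strong_induction_on with
  | _ r ih =>
    intro Q hQ hcard w hyp c c'
    rcases Nat.lt_or_ge r 2 with hr | hr
    · have hsub : Subsingleton Q := by
        have h1 : Nat.card Q ≤ 1 := by omega
        exact Finite.card_le_one_iff_subsingleton.mp h1
      rw [Subsingleton.elim c c']
    · have hnontriv : Nontrivial Q := by
        rw [← Finite.one_lt_card_iff_nontrivial]
        omega
      obtain ⟨c0, c1, hc01⟩ := exists_pair_ne Q
      obtain ⟨cc, hccS, M, hMcard, hMtails, hMeq⟩ := hyp {d | d ≠ c0}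
        ⟨c1, Ne.symm hc01⟩
        (by
          intro h
          have h2 : c0 ∈ {d | d ≠ c0} := h ▸ Set.mem_univ c0
          exact h2 rfl)
      have hMall : ∀ x ∈ M.map w, x = w c0 := by
        intro x hx
        obtain ⟨d, hd, rfl⟩ := Multiset.mem_map.mp hx
        have h3 : ¬ d ≠ c0 := hMtails d hd
        rw [not_not.mp h3]
      have hprod : (M.map w).prod = w c0 ^ N := by
        rw [multiset_prod_const hMall, Multiset.card_map, hMcard]
      have hcol : w cc ^ N = w c0 ^ N := by rw [hMeq, hprod]
      have hccne : cc ≠ c0 := hccS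
      set φ : Q → ℂ := fun d => w d ^ N with hφ
      have hninj : ¬ Function.Injective φ := fun h => hccne (h hcol)
      have hQ'fin : Finite (Set.range φ) := Finite.Set.finite_range φ
      set q : ℕ := Nat.card (Set.range φ) with hq
      have hqle : q ≤ r := by
        rw [hq, ← hcard]
        exact Nat.card_le_card_of_surjective _ Set.rangeFactorization_surjective
      have hqlt : q < r := by
        rcases Nat.lt_or_ge q r with h | h
        · exact h
        · exfalso
          have heq : Nat.card Q = Nat.card (Set.range φ) := by omega
          have hbij : Function.Bijective (Set.rangeFactorization φ) := by
            rw [Nat.bijective_iff_surjective_and_card]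
            exact ⟨Set.rangeFactorization_surjective, heq⟩
          apply hninj
          have hcomp : φ = Subtype.val ∘ Set.rangeFactorization φ := rfl
          rw [hcomp]
          exact Subtype.val_injective.comp hbij.injective
      have hQ'ne : Nonempty (Set.range φ) := ⟨⟨φ c, Set.mem_range_self c⟩⟩
      have hq1 : 1 ≤ q := Nat.card_pos
      -- hypothesis for the value system
      have hyp' : ∀ S' : Set (Set.range φ), S'.Nonempty → S' ≠ Set.univ →
          ∃ v ∈ S', ∃ M' : Multiset (Set.range φ), Multiset.card M' = N ∧
            (∀ d ∈ M', d ∉ S') ∧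
            (fun (d : Set.range φ) => (d : ℂ)) v ^ N
              = (M'.map (fun (d : Set.range φ) => (d : ℂ))).prod := by
        intro S' hS'ne hS'u
        set tos : Q → Set.range φ := fun d => ⟨φ d, Set.mem_range_self d⟩ with htos
        set Sh : Set Q := {d | tos d ∈ S'} with hSh
        have hShne : Sh.Nonempty := by
          obtain ⟨v, hv⟩ := hS'ne
          obtain ⟨d, hd⟩ := v.2
          refine ⟨d, ?_⟩
          show tos d ∈ S'
          have h4 : tos d = v := Subtype.ext hd
          rw [h4]; exact hv
        have hShu : Sh ≠ Set.univ := by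
          obtain ⟨v, hv⟩ := (Set.ne_univ_iff_exists_notMem S').mp hS'u
          obtain ⟨d, hd⟩ := v.2
          intro h
          apply hv
          have hdS : d ∈ Sh := h ▸ Set.mem_univ d
          have h5 : tos d = v := Subtype.ext hd
          rw [← h5]; exact hdS
        obtain ⟨cc2, hcc2, M2, hM2card, hM2tails, hM2eq⟩ := hyp Sh hShne hShu
        refine ⟨tos cc2, hcc2, M2.map tos, ?_, ?_, ?_⟩
        · rw [Multiset.card_map, hM2card]
        · intro d hd
          obtain ⟨d0, hd0, rfl⟩ := Multiset.mem_map.mp hd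
          exact hM2tails d0 hd0
        · show (φ cc2) ^ N = ((M2.map tos).map (fun (d : Set.range φ) => (d : ℂ))).prod
          rw [Multiset.map_map]
          have h6 : ((fun (d : Set.range φ) => (d : ℂ)) ∘ tos) = fun d => w d ^ N := rfl
          rw [h6, multiset_prod_pow, ← hM2eq]
      have hIH := ih q hqlt (Set.range φ) hQ'fin rfl
        (fun (d : Set.range φ) => (d : ℂ)) hyp'
      -- conclude
      have hkey : ∀ d : Q, w d ^ (N ^ (r - 1))
          = ((φ d) ^ (N ^ (q - 1))) ^ (N ^ (r - 1 - q)) := by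
        intro d
        show w d ^ N ^ (r - 1) = ((w d ^ N) ^ N ^ (q - 1)) ^ N ^ (r - 1 - q)
        rw [← pow_mul, ← pow_mul]
        congr 1
        rw [← pow_add, ← pow_succ']
        congr 1
        omega
      rw [hkey c, hkey c']
      congr 1
      exact hIH ⟨φ c, Set.mem_range_self c⟩ ⟨φ c', Set.mem_range_self c'⟩

end PT

namespace PaperTensor

variable {ι : Type} [Fintype ι] {m : ℕ}

/-- If `A` is nonnegative irreducible and the solid graph `G^s(A)` has `r` weakly connected
components, then every eigenvector `x` for `ρ(A)` satisfies
`x^{[(m-1)^r]} = e^{iθ}|x|^{[(m-1)^r]}`. -/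
theorem stmt13 {n m r : ℕ} (hm : 2 ≤ m) (A : Tensor (Fin n) m)
    (hA : Nonneg A) (hirr : Irred A)
    (hr : Nat.card (Quot (fun a b : Fin n => SolidArc A a b ∨ SolidArc A b a)) = r)
    (x : Fin n → ℂ) (hx : IsEigPair A ((specRad A : ℝ) : ℂ) x) :
    ∃ θ : ℝ, ∀ i, x i ^ ((m - 1) ^ r) =
      Complex.exp ((θ : ℂ) * Complex.I) * (‖x i‖ : ℂ) ^ ((m - 1) ^ r) := by
  classical
  obtain ⟨hxne, hxeq⟩ := hx
  have hk : 1 ≤ m - 1 := by omega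
  set av : Fin n → (Fin (m-1) → Fin n) → ℝ := fun i f => (hA i f).choose with hav
  have ha0 : ∀ i f, 0 ≤ av i f := fun i f => (hA i f).choose_spec.1
  have hAa : ∀ i f, A i f = ((av i f : ℝ) : ℂ) := fun i f => (hA i f).choose_spec.2
  rcases Nat.eq_zero_or_pos n with hn0 | hnpos
  · exact absurd (funext fun i : Fin n => absurd i.2 (by omega) : x = 0) hxne
  obtain ⟨i0, hi0⟩ : ∃ i, x i ≠ 0 := by
    by_contra h; push_neg at h; exact hxne (funext h)
  rcases eq_or_lt_of_le (Nat.succ_le_of_lt hnpos) with hn1 | hn2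
  · -- n = 1
    have hn1' : n = 1 := hn1.symm
    refine ⟨(x i0 ^ ((m-1)^r)).arg, fun i => ?_⟩
    have hi : i = i0 := by
      apply Fin.ext
      have h1 := i.2
      have h2 := i0.2
      omega
    rw [hi]
    have h1 := Complex.norm_mul_exp_arg_mul_I (x i0 ^ ((m-1)^r))
    calc x i0 ^ ((m-1)^r)
        = (‖x i0 ^ ((m-1)^r)‖ : ℂ)
          * Complex.exp ((((x i0 ^ ((m-1)^r)).arg : ℝ) : ℂ) * Complex.I) := h1.symm
      _ = Complex.exp ((((x i0 ^ ((m-1)^r)).arg : ℝ) : ℂ) * Complex.I)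
          * (‖x i0‖ : ℂ) ^ ((m-1)^r) := by
          rw [norm_pow]
          push_cast
          ring
  · -- main case, n ≥ 2
    have hn2' : 2 ≤ n := hn2
    set ρ : ℝ := specRad A with hρdef
    have hirrP : PT.Irr av := by
      intro S hSne hSu
      rw [Irred] at hirr
      push_neg at hirr
      obtain ⟨i, hiS, f, hf, hfne⟩ := hirr S hSne hSu
      refine ⟨i, hiS, f, hf, lt_of_le_of_ne (ha0 i f) (Ne.symm ?_)⟩
      intro h
      apply hfne
      rw [hAa i f, h]
      norm_num
    set y : Fin n → ℝ := fun i => ‖x i‖ with hy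
    have hynn : ∀ i, 0 ≤ y i := fun i => norm_nonneg _
    have htri : ∀ (v : Fin n → ℂ) (i : Fin n),
        ‖tApp A v i‖ ≤ PT.tR av (fun l => ‖v l‖) i := by
      intro v i
      refine le_trans (norm_sum_le _ _) (le_of_eq ?_)
      apply Finset.sum_congr rfl
      intro f _
      rw [norm_mul, hAa i f, Complex.norm_of_nonneg (ha0 i f), norm_prod]
    have hbdd : ∀ lam ∈ Eigenvalues A, ‖lam‖ ≤ PT.Cbd av := by
      rintro lam ⟨v, hvne, hveq⟩
      obtain ⟨iM, _, hiM⟩ := Finset.exists_max_image Finset.univ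
        (fun i => ‖v i‖) ⟨⟨0, hnpos⟩, Finset.mem_univ _⟩
      have hvMpos : 0 < ‖v iM‖ := by
        obtain ⟨j, hj⟩ : ∃ j, v j ≠ 0 := by
          by_contra h; push_neg at h; exact hvne (funext h)
        exact lt_of_lt_of_le (norm_pos_iff.mpr hj) (hiM j (Finset.mem_univ j))
      have h1 : ‖lam‖ * ‖v iM‖ ^ (m-1)
          ≤ (∑ f, av iM f) * ‖v iM‖ ^ (m-1) := by
        have h2 : ‖tApp A v iM‖
            = ‖lam‖ * ‖v iM‖ ^ (m-1) := by
          rw [hveq iM, norm_mul, norm_pow]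
        have h3 := htri v iM
        rw [h2] at h3
        refine le_trans h3 (PT.tR_le ha0 (fun l => norm_nonneg _)
          (fun l => hiM l (Finset.mem_univ l)) iM)
      have h4 : ‖lam‖ ≤ ∑ f, av iM f :=
        le_of_mul_le_mul_right h1 (pow_pos hvMpos _)
      refine le_trans h4 ?_
      exact Finset.single_le_sum (f := fun i => ∑ f, av i f)
        (fun j _ => Finset.sum_nonneg fun f _ => ha0 j f) (Finset.mem_univ iM)
    have hbddA : BddAbove ((fun z : ℂ => ‖z‖) '' Eigenvalues A) := by
      refine ⟨PT.Cbd av, ?_⟩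
      rintro z ⟨lam, hlam, rfl⟩
      exact hbdd lam hlam
    have hρmem : ((ρ : ℝ) : ℂ) ∈ Eigenvalues A := ⟨x, hxne, hxeq⟩
    have hρ0 : 0 ≤ ρ := by
      have h5 : ‖((ρ:ℝ):ℂ)‖ ≤ sSup ((fun z : ℂ => ‖z‖) '' Eigenvalues A) :=
        le_csSup hbddA (Set.mem_image_of_mem (fun z : ℂ => ‖z‖) hρmem)
      rw [Complex.norm_real, Real.norm_eq_abs] at h5
      have : sSup ((fun z : ℂ => ‖z‖) '' Eigenvalues A) = ρ := rfl
      rw [this] at h5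
      exact le_trans (abs_nonneg ρ) h5
    have hspos : 0 < ∑ i, y i :=
      Finset.sum_pos' (fun i _ => hynn i) ⟨i0, Finset.mem_univ i0, norm_pos_iff.mpr hi0⟩
    set s0 : ℝ := ∑ i, y i with hs0
    set yn : Fin n → ℝ := fun i => s0⁻¹ * y i with hyn
    have hfeasy : ∀ i, ρ * y i ^ (m-1) ≤ PT.tR av y i := by
      intro i
      have h6 := htri x i
      rw [hxeq i, norm_mul, norm_pow, Complex.norm_of_nonneg hρ0] at h6
      exact h6
    have hynF : (ρ, yn) ∈ PT.F av := by
      refine ⟨hρ0, fun i => mul_nonneg (by positivity) (hynn i), ?_, ?_⟩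
      · show (∑ i, s0⁻¹ * y i) = 1
        rw [← Finset.mul_sum]
        exact inv_mul_cancel₀ (ne_of_gt hspos)
      · intro i
        have h7 : PT.tR av yn i = (s0⁻¹) ^ (m-1) * PT.tR av y i := PT.tR_smul av y s0⁻¹ i
        have h8 : ρ * yn i ^ (m-1) = (s0⁻¹) ^ (m-1) * (ρ * y i ^ (m-1)) := by
          show ρ * (s0⁻¹ * y i) ^ (m-1) = _
          rw [mul_pow]; ring
        rw [h7, h8]
        exact mul_le_mul_of_nonneg_left (hfeasy i) (by positivity)
    obtain ⟨pstar, hpF, hpmax⟩ := PT.max_exists hnpos hk ha0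
    have hρle : ρ ≤ pstar.1 := hpmax _ hynF
    have hls0 : 0 ≤ pstar.1 := hpF.1
    obtain ⟨hypos, hyeigstar⟩ := PT.key_max hk hnpos ha0 hirrP hpmax hls0
      (by rw [Prod.mk.eta]; exact hpF)
    have hlsEig : ((pstar.1 : ℝ) : ℂ) ∈ Eigenvalues A := by
      refine ⟨fun i => ((pstar.2 i : ℝ) : ℂ), ?_, ?_⟩
      · intro h
        have h9 := congrFun h ⟨0, hnpos⟩
        simp only [Pi.zero_apply, Complex.ofReal_eq_zero] at h9
        exact (ne_of_gt (hypos _)) h9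
      · intro i
        have hc : tApp A (fun l => ((pstar.2 l : ℝ) : ℂ)) i
            = ((PT.tR av pstar.2 i : ℝ) : ℂ) := by
          unfold tApp PT.tR
          push_cast
          apply Finset.sum_congr rfl
          intro f _
          rw [hAa]
        rw [hc, hyeigstar i]
        push_cast
        ring
    have hlsle : pstar.1 ≤ ρ := by
      have h10 : ‖((pstar.1:ℝ):ℂ)‖ ≤ sSup ((fun z : ℂ => ‖z‖) '' Eigenvalues A) :=
          le_csSup hbddA (Set.mem_image_of_mem (fun z : ℂ => ‖z‖) hlsEig)
      rw [Complex.norm_of_nonneg hls0] at h10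
      exact h10
    have hρeq : pstar.1 = ρ := le_antisymm hlsle hρle
    obtain ⟨hynpos, hyneig⟩ := PT.key_max hk hnpos ha0 hirrP hpmax hls0
      (by rw [hρeq]; exact hynF)
    have hxnz : ∀ i, x i ≠ 0 := by
      intro i hzero
      have h11 := hynpos i
      have : yn i = 0 := by
        show s0⁻¹ * y i = 0
        rw [hy]
        simp [hzero]
      rw [this] at h11
      exact lt_irrefl 0 h11
    have hypos' : ∀ i, 0 < y i := fun i => norm_pos_iff.mpr (hxnz i)
    have hyeq : ∀ i, PT.tR av y i = ρ * y i ^ (m-1) := by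
      intro i
      have h12 := hyneig i
      rw [hρeq] at h12
      have h13 : PT.tR av yn i = (s0⁻¹) ^ (m-1) * PT.tR av y i := PT.tR_smul av y s0⁻¹ i
      have h14 : ρ * yn i ^ (m-1) = (s0⁻¹) ^ (m-1) * (ρ * y i ^ (m-1)) := by
        show ρ * (s0⁻¹ * y i) ^ (m-1) = _
        rw [mul_pow]; ring
      rw [h13, h14] at h12
      have h15 : ((s0⁻¹ : ℝ)) ^ (m-1) ≠ 0 := by positivity
      exact mul_left_cancel₀ h15 h12
    have hρpos : 0 < ρ := hρeq ▸ PT.lamstar_pos hn2' hk ha0 hirrP hpmax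
    -- phases
    set u : Fin n → ℂ := fun i => x i / ((y i : ℝ) : ℂ) with hu
    have hyC : ∀ i, ((y i : ℝ) : ℂ) ≠ 0 := fun i => by
      simp only [ne_eq, Complex.ofReal_eq_zero]
      exact ne_of_gt (hypos' i)
    have hphase : ∀ i f, av i f ≠ 0 → (∏ j, u (f j)) = u i ^ (m - 1) := by
      intro i f0 hf0
      set sC : ℂ := tApp A x i with hsCdef
      have hsC : sC = ((ρ:ℝ):ℂ) * x i ^ (m-1) := hxeq i
      set R : ℝ := ρ * y i ^ (m-1) with hR
      have hRpos : 0 < R := mul_pos hρpos (pow_pos (hypos' i) _)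
      have habs : ‖sC‖ = R := by
        rw [hsC, norm_mul, norm_pow, Complex.norm_of_nonneg hρ0]
      set T : (Fin (m-1) → Fin n) → ℂ := fun f => ((av i f : ℝ) : ℂ) * ∏ j, x (f j) with hT
      have hsum : ∑ f, T f = sC := by
        rw [hsCdef]
        unfold tApp
        apply Finset.sum_congr rfl
        intro f _
        rw [hAa]
      have hTabs : ∀ f, ‖T f‖ = av i f * ∏ j, y (f j) := by
        intro f
        rw [hT]
        simp only []
        rw [norm_mul, Complex.norm_of_nonneg (ha0 i f), norm_prod]
      have habsum : (∑ f, ‖T f‖) = R := by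
        rw [Finset.sum_congr rfl (fun f _ => hTabs f)]
        show PT.tR av y i = R
        exact (hyeq i).trans hR.symm
      have hterm : ∀ f, (T f * (starRingEnd ℂ) sC).re = ‖T f‖ * R := by
        have hsum0 : ∑ f, (‖T f‖ * R - (T f * (starRingEnd ℂ) sC).re) = 0 := by
          rw [Finset.sum_sub_distrib, ← Finset.sum_mul, habsum]
          have hre : ∑ f, (T f * (starRingEnd ℂ) sC).re
              = ((∑ f, T f) * (starRingEnd ℂ) sC).re := by
            rw [Finset.sum_mul]
            exact (Complex.re_sum _ _).symm
          rw [hre, hsum, Complex.mul_conj, Complex.ofReal_re, ← Complex.sq_norm, habs]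
          ring
        have hnn : ∀ f ∈ Finset.univ,
            0 ≤ ‖T f‖ * R - (T f * (starRingEnd ℂ) sC).re := by
          intro f _
          have h16 : (T f * (starRingEnd ℂ) sC).re ≤ ‖T f * (starRingEnd ℂ) sC‖ :=
            Complex.re_le_norm _
          rw [norm_mul, Complex.norm_conj, habs] at h16
          linarith
        intro f
        have h17 := (Finset.sum_eq_zero_iff_of_nonneg hnn).mp hsum0 f (Finset.mem_univ f)
        linarith
      -- now our specific f0
      have hz : T f0 * (starRingEnd ℂ) sC = ((‖T f0‖ * R : ℝ) : ℂ) := by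
        set z : ℂ := T f0 * (starRingEnd ℂ) sC with hzdef
        have h1 : ‖z‖ = ‖T f0‖ * R := by
          rw [hzdef, norm_mul, Complex.norm_conj, habs]
        have h2 : z.re = ‖z‖ := by rw [h1]; exact hterm f0
        have h4 := Complex.sq_norm z
        rw [Complex.normSq_apply] at h4
        have hrr : z.re * z.re = ‖z‖ ^ 2 := by rw [h2]; ring
        have him2 : z.im * z.im = 0 := by linarith
        have h3 : z.im = 0 := mul_self_eq_zero.mp him2
        have h5 : z = ((z.re : ℝ) : ℂ) := by
          apply Complex.ext
          · simp
          · simp [h3]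
        rw [h5, h2, h1]
      -- multiply by sC
      have hzz : T f0 * ((R : ℝ) : ℂ) ^ 2 = ((‖T f0‖ * R : ℝ) : ℂ) * sC := by
        have h18 : T f0 * ((starRingEnd ℂ) sC * sC) = ((‖T f0‖ * R : ℝ) : ℂ) * sC := by
          rw [← mul_assoc, hz]
        rw [← h18]
        congr 1
        rw [mul_comm ((starRingEnd ℂ) sC) sC, Complex.mul_conj, ← Complex.sq_norm, habs]
        push_cast
        ring
      -- cancel to product identity
      have hTabs0 : ((‖T f0‖ : ℝ) : ℂ)
          = ((av i f0 : ℝ) : ℂ) * ∏ j, ((y (f0 j) : ℝ) : ℂ) := by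
        rw [hTabs f0]
        push_cast
        ring
      have havC : ((av i f0 : ℝ) : ℂ) ≠ 0 := by exact_mod_cast hf0
      have hRC : ((R : ℝ) : ℂ) ≠ 0 := by exact_mod_cast ne_of_gt hRpos
      have eq1 : ((av i f0 : ℝ) : ℂ) * (((∏ j, x (f0 j)) * ((R:ℝ):ℂ)) * ((R:ℝ):ℂ))
          = ((av i f0 : ℝ) : ℂ) * (((∏ j, ((y (f0 j):ℝ):ℂ)) * sC) * ((R:ℝ):ℂ)) := by
        calc ((av i f0 : ℝ) : ℂ) * (((∏ j, x (f0 j)) * ((R:ℝ):ℂ)) * ((R:ℝ):ℂ))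
            = T f0 * ((R:ℝ):ℂ) ^ 2 := by rw [hT]; ring
          _ = ((‖T f0‖ * R : ℝ) : ℂ) * sC := hzz
          _ = _ := by rw [Complex.ofReal_mul, hTabs0]; ring
      have hkey0 : (∏ j, x (f0 j)) * ((R:ℝ):ℂ)
          = (∏ j, ((y (f0 j):ℝ):ℂ)) * sC :=
        mul_right_cancel₀ hRC (mul_left_cancel₀ havC eq1)
      have hRC2 : ((R : ℝ) : ℂ) = ((ρ:ℝ):ℂ) * ((y i : ℝ):ℂ) ^ (m-1) := by
        rw [hR]; push_cast; ring
      have hρC : ((ρ:ℝ):ℂ) ≠ 0 := by exact_mod_cast ne_of_gt hρpos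
      have hcross : (∏ j, x (f0 j)) * ((y i:ℝ):ℂ) ^ (m-1)
          = (∏ j, ((y (f0 j):ℝ):ℂ)) * x i ^ (m-1) := by
        apply mul_left_cancel₀ hρC
        calc ((ρ:ℝ):ℂ) * ((∏ j, x (f0 j)) * ((y i:ℝ):ℂ) ^ (m-1))
            = (∏ j, x (f0 j)) * ((R:ℝ):ℂ) := by rw [hRC2]; ring
          _ = (∏ j, ((y (f0 j):ℝ):ℂ)) * sC := hkey0
          _ = ((ρ:ℝ):ℂ) * ((∏ j, ((y (f0 j):ℝ):ℂ)) * x i ^ (m-1)) := by rw [hsC]; ring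
      show (∏ j, u (f0 j)) = u i ^ (m - 1)
      rw [hu]
      simp only []
      rw [Finset.prod_div_distrib, div_pow,
        div_eq_div_iff (Finset.prod_ne_zero_iff.mpr (fun j _ => hyC (f0 j)))
          (pow_ne_zero _ (hyC i))]
      linear_combination hcross
    -- combinatorics on the solid-graph components
    have hwd : ∀ a b : Fin n, (SolidArc A a b ∨ SolidArc A b a) →
        u a ^ (m-1) = u b ^ (m-1) := by
      have hsolid : ∀ p q : Fin n, SolidArc A p q → u q ^ (m-1) = u p ^ (m-1) := by
        intro p q hpq
        have haq : av p (fun _ => q) ≠ 0 := by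
          intro h
          apply hpq
          rw [hAa, h]
          norm_num
        have h23 := hphase p (fun _ => q) haq
        rw [Finset.prod_const, Finset.card_univ, Fintype.card_fin] at h23
        exact h23
      intro a b hab
      rcases hab with h | h
      · exact (hsolid a b h).symm
      · exact hsolid b a h
    set rel : Fin n → Fin n → Prop := fun a b => SolidArc A a b ∨ SolidArc A b a with hrel
    have hQfin : Finite (Quot rel) := Quot.finite rel
    set w : Quot rel → ℂ := Quot.lift (fun i => u i ^ (m-1)) hwd with hw
    have hQcard : Nat.card (Quot rel) = r := hr
    have hr1 : 1 ≤ r := by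
      rw [← hQcard]
      have : Nonempty (Quot rel) := ⟨Quot.mk rel i0⟩
      exact Nat.card_pos
    have hhyp : ∀ S : Set (Quot rel), S.Nonempty → S ≠ Set.univ →
        ∃ c ∈ S, ∃ M : Multiset (Quot rel), Multiset.card M = (m-1) ∧
          (∀ d ∈ M, d ∉ S) ∧ w c ^ (m-1) = (M.map w).prod := by
      intro S hSne hSu
      set Sh : Set (Fin n) := {i | Quot.mk rel i ∈ S} with hSh
      have hShne : Sh.Nonempty := by
        obtain ⟨c, hc⟩ := hSne
        obtain ⟨i, rfl⟩ := Quot.exists_rep c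
        exact ⟨i, hc⟩
      have hShu : Sh ≠ Set.univ := by
        obtain ⟨c, hc⟩ := (Set.ne_univ_iff_exists_notMem S).mp hSu
        obtain ⟨i, rfl⟩ := Quot.exists_rep c
        intro h
        exact hc (h ▸ Set.mem_univ i : i ∈ Sh)
      obtain ⟨i, hiS, f, hf, hfpos⟩ := hirrP Sh hShne hShu
      refine ⟨Quot.mk rel i, hiS,
        Finset.univ.val.map (fun j => Quot.mk rel (f j)), ?_, ?_, ?_⟩
      · rw [Multiset.card_map]
        show Finset.univ.card = m - 1
        rw [Finset.card_univ, Fintype.card_fin]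
      · intro d hd
        obtain ⟨j, _, rfl⟩ := Multiset.mem_map.mp hd
        exact hf j
      · rw [Multiset.map_map]
        have h20 : ((Finset.univ.val.map (w ∘ fun j => Quot.mk rel (f j))).prod : ℂ)
            = ∏ j, u (f j) ^ (m-1) := by
          rw [Finset.prod_eq_multiset_prod]
          rfl
        rw [h20, Finset.prod_pow, hphase i f (ne_of_gt hfpos)]
    have hcomb := PT.comb (m-1) r (Quot rel) hQfin hQcard w hhyp
    have hune : ∀ i, ‖u i‖ = 1 := by
      intro i
      rw [hu]
      simp only []
      rw [norm_div, Complex.norm_of_nonneg (hynn i)]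
      exact div_self (ne_of_gt (hypos' i))
    set ζ : ℂ := u i0 ^ ((m-1) ^ r) with hζ
    have hζabs : ‖ζ‖ = 1 := by rw [hζ, norm_pow, hune, one_pow]
    refine ⟨ζ.arg, fun i => ?_⟩
    have hexp : Complex.exp ((ζ.arg : ℂ) * Complex.I) = ζ := by
      have h24 := Complex.norm_mul_exp_arg_mul_I ζ
      rw [hζabs] at h24
      simpa using h24
    have h22 : ∀ l : Fin n, u l ^ ((m-1)^r) = w (Quot.mk rel l) ^ ((m-1)^(r-1)) := by
      intro l
      have he : (m-1) ^ r = (m-1) * (m-1)^(r-1) := by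
        conv_lhs => rw [show r = (r-1)+1 by omega]
        rw [pow_succ']
      show u l ^ ((m-1)^r) = (u l ^ (m-1)) ^ ((m-1)^(r-1))
      rw [he, pow_mul]
    have huζ : u i ^ ((m-1)^r) = ζ := by
      rw [hζ, h22 i, h22 i0, hcomb (Quot.mk rel i) (Quot.mk rel i0)]
    have hxi : x i = u i * ((y i:ℝ):ℂ) := (div_mul_cancel₀ (x i) (hyC i)).symm
    calc x i ^ ((m-1)^r) = (u i * ((y i:ℝ):ℂ)) ^ ((m-1)^r) := by rw [← hxi]
      _ = u i ^ ((m-1)^r) * ((y i:ℝ):ℂ) ^ ((m-1)^r) := mul_pow _ _ _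
      _ = Complex.exp ((ζ.arg : ℂ) * Complex.I) * ((y i:ℝ):ℂ) ^ ((m-1)^r) := by
          rw [huζ, hexp]


end PaperTensor
end
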